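/- arXiv:1612.08659 — 7 statements merged into one kernel-verified Lean document; each statement's English description precedes it below -/
import Mathlib

section
/- Let W̃ be an extended affine Weyl group, W₁ ≤ W_af and W₂ ≤ W_af special subgroups, Ω₁ ≤ Ω fixing S₁ setwise, W₁' = W₁Ω₁, and W_{1,2} = W₁ ∩ W₂ = W₁' ∩ W₂. Then for every σ ∈ W₁' of minimal length in its double coset W_{1,2}σW_{1,2} and every w₂ ∈ W₂, one has ℓ(σw₂) = ℓ(w₂σ) = ℓ(σ) + ℓ(w₂). -/
open SemidirectProduct

open List CoxeterSystem

set_option linter.unusedSectionVars false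

namespace Stmt6Aux

variable {B : Type*} {M : CoxeterMatrix B} {W : Type*} [Group W] (cs : CoxeterSystem M W)

local prefix:100 "s" => cs.simple
local prefix:100 "π" => cs.wordProd
local prefix:100 "ℓ" => cs.length
local prefix:100 "ris" => cs.rightInvSeq

lemma semiconj (i i' : B) :
    SemiconjBy (s i') (s i * s i') (s i * s i')⁻¹ := by
  unfold SemiconjBy
  simp [mul_inv_rev, cs.inv_simple, mul_assoc]

lemma bpow (i i' : B) (n : ℕ) :
    s i' * (s i * s i') ^ n = ((s i * s i') ^ n)⁻¹ * s i' := by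
  have := (semiconj cs i i').pow_right n
  rwa [inv_pow] at this

lemma alt_succ_eq (i i' : B) (k : ℕ) :
    π (alternatingWord i i' (k+1)) = s (if Even k then i' else i) * π (alternatingWord i i' k) := by
  rw [alternatingWord_succ', cs.wordProd_cons]

lemma pi_ratio (i i' : B) (n : ℕ) :
    (π (alternatingWord i i' n))⁻¹ * π (alternatingWord i i' (n+1))
      = ((s i * s i') ^ (n/2))⁻¹ * (s i' * (s i * s i') ^ ((n+1)/2)) := by
  rw [cs.prod_alternatingWord_eq_mul_pow, cs.prod_alternatingWord_eq_mul_pow]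
  by_cases h : Even n
  · have h' : ¬ Even (n+1) := by simp [Nat.even_add_one, h]
    rw [if_pos h, if_neg h', one_mul]
  · have h' : Even (n+1) := by simp [Nat.even_add_one, h]
    rw [if_neg h, if_pos h', one_mul, mul_inv_rev, cs.inv_simple, mul_assoc]

lemma rho_periodic (i i' : B) (k : ℕ) :
    (π (alternatingWord i i' (k + M i i')))⁻¹ * s (if Even (k + M i i') then i' else i)
        * π (alternatingWord i i' (k + M i i'))
      = (π (alternatingWord i i' k))⁻¹ * s (if Even k then i' else i)
        * π (alternatingWord i i' k) := by
  rw [mul_assoc, mul_assoc, ← alt_succ_eq, ← alt_succ_eq, pi_ratio, pi_ratio,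
    bpow cs i i' ((k + M i i' + 1)/2), bpow cs i i' ((k+1)/2),
    ← mul_assoc, ← mul_assoc, ← mul_inv_rev, ← mul_inv_rev, ← pow_add, ← pow_add]
  have e1 : (k + M i i' + 1)/2 + (k + M i i')/2 = k + M i i' := by omega
  have e2 : (k+1)/2 + k/2 = k := by omega
  rw [e1, e2, pow_add, cs.simple_mul_simple_pow, mul_one]


lemma ris_cons (i : B) (ω : List B) :
    cs.rightInvSeq (i :: ω) = ((π ω)⁻¹ * s i * π ω) :: cs.rightInvSeq ω := rfl

lemma ris_alt_split (i i' : B) (n : ℕ) :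
    cs.rightInvSeq (alternatingWord i i' (M i i' + n))
      = cs.rightInvSeq (alternatingWord i i' n) ++ cs.rightInvSeq (alternatingWord i i' (M i i')) := by
  induction n with
  | zero => simp [alternatingWord]
  | succ n ih =>
    have h1 : M i i' + (n + 1) = (n + M i i') + 1 := by omega
    rw [h1, alternatingWord_succ', ris_cons, alternatingWord_succ' i i' n, ris_cons]
    rw [cons_append]
    congr 1
    · exact rho_periodic cs i i' n
    · rw [← ih, Nat.add_comm n]

lemma count_ris_alt_even [DecidableEq W] (i i' : B) (t : W) :
    Even ((cs.rightInvSeq (alternatingWord i i' (2 * M i i'))).count t) := by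
  have h2 : 2 * M i i' = M i i' + M i i' := by omega
  rw [h2, ris_alt_split, count_append]
  exact ⟨_, rfl⟩


section Perm

variable [DecidableEq W]

lemma conj_simple_iff (i : B) (x w : W) :
    x * w * x⁻¹ = s i ↔ w = x⁻¹ * s i * x := by
  constructor
  · intro h; rw [← h]; group
  · intro h; rw [h]; group

lemma fperm_invol (i : B) : Function.Involutive
    (fun p : W × ZMod 2 => (s i * p.1 * s i, p.2 + if p.1 = s i then 1 else 0)) := by
  rintro ⟨w, e⟩
  simp only
  have h1 : s i * (s i * w * s i) * s i = w := by
    rw [← mul_assoc, ← mul_assoc, cs.simple_mul_simple_self, one_mul, mul_assoc,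
      cs.simple_mul_simple_self, mul_one]
  have h2 : (s i * w * s i = s i) ↔ (w = s i) := by
    have := conj_simple_iff cs i (s i) w
    rw [cs.inv_simple] at this
    rw [cs.simple_mul_simple_self, one_mul] at this
    exact this
  have h3 : (1 : ZMod 2) + 1 = 0 := rfl
  rcases eq_or_ne w (s i) with hw | hw
  · simp [hw, h1, h2, add_assoc, h3]
  · simp [hw, h1, h2]

noncomputable def fperm (i : B) : Equiv.Perm (W × ZMod 2) :=
  Function.Involutive.toPerm _ (fperm_invol cs i)

lemma fperm_apply (i : B) (p : W × ZMod 2) :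
    fperm cs i p = (s i * p.1 * s i, p.2 + if p.1 = s i then 1 else 0) := rfl

lemma prod_map_fperm (ω : List B) (p : W × ZMod 2) :
    (List.map (fperm cs) ω).prod p
      = (π ω * p.1 * (π ω)⁻¹, p.2 + ((cs.rightInvSeq ω).count p.1 : ZMod 2)) := by
  induction ω with
  | nil => simp
  | cons i ω ih =>
    rw [map_cons, prod_cons, Equiv.Perm.mul_apply, ih, fperm_apply]
    have hfst : s i * (π ω * p.1 * (π ω)⁻¹) * s i = π (i :: ω) * p.1 * (π (i :: ω))⁻¹ := by
      rw [cs.wordProd_cons, mul_inv_rev, cs.inv_simple]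
      group
    have hcond : (π ω * p.1 * (π ω)⁻¹ = s i) ↔ ((π ω)⁻¹ * s i * π ω = p.1) := by
      rw [conj_simple_iff, eq_comm]
    have hcount : ((cs.rightInvSeq (i :: ω)).count p.1 : ZMod 2)
        = ((cs.rightInvSeq ω).count p.1 : ZMod 2)
          + (if (π ω)⁻¹ * s i * π ω = p.1 then 1 else 0) := by
      rw [ris_cons, count_cons]
      by_cases h : (π ω)⁻¹ * s i * π ω = p.1 <;> simp [h]
    refine Prod.ext ?_ ?_
    · exact hfst
    · simp only [hcount, ← hcond]
      by_cases h : π ω * p.1 * (π ω)⁻¹ = s i <;> simp [h, add_assoc]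

lemma map_fperm_alt_prod {G : Type*} [Monoid G] (g : B → G) (i i' : B) (m : ℕ) :
    (List.map g (alternatingWord i i' (2 * m))).prod = (g i * g i') ^ m := by
  induction m with
  | zero => simp [alternatingWord]
  | succ m ih =>
    have h1 : 2 * (m + 1) = (2 * m + 1) + 1 := by omega
    have h2 : ¬ Even (2 * m + 1) := by simp [Nat.even_add_one]
    have h3 : Even (2 * m) := ⟨m, by omega⟩
    rw [h1, alternatingWord_succ', if_neg h2, alternatingWord_succ', if_pos h3,
      map_cons, map_cons, prod_cons, prod_cons, ih, pow_succ', ← mul_assoc]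

lemma fperm_liftable : M.IsLiftable (fperm cs) := by
  intro i i'
  apply Equiv.ext
  intro p
  have h1 : (fperm cs i * fperm cs i') ^ M i i'
      = (List.map (fperm cs) (alternatingWord i i' (2 * M i i'))).prod :=
    (map_fperm_alt_prod (fperm cs) i i' (M i i')).symm
  have hπ : π (alternatingWord i i' (2 * M i i')) = 1 := by
    have h2 : Even (2 * M i i') := ⟨M i i', by omega⟩
    have h3 : 2 * M i i' / 2 = M i i' := by omega
    rw [cs.prod_alternatingWord_eq_mul_pow, if_pos h2, h3, one_mul, cs.simple_mul_simple_pow]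
  obtain ⟨c, hc⟩ := count_ris_alt_even cs i i' p.1
  rw [h1, prod_map_fperm, hπ, hc]
  have h4 : ((c + c : ℕ) : ZMod 2) = 0 := by
    push_cast
    exact CharTwo.add_self_eq_zero (c : ZMod 2)
  rw [h4, add_zero]
  simp


noncomputable def prep : W →* Equiv.Perm (W × ZMod 2) :=
  cs.lift ⟨fperm cs, fperm_liftable cs⟩

lemma prep_wordProd (ω : List B) :
    prep cs (π ω) = (List.map (fperm cs) ω).prod := by
  rw [CoxeterSystem.wordProd, map_list_prod, List.map_map]
  refine congrArg _ (List.map_congr_left fun i _ => ?_)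
  exact cs.lift_apply_simple (fperm_liftable cs) i

lemma count_parity (ω ω' : List B) (h : π ω = π ω') (t : W) :
    ((cs.rightInvSeq ω).count t : ZMod 2) = ((cs.rightInvSeq ω').count t : ZMod 2) := by
  have h2 : (List.map (fperm cs) ω).prod (t, (0 : ZMod 2))
      = (List.map (fperm cs) ω').prod (t, (0 : ZMod 2)) := by
    rw [← prep_wordProd, ← prep_wordProd, h]
  rw [prod_map_fperm, prod_map_fperm] at h2
  have h3 := congrArg Prod.snd h2
  simpa using h3

end Perm

theorem exchange_right {ω : List B} (hω : cs.IsReduced ω) {i : B}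
    (h : ℓ (π ω * s i) < ℓ (π ω)) :
    ∃ j < ω.length, π ω * s i = π (ω.eraseIdx j) := by
  classical
  have hlen : ℓ (π ω * s i) + 1 = ℓ (π ω) := by
    rcases cs.length_mul_simple (π ω) i with h1 | h1
    · omega
    · exact h1
  obtain ⟨τ, hτlen, hτ⟩ := cs.exists_reduced_word (π ω * s i)
  have hπ : π (τ.concat i) = π ω := by
    rw [wordProd_concat, ← hτ, cs.simple_mul_simple_cancel_right]
  have hred : cs.IsReduced (τ.concat i) := by
    show ℓ (π (τ.concat i)) = (τ.concat i).length
    rw [hπ, List.length_concat, ← (hτlen : ℓ (π τ) = τ.length), ← hτ]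
    omega
  have hmem : s i ∈ cs.rightInvSeq (τ.concat i) := by
    rw [cs.rightInvSeq_concat]
    simp
  have hcount1 : (cs.rightInvSeq (τ.concat i)).count (s i) = 1 :=
    List.count_eq_one_of_mem hred.nodup_rightInvSeq hmem
  have hpar := count_parity cs ω (τ.concat i) hπ.symm (s i)
  rw [hcount1] at hpar
  have hpos : s i ∈ cs.rightInvSeq ω := by
    by_contra hn
    rw [List.count_eq_zero_of_not_mem hn] at hpar
    simp at hpar
  obtain ⟨j, hj, hjt⟩ := List.mem_iff_getElem.mp hpos
  have hjlen : j < ω.length := by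
    have := cs.length_rightInvSeq ω
    omega
  refine ⟨j, hjlen, ?_⟩
  have h5 := cs.wordProd_mul_getD_rightInvSeq ω j
  rw [List.getD_eq_getElem (cs.rightInvSeq ω) 1 hj, hjt] at h5
  exact h5

theorem exists_reduced_word_subset' (S : Set B) :
    ∀ ω : List B, (∀ i ∈ ω, i ∈ S) →
      ∃ τ : List B, cs.IsReduced τ ∧ (∀ i ∈ τ, i ∈ S) ∧ π τ = π ω := by
  intro ω
  induction ω using List.reverseRecOn with
  | nil => exact fun _ => ⟨[], by simp [CoxeterSystem.IsReduced], by simp, rfl⟩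
  | append_singleton ω i ih =>
    intro hmem
    obtain ⟨τ, hτred, hτmem, hτπ⟩ := ih (fun j hj => hmem j (by simp [hj]))
    have hiS : i ∈ S := hmem i (by simp)
    have hπ : π (ω ++ [i]) = π τ * s i := by
      rw [cs.wordProd_append, hτπ]
      simp
    rcases cs.length_mul_simple (π τ) i with h1 | h1
    · refine ⟨τ ++ [i], ?_, ?_, ?_⟩
      · show ℓ (π (τ ++ [i])) = (τ ++ [i]).length
        rw [cs.wordProd_append]
        simp only [wordProd_singleton, List.length_append, List.length_singleton]
        rw [h1, hτred]
      · intro j hj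
        rcases List.mem_append.mp hj with hj | hj
        · exact hτmem j hj
        · simp at hj; subst hj; exact hiS
      · rw [cs.wordProd_append, hπ]; simp
    · have hlt : ℓ (π τ * s i) < ℓ (π τ) := by omega
      obtain ⟨j, hjlen, hjj⟩ := exchange_right cs hτred hlt
      refine ⟨τ.eraseIdx j, ?_, ?_, ?_⟩
      · show ℓ (π (τ.eraseIdx j)) = (τ.eraseIdx j).length
        rw [← hjj]
        have h6 := List.length_eraseIdx_add_one hjlen
        have h7 : ℓ (π τ) = τ.length := hτred
        omega
      · intro k hk
        exact hτmem k ((List.eraseIdx_sublist τ j).subset hk)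
      · rw [← hjj, hπ]


theorem exists_word_subset (S : Set B) (w : W) (hw : w ∈ Subgroup.closure (cs.simple '' S)) :
    ∃ ω : List B, cs.IsReduced ω ∧ (∀ i ∈ ω, i ∈ S) ∧ w = π ω := by
  have hword : ∃ ω : List B, (∀ i ∈ ω, i ∈ S) ∧ w = π ω := by
    induction hw using Subgroup.closure_induction with
    | mem x hx =>
      obtain ⟨i, hi, rfl⟩ := hx
      exact ⟨[i], by simpa using hi, by simp⟩
    | one => exact ⟨[], by simp, by simp⟩
    | mul x y hx hy ihx ihy =>
      obtain ⟨ω₁, h1, rfl⟩ := ihx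
      obtain ⟨ω₂, h2, rfl⟩ := ihy
      exact ⟨ω₁ ++ ω₂, by
        intro i hi
        rcases List.mem_append.mp hi with h | h
        · exact h1 i h
        · exact h2 i h, by rw [cs.wordProd_append]⟩
    | inv x hx ihx =>
      obtain ⟨ω₁, h1, rfl⟩ := ihx
      exact ⟨ω₁.reverse, fun i hi => h1 i (List.mem_reverse.mp hi), by rw [cs.wordProd_reverse]⟩
  obtain ⟨ω, hmem, rfl⟩ := hword
  obtain ⟨τ, h1, h2, h3⟩ := exists_reduced_word_subset' cs S ω hmem
  exact ⟨τ, h1, h2, h3.symm⟩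

/-- Key lemma: if `u ∈ W₁` has minimal length in `u·(W₁ ∩ W₂)`, then
lengths add when multiplying `u` on the right by elements of `W₂`. -/
theorem key_lemma (S₁ S₂ : Set B) (u : W)
    (hu : u ∈ Subgroup.closure (cs.simple '' S₁))
    (hmin : ∀ b ∈ Subgroup.closure (cs.simple '' S₁) ⊓ Subgroup.closure (cs.simple '' S₂),
      ℓ u ≤ ℓ (u * b)) :
    ∀ w ∈ Subgroup.closure (cs.simple '' S₂), ℓ (u * w) = ℓ u + ℓ w := by
  obtain ⟨ω₂, hω₂red, hω₂mem, rfl⟩ := exists_word_subset cs S₁ u hu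
  suffices H : ∀ n : ℕ, ∀ w ∈ Subgroup.closure (cs.simple '' S₂), ℓ w = n →
      ℓ (π ω₂ * w) = ℓ (π ω₂) + ℓ w by
    intro w hw
    exact H (ℓ w) w hw rfl
  intro n
  induction n using Nat.strong_induction_on with
  | _ n ih =>
  intro w hw hn
  obtain ⟨τ, hτred, hτmem, rfl⟩ := exists_word_subset cs S₂ w hw
  rcases List.eq_nil_or_concat τ with rfl | ⟨τ', i, rfl⟩
  · simp
  · -- w = π τ' * s i
    have hπw : π (τ'.concat i) = π τ' * s i := by rw [cs.wordProd_concat]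
    have hτ'red : cs.IsReduced τ' := by
      have h1 : ℓ (π (τ'.concat i)) = τ'.length + 1 := by
        rw [hτred, List.length_concat]
      have h2 : ℓ (π τ') ≤ τ'.length := cs.length_wordProd_le τ'
      have h3 : ℓ (π (τ'.concat i)) ≤ ℓ (π τ') + 1 := by
        rw [hπw]
        have := cs.length_mul_le (π τ') (s i)
        rw [cs.length_simple] at this
        exact this
      show ℓ (π τ') = τ'.length
      omega
    have hτ'mem : ∀ j ∈ τ', j ∈ S₂ := fun j hj => hτmem j (by simp [List.concat_eq_append, hj])
    have hiS₂ : i ∈ S₂ := hτmem i (by simp [List.concat_eq_append])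
    have hw' : π τ' ∈ Subgroup.closure (cs.simple '' S₂) := by
      rw [CoxeterSystem.wordProd]
      apply list_prod_mem
      intro x hx
      obtain ⟨j, hj, rfl⟩ := List.mem_map.mp hx
      exact Subgroup.subset_closure ⟨j, hτ'mem j hj, rfl⟩
    have hlw' : ℓ (π τ') < n := by
      rw [← hn, hτred, hτ'red, List.length_concat]
      omega
    have ihw' : ℓ (π ω₂ * π τ') = ℓ (π ω₂) + ℓ (π τ') := ih _ hlw' _ hw' rfl
    -- the concatenated word is reduced
    have hcat : cs.IsReduced (ω₂ ++ τ') := by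
      show ℓ (π (ω₂ ++ τ')) = (ω₂ ++ τ').length
      rw [cs.wordProd_append, ihw', List.length_append, hω₂red, hτ'red]
    -- now show length goes up when multiplying by s i
    have hup : ℓ (π ω₂ * π τ' * s i) = ℓ (π ω₂ * π τ') + 1 := by
      rcases cs.length_mul_simple (π ω₂ * π τ') i with h1 | h1
      · exact h1
      · exfalso
        have hlt : ℓ (π (ω₂ ++ τ') * s i) < ℓ (π (ω₂ ++ τ')) := by
          rw [cs.wordProd_append]
          omega
        obtain ⟨j, hjlen, hjj⟩ := exchange_right cs hcat hlt
        rw [List.length_append] at hjlen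
        by_cases hcase : j < ω₂.length
        · -- deletion in the ω₂ part: contradiction with minimality
          rw [List.eraseIdx_append_of_lt_length hcase] at hjj
          rw [cs.wordProd_append] at hjj
          rw [cs.wordProd_append] at hjj
          -- hjj : π ω₂ * π τ' * s i = π (ω₂.eraseIdx j) * π τ'
          set u'' := π (ω₂.eraseIdx j) with hu''
          have hb : π ω₂ * (π τ' * s i * (π τ')⁻¹) = u'' := by
            rw [← mul_assoc, ← mul_assoc, hjj]
            group
          set b := π τ' * s i * (π τ')⁻¹ with hbdef
          have hbW₂ : b ∈ Subgroup.closure (cs.simple '' S₂) := by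
            apply mul_mem (mul_mem hw' (Subgroup.subset_closure ⟨i, hiS₂, rfl⟩))
            exact inv_mem hw'
          have hbW₁ : b ∈ Subgroup.closure (cs.simple '' S₁) := by
            have hu''W₁ : u'' ∈ Subgroup.closure (cs.simple '' S₁) := by
              rw [hu'', CoxeterSystem.wordProd]
              apply list_prod_mem
              intro x hx
              obtain ⟨k, hk, rfl⟩ := List.mem_map.mp hx
              exact Subgroup.subset_closure
                ⟨k, hω₂mem k ((List.eraseIdx_sublist ω₂ j).subset hk), rfl⟩
            have huW₁ : π ω₂ ∈ Subgroup.closure (cs.simple '' S₁) := by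
              rw [CoxeterSystem.wordProd]
              apply list_prod_mem
              intro x hx
              obtain ⟨k, hk, rfl⟩ := List.mem_map.mp hx
              exact Subgroup.subset_closure ⟨k, hω₂mem k hk, rfl⟩
            have : b = (π ω₂)⁻¹ * u'' := by
              rw [← hb]; group
            rw [this]
            exact mul_mem (inv_mem huW₁) hu''W₁
          have hminb := hmin b ⟨hbW₁, hbW₂⟩
          rw [hb, hu''] at hminb
          have h6 := cs.length_wordProd_le (ω₂.eraseIdx j)
          have h7 := List.length_eraseIdx_add_one hcase
          have h8 : ℓ (π ω₂) = ω₂.length := hω₂red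
          omega
        · -- deletion in the τ' part: contradiction with reducedness of τ
          have hge : ω₂.length ≤ j := by omega
          rw [List.eraseIdx_append_of_length_le hge] at hjj
          rw [cs.wordProd_append, cs.wordProd_append] at hjj
          have hcancel : π τ' * s i = π (τ'.eraseIdx (j - ω₂.length)) := by
            rw [mul_assoc] at hjj
            exact mul_left_cancel hjj
          have h9 : ℓ (π τ' * s i) ≤ τ'.length - 1 := by
            rw [hcancel]
            have h10 := cs.length_wordProd_le (τ'.eraseIdx (j - ω₂.length))
            have h11 : j - ω₂.length < τ'.length := by omega
            have h12 := List.length_eraseIdx_add_one h11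
            omega
          have h13 : ℓ (π τ' * s i) = τ'.length + 1 := by
            rw [← hπw, hτred, List.length_concat]
          omega
    rw [hπw, ← mul_assoc, hup, ihw']
    have h14 : ℓ (π τ' * s i) = τ'.length + 1 := by
      rw [← hπw, hτred, List.length_concat]
    have h15 : ℓ (π τ') = τ'.length := hτ'red
    omega

end Stmt6Aux

/-- With `W₁' = W₁Ω₁` (`Ω₁` stabilizing `S₁`) and
`W_{1,2} = W₁ ∩ W₂`: if `σ ∈ W₁'` is of minimal length in its double coset
`W_{1,2}σW_{1,2}`, then `ℓ(σw₂) = ℓ(w₂σ) = ℓ(σ) + ℓ(w₂)` for all `w₂ ∈ W₂`. -/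
theorem stmt6 {B : Type*} {M : CoxeterMatrix B} {W : Type*} [Group W]
    (cs : CoxeterSystem M W) {Ω : Type*} [Group Ω] (φ : Ω →* MulAut W)
    (hφ : ∀ (ρ : Ω) (v : W), cs.length (φ ρ v) = cs.length v)
    (ℓt : W ⋊[φ] Ω → ℕ) (hℓt : ∀ x, ℓt x = cs.length x.left)
    (S₁ S₂ : Set B) (W₁ W₂ : Subgroup W)
    (hW₁ : W₁ = Subgroup.closure (cs.simple '' S₁))
    (hW₂ : W₂ = Subgroup.closure (cs.simple '' S₂))
    (Ω₁ : Subgroup Ω)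
    (hΩ₁ : ∀ ρ ∈ Ω₁, ∀ i ∈ S₁, ∃ j ∈ S₁, φ ρ (cs.simple i) = cs.simple j)
    (W₁' : Subgroup (W ⋊[φ] Ω))
    (hW₁' : W₁' = Subgroup.map (inl : W →* W ⋊[φ] Ω) W₁ ⊔
        Subgroup.map (inr : Ω →* W ⋊[φ] Ω) Ω₁)
    (W₁₂ : Subgroup W) (hW₁₂ : W₁₂ = W₁ ⊓ W₂)
    (σ : W ⋊[φ] Ω) (hσ : σ ∈ W₁')
    (hmin : ∀ a ∈ W₁₂, ∀ b ∈ W₁₂, ℓt σ ≤ ℓt (inl a * σ * inl b)) :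
    ∀ w₂ ∈ W₂, ℓt (σ * inl w₂) = ℓt σ + cs.length w₂ ∧
      ℓt (inl w₂ * σ) = ℓt σ + cs.length w₂ := by

  subst hW₁ hW₂ hW₁₂ hW₁'
  intro w₂ hw₂
  -- φ ρ preserves W₁ for ρ ∈ Ω₁
  have hφW₁ : ∀ ρ ∈ Ω₁, ∀ x ∈ Subgroup.closure (cs.simple '' S₁),
      φ ρ x ∈ Subgroup.closure (cs.simple '' S₁) := by
    intro ρ hρ x hx
    induction hx using Subgroup.closure_induction with
    | mem y hy =>
      obtain ⟨i, hi, rfl⟩ := hy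
      obtain ⟨j, hj, hφj⟩ := hΩ₁ ρ hρ i hi
      rw [hφj]
      exact Subgroup.subset_closure ⟨j, hj, rfl⟩
    | one => rw [map_one]; exact one_mem _
    | mul x y hx hy ihx ihy => rw [map_mul]; exact mul_mem ihx ihy
    | inv x hx ihx => rw [map_inv]; exact inv_mem ihx
  -- σ decomposes: σ.left ∈ W₁ and σ.right ∈ Ω₁
  have hσK : σ.left ∈ Subgroup.closure (cs.simple '' S₁) ∧ σ.right ∈ Ω₁ := by
    let K : Subgroup (W ⋊[φ] Ω) :=
      { carrier := {x | x.left ∈ Subgroup.closure (cs.simple '' S₁) ∧ x.right ∈ Ω₁}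
        one_mem' := ⟨by rw [one_left]; exact one_mem _, by rw [one_right]; exact one_mem _⟩
        mul_mem' := by
          rintro a b ⟨ha1, ha2⟩ ⟨hb1, hb2⟩
          refine ⟨?_, ?_⟩
          · rw [mul_left]
            exact mul_mem ha1 (hφW₁ a.right ha2 b.left hb1)
          · rw [mul_right]
            exact mul_mem ha2 hb2
        inv_mem' := by
          rintro a ⟨ha1, ha2⟩
          refine ⟨?_, ?_⟩
          · rw [inv_left]
            exact hφW₁ a.right⁻¹ (inv_mem ha2) a.left⁻¹ (inv_mem ha1)
          · rw [inv_right]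
            exact inv_mem ha2 }
    have hle : Subgroup.map (inl : W →* W ⋊[φ] Ω) (Subgroup.closure (cs.simple '' S₁)) ⊔
        Subgroup.map (inr : Ω →* W ⋊[φ] Ω) Ω₁ ≤ K := by
      apply sup_le
      · rintro x ⟨a, ha, rfl⟩
        exact ⟨by simpa using ha, by simp⟩
      · rintro x ⟨ρ, hρ, rfl⟩
        exact ⟨by simp, by simpa using hρ⟩
    exact hle hσ
  obtain ⟨huW₁, hρΩ₁⟩ := hσK
  set u := σ.left with hu
  set ρ := σ.right with hρ
  have hρinv : φ ρ ((φ ρ⁻¹) u) = u := by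
    have : φ ρ * φ ρ⁻¹ = 1 := by rw [← map_mul, mul_inv_cancel, map_one]
    calc φ ρ ((φ ρ⁻¹) u) = (φ ρ * φ ρ⁻¹) u := rfl
      _ = u := by rw [this]; rfl
  -- minimality on the right (for u' = φ ρ⁻¹ u) and on the left (for u)
  have hminR : ∀ b ∈ Subgroup.closure (cs.simple '' S₁) ⊓ Subgroup.closure (cs.simple '' S₂),
      cs.length u ≤ cs.length (u * φ ρ b) := by
    intro b hb
    have := hmin 1 (one_mem _) b hb
    rw [hℓt, hℓt] at this
    simpa using this
  have hminL : ∀ a ∈ Subgroup.closure (cs.simple '' S₁) ⊓ Subgroup.closure (cs.simple '' S₂),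
      cs.length u ≤ cs.length (a * u) := by
    intro a ha
    have := hmin a ha 1 (one_mem _)
    rw [hℓt, hℓt] at this
    simpa using this
  constructor
  · -- right multiplication
    set u' := (φ ρ⁻¹) u with hu'
    have hu'W₁ : u' ∈ Subgroup.closure (cs.simple '' S₁) :=
      hφW₁ ρ⁻¹ (inv_mem hρΩ₁) u huW₁
    have hu'len : cs.length u' = cs.length u := hφ ρ⁻¹ u
    have hminu' : ∀ b ∈ Subgroup.closure (cs.simple '' S₁) ⊓ Subgroup.closure (cs.simple '' S₂),
        cs.length u' ≤ cs.length (u' * b) := by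
      intro b hb
      have h1 : cs.length (u' * b) = cs.length (u * φ ρ b) := by
        rw [← hφ ρ (u' * b), map_mul, hρinv]
      rw [h1, hu'len]
      exact hminR b hb
    have hkey := Stmt6Aux.key_lemma cs S₁ S₂ u' hu'W₁ hminu' w₂ hw₂
    have h2 : cs.length (u * φ ρ w₂) = cs.length (u' * w₂) := by
      rw [← hφ ρ (u' * w₂), map_mul, hρinv]
    rw [hℓt, hℓt]
    have h3 : (σ * inl w₂).left = u * φ ρ w₂ := by
      rw [mul_left, left_inl]
    rw [h3, h2, hkey, hu'len]
  · -- left multiplication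
    have huinvW₁ : u⁻¹ ∈ Subgroup.closure (cs.simple '' S₁) := inv_mem huW₁
    have hminuinv : ∀ b ∈ Subgroup.closure (cs.simple '' S₁) ⊓ Subgroup.closure (cs.simple '' S₂),
        cs.length u⁻¹ ≤ cs.length (u⁻¹ * b) := by
      intro b hb
      have h1 : cs.length (u⁻¹ * b) = cs.length (b⁻¹ * u) := by
        rw [← cs.length_inv (u⁻¹ * b)]
        congr 1
        group
      rw [h1, cs.length_inv]
      exact hminL b⁻¹ (inv_mem hb)
    have hkey := Stmt6Aux.key_lemma cs S₁ S₂ u⁻¹ huinvW₁ hminuinv w₂⁻¹ (inv_mem hw₂)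
    have h2 : cs.length (w₂ * u) = cs.length (u⁻¹ * w₂⁻¹) := by
      rw [← cs.length_inv (w₂ * u)]
      congr 1
      group
    rw [hℓt, hℓt]
    have h3 : (inl w₂ * σ).left = w₂ * u := by
      rw [mul_left, left_inl, right_inl, map_one]
      rfl
    rw [h3, h2, hkey, cs.length_inv, cs.length_inv]
end

section
/- With notation as above (W₁' = W₁Ω₁ where Ω₁ fixes S₁, W_{1,2} = W₁ ∩ W₂): if σ ∈ W₁' is of minimal length in its double coset W_{1,2}σW_{1,2}, then σ is of minimal length in its double coset W₂σW₂; that is, ℓ(w₂ σ w₂') ≥ ℓ(σ) for all w₂, w₂' ∈ W₂. -/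
open SemidirectProduct

namespace Stmt7Aux

open CoxeterSystem List

variable {B : Type*} {M : CoxeterMatrix B} {W : Type*} [Group W] (cs : CoxeterSystem M W)

local prefix:100 "s" => cs.simple
local prefix:100 "π" => cs.wordProd
local prefix:100 "ris" => cs.rightInvSeq
local prefix:100 "lis" => cs.leftInvSeq

noncomputable section
open scoped Classical

/-- One-letter move in Tits' permutation representation on `W × ZMod 2`. -/
def titsFun (i : B) : W × ZMod 2 → W × ZMod 2 :=
  fun p => (s i * p.1 * s i, p.2 + if p.1 = s i then 1 else 0)

lemma titsFun_invol (i : B) (p : W × ZMod 2) : titsFun cs i (titsFun cs i p) = p := by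
  obtain ⟨w, ε⟩ := p
  simp only [titsFun]
  have h1 : s i * (s i * w * s i) * s i = w := by
    simp [← mul_assoc, cs.simple_mul_simple_self]
  have h2 : (s i * w * s i = s i) ↔ (w = s i) := by
    constructor
    · intro h
      have := congrArg (fun x => s i * x * s i) h
      simpa [← mul_assoc, cs.simple_mul_simple_self] using this
    · intro h; subst h; simp [cs.simple_mul_simple_self]
  ext
  · exact h1
  · simp only [h2]
    split_ifs with h
    · show ε + 1 + 1 = ε
      have : (1 : ZMod 2) + 1 = 0 := by decide
      rw [add_assoc, this, add_zero]
    · simp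

/-- Tits' permutation associated to a simple generator. -/
def titsPerm (i : B) : Equiv.Perm (W × ZMod 2) :=
  ⟨titsFun cs i, titsFun cs i, titsFun_invol cs i, titsFun_invol cs i⟩

lemma titsPerm_apply (i : B) (w : W) (ε : ZMod 2) :
    titsPerm cs i (w, ε) = (s i * w * s i, ε + if w = s i then 1 else 0) := rfl

section braid

variable (i i' : B)

/-- `a = sᵢ sᵢ'`. -/
private def aa : W := s i * s i'

lemma simple_mul_aa_pow (n : ℕ) : s i' * (aa cs i i') ^ n = ((aa cs i i') ^ n)⁻¹ * s i' := by
  induction n with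
  | zero => simp
  | succ n ih =>
    have key : s i' * aa cs i i' = (aa cs i i')⁻¹ * s i' := by
      simp only [aa, mul_inv_rev, inv_simple]
      group
    rw [pow_succ, ← mul_assoc, ih, mul_assoc, key]
    group

/-- The sequence of elements whose hits cause sign flips. -/
private def vv (k : ℕ) : W := ((aa cs i i') ^ ((k + 1) / 2))⁻¹ * s i' * (aa cs i i') ^ (k / 2)

lemma vv_zero : vv cs i i' 0 = s i' := by simp [vv]

lemma vv_one : vv cs i i' 1 = (aa cs i i')⁻¹ * s i' := by simp [vv]

lemma vv_succ_succ (k : ℕ) : vv cs i i' (k + 2) = (aa cs i i')⁻¹ * vv cs i i' k * aa cs i i' := by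
  have h1 : (k + 2 + 1) / 2 = (k + 1) / 2 + 1 := by omega
  have h2 : (k + 2) / 2 = k / 2 + 1 := by omega
  simp only [vv, h1, h2, pow_succ]
  group

lemma vv_period (m : ℕ) (hm : (aa cs i i') ^ m = 1) (k : ℕ) :
    vv cs i i' (k + m) = vv cs i i' k := by
  set a := aa cs i i' with ha
  have hq := simple_mul_aa_pow cs i i' ((k + m) / 2)
  have hq' := simple_mul_aa_pow cs i i' (k / 2)
  rw [← ha] at hq hq'
  simp only [vv, ← ha]
  rw [mul_assoc, hq, mul_assoc, hq', ← mul_assoc, ← mul_assoc, mul_left_inj,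
    ← mul_inv_rev, ← mul_inv_rev, ← pow_add, ← pow_add, inv_inj]
  rw [show (k + m) / 2 + (k + m + 1) / 2 = k + m by omega, show k / 2 + (k + 1) / 2 = k by omega,
    pow_add, hm, mul_one]


lemma titsPerm_mul_pow_apply (n : ℕ) (w : W) (ε : ZMod 2) :
    ((titsPerm cs i * titsPerm cs i') ^ n) (w, ε) =
      ((aa cs i i') ^ n * w * ((aa cs i i') ^ n)⁻¹,
        ε + ∑ k ∈ Finset.range (2 * n), (if w = vv cs i i' k then (1 : ZMod 2) else 0)) := by
  induction n generalizing w ε with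
  | zero => simp
  | succ n ih =>
    have hg : (titsPerm cs i * titsPerm cs i') (w, ε) =
        (aa cs i i' * w * (aa cs i i')⁻¹,
          ε + (if w = vv cs i i' 0 then (1 : ZMod 2) else 0)
            + (if w = vv cs i i' 1 then (1 : ZMod 2) else 0)) := by
      rw [Equiv.Perm.mul_apply, titsPerm_apply, titsPerm_apply]
      have e1 : s i * (s i' * w * s i') * s i = aa cs i i' * w * (aa cs i i')⁻¹ := by
        simp only [aa, mul_inv_rev, inv_simple]; group
      have e2 : (w = vv cs i i' 0) ↔ (w = s i') := by rw [vv_zero]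
      have e3 : (s i' * w * s i' = s i) ↔ (w = vv cs i i' 1) := by
        rw [vv_one]
        constructor
        · intro h
          have hw : w = s i' * s i * s i' := by
            rw [← h]
            simp [← mul_assoc, cs.simple_mul_simple_self]
          rw [hw, aa, mul_inv_rev, inv_simple, inv_simple]
        · intro h
          rw [h, aa, mul_inv_rev, inv_simple, inv_simple]
          simp [← mul_assoc, cs.simple_mul_simple_self]
      rw [e1]
      congr 1
      rw [← e3, e2]
    rw [pow_succ, Equiv.Perm.mul_apply, hg, ih]
    have comp1 : (aa cs i i') ^ n * (aa cs i i' * w * (aa cs i i')⁻¹) * ((aa cs i i') ^ n)⁻¹ =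
        (aa cs i i') ^ (n + 1) * w * ((aa cs i i') ^ (n + 1))⁻¹ := by
      rw [pow_succ']; group
    rw [comp1]
    congr 1
    have hcond : ∀ k, (aa cs i i' * w * (aa cs i i')⁻¹ = vv cs i i' k) ↔ (w = vv cs i i' (k + 2)) := by
      intro k
      rw [vv_succ_succ]
      constructor
      · intro h; rw [← h]; group
      · intro h; rw [h]; group
    have hsum : ∑ k ∈ Finset.range (2 * n), (if aa cs i i' * w * (aa cs i i')⁻¹ = vv cs i i' k
          then (1 : ZMod 2) else 0) =
        ∑ k ∈ Finset.range (2 * n), (if w = vv cs i i' (k + 2) then (1 : ZMod 2) else 0) := by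
      refine Finset.sum_congr rfl fun k _ => ?_
      rw [if_congr (hcond k) rfl rfl]
    rw [hsum]
    have expand : ∑ k ∈ Finset.range (2 * (n + 1)), (if w = vv cs i i' k then (1 : ZMod 2) else 0) =
        ∑ k ∈ Finset.range (2 * n), (if w = vv cs i i' (k + 2) then (1 : ZMod 2) else 0)
          + (if w = vv cs i i' 1 then (1 : ZMod 2) else 0)
          + (if w = vv cs i i' 0 then (1 : ZMod 2) else 0) := by
      have h2 : 2 * (n + 1) = (2 * n + 1) + 1 := by ring
      rw [h2, Finset.sum_range_succ', Finset.sum_range_succ']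
    rw [expand]
    ring

lemma titsPerm_liftable : ∀ (i i' : B), (titsPerm cs i * titsPerm cs i') ^ M i i' = 1 := by
  intro i i'
  refine Equiv.ext fun p => ?_
  obtain ⟨w, ε⟩ := p
  rw [titsPerm_mul_pow_apply]
  have haam : (aa cs i i') ^ M i i' = 1 := cs.simple_mul_simple_pow i i'
  have hv : ∀ k, vv cs i i' (M i i' + k) = vv cs i i' k := by
    intro k
    rw [Nat.add_comm]
    exact vv_period cs i i' _ haam k
  have hsum : ∑ k ∈ Finset.range (2 * M i i'), (if w = vv cs i i' k then (1 : ZMod 2) else 0)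
      = 0 := by
    have h2 : 2 * M i i' = M i i' + M i i' := by ring
    rw [h2, Finset.sum_range_add]
    simp only [hv]
    rw [← two_mul]
    have h0 : (2 : ZMod 2) = 0 := by decide
    rw [h0, zero_mul]
  rw [haam, hsum]
  simp
end braid

/-- Tits' permutation representation as a homomorphism. -/
def titsHom : W →* Equiv.Perm (W × ZMod 2) :=
  cs.lift ⟨fun i => titsPerm cs i, titsPerm_liftable cs⟩

lemma titsHom_simple (i : B) : titsHom cs (s i) = titsPerm cs i :=
  cs.lift_apply_simple _ i

/-- Mod-two count of occurrences of `t` in a list. -/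
def cnt (t : W) (l : List W) : ZMod 2 :=
  (l.map (fun x => if x = t then (1 : ZMod 2) else 0)).sum

lemma cnt_nil (t : W) : cnt t ([] : List W) = 0 := rfl

lemma cnt_cons (t x : W) (l : List W) :
    cnt t (x :: l) = (if x = t then (1 : ZMod 2) else 0) + cnt t l := by
  simp [cnt]

lemma mem_of_cnt_ne_zero {t : W} {l : List W} (h : cnt t l ≠ 0) : t ∈ l := by
  by_contra hmem
  apply h
  apply List.sum_eq_zero
  intro x hx
  obtain ⟨y, hy, rfl⟩ := List.mem_map.mp hx
  rw [if_neg]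
  intro hyt
  exact hmem (hyt ▸ hy)

lemma titsHom_wordProd (ω : List B) (t : W) (ε : ZMod 2) :
    titsHom cs (π ω) (t, ε) = (π ω * t * (π ω)⁻¹, ε + cnt t (ris ω)) := by
  induction ω generalizing ε with
  | nil => simp [cnt]
  | cons i ω ih =>
    rw [wordProd_cons, map_mul, Equiv.Perm.mul_apply, ih, titsHom_simple, titsPerm_apply]
    have hris : ris (i :: ω) = ((π ω)⁻¹ * s i * π ω) :: ris ω := rfl
    rw [hris, cnt_cons]
    have hcond : (π ω * t * (π ω)⁻¹ = s i) ↔ ((π ω)⁻¹ * s i * π ω = t) := by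
      constructor
      · intro h; rw [← h]; group
      · intro h; rw [← h]; group
    have hfst : s i * (π ω * t * (π ω)⁻¹) * s i = π (i :: ω) * t * (π (i :: ω))⁻¹ := by
      rw [wordProd_cons, mul_inv_rev, inv_simple]; group
    rw [hfst]
    congr 1
    rw [if_congr hcond rfl rfl]
    ring

lemma phi2_eq_zero_of_not_isRightDescent {w : W} {k : B} (h : ¬ cs.IsRightDescent w k) :
    (titsHom cs w (s k, 0)).2 = 0 := by
  obtain ⟨ω, hred, hw⟩ := cs.exists_reduced_word' w
  rw [hw, titsHom_wordProd]
  by_contra hcnt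
  have hmem : s k ∈ ris ω := by
    apply mem_of_cnt_ne_zero (t := s k) (l := ris ω)
    intro h0
    exact hcnt (by simp [h0])
  obtain ⟨j, hj, hel⟩ := List.mem_iff_getElem.mp hmem
  have hj' : j < ω.length := by simpa using hj
  have hgd : (ris ω).getD j 1 = s k := by
    rw [List.getD_eq_getElem _ _ hj, hel]
  have herase : π ω * s k = π (ω.eraseIdx j) := by
    rw [← hgd]
    exact cs.wordProd_mul_getD_rightInvSeq ω j
  apply h
  unfold CoxeterSystem.IsRightDescent
  rw [← hw] at herase
  rw [herase]
  calc cs.length (π (ω.eraseIdx j)) ≤ (ω.eraseIdx j).length := cs.length_wordProd_le _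
    _ < ω.length := by
        have := List.length_eraseIdx_add_one hj'
        omega
    _ = cs.length w := by rw [hw]; exact hred.symm

lemma phi2_eq_one_of_isRightDescent {w : W} {k : B} (h : cs.IsRightDescent w k) :
    (titsHom cs w (s k, 0)).2 = 1 := by
  have hcancel : (w * s k) * s k = w := cs.simple_mul_simple_cancel_right k
  set w' := w * s k with hw'
  have h' : ¬ cs.IsRightDescent w' k := by
    intro hc
    unfold CoxeterSystem.IsRightDescent at hc
    rw [hw'] at hc
    rw [hcancel] at hc
    have hlt : cs.length (w * s k) < cs.length w := h
    omega
  obtain ⟨ω', _, hw'eq⟩ := cs.exists_reduced_word' w'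
  have hword : w = π (ω'.concat k) := by
    rw [cs.wordProd_concat, ← hw'eq, hcancel]
  have hz : (titsHom cs w' (s k, 0)).2 = 0 := phi2_eq_zero_of_not_isRightDescent cs h'
  rw [hw'eq, titsHom_wordProd] at hz
  simp only [zero_add] at hz
  rw [hword, titsHom_wordProd]
  simp only [zero_add]
  rw [cs.rightInvSeq_concat]
  have hconj : ∀ x : W, ((MulAut.conj (s k)) x = s k) ↔ (x = s k) := by
    intro x
    simp only [MulAut.conj_apply, inv_simple]
    constructor
    · intro hx
      have := congrArg (fun y => s k * y * s k) hx
      simpa [← mul_assoc, cs.simple_mul_simple_self] using this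
    · intro hx; rw [hx]; simp [← mul_assoc, cs.simple_mul_simple_self]
  have hmapcnt : cnt (s k) ((ris ω').map (MulAut.conj (s k))) = cnt (s k) (ris ω') := by
    unfold cnt
    rw [List.map_map]
    congr 1
    apply List.map_congr_left
    intro x _
    simp only [Function.comp_apply]
    rw [if_congr (hconj x) rfl rfl]
  rw [List.concat_eq_append]
  unfold cnt
  rw [List.map_append, List.sum_append]
  unfold cnt at hmapcnt hz
  rw [hmapcnt, hz]
  simp

lemma exists_eraseIdx_of_isRightDescent (ω : List B) (k : B)
    (h : cs.IsRightDescent (π ω) k) :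
    ∃ j, j < ω.length ∧ π ω * s k = π (ω.eraseIdx j) := by
  have h1 : (titsHom cs (π ω) (s k, 0)).2 = 1 := phi2_eq_one_of_isRightDescent cs h
  rw [titsHom_wordProd] at h1
  simp only [zero_add] at h1
  have hmem : s k ∈ ris ω := mem_of_cnt_ne_zero (by rw [h1]; decide)
  obtain ⟨j, hj, hel⟩ := List.mem_iff_getElem.mp hmem
  have hj' : j < ω.length := by simpa using hj
  refine ⟨j, hj', ?_⟩
  have hgd : (ris ω).getD j 1 = s k := by rw [List.getD_eq_getElem _ _ hj, hel]
  rw [← hgd]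
  exact cs.wordProd_mul_getD_rightInvSeq ω j

lemma exists_getD_leftInvSeq_of_isLeftDescent (ω : List B) (k : B)
    (h : cs.IsLeftDescent (π ω) k) :
    ∃ j, j < ω.length ∧ (lis ω).getD j 1 = s k := by
  have hrev : cs.IsRightDescent (π ω.reverse) k := by
    rw [cs.wordProd_reverse]
    exact cs.isRightDescent_inv_iff.mpr h
  have h1 : (titsHom cs (π ω.reverse) (s k, 0)).2 = 1 := phi2_eq_one_of_isRightDescent cs hrev
  rw [titsHom_wordProd] at h1
  simp only [zero_add] at h1
  have hmem : s k ∈ ris ω.reverse := mem_of_cnt_ne_zero (by rw [h1]; decide)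
  rw [cs.rightInvSeq_reverse, List.mem_reverse] at hmem
  obtain ⟨j, hj, hel⟩ := List.mem_iff_getElem.mp hmem
  have hj' : j < ω.length := by
    have := cs.length_leftInvSeq ω
    omega
  refine ⟨j, hj', ?_⟩
  rw [List.getD_eq_getElem _ _ hj, hel]



lemma exists_reduced_sublist : ∀ (n : ℕ) (ω : List B), ω.length ≤ n →
    ∃ ω', ω'.Sublist ω ∧ π ω' = π ω ∧ cs.IsReduced ω' := by
  intro n
  induction n with
  | zero =>
    intro ω hω
    have : ω = [] := List.eq_nil_of_length_eq_zero (by omega)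
    subst this
    exact ⟨[], List.Sublist.refl _, rfl, by simp [CoxeterSystem.IsReduced]⟩
  | succ n ih =>
    intro ω hω
    by_cases hred : cs.IsReduced ω
    · exact ⟨ω, List.Sublist.refl _, rfl, hred⟩
    · have hlen : 1 ≤ ω.length := by
        by_contra hc
        have : ω = [] := List.eq_nil_of_length_eq_zero (by omega)
        subst this
        exact hred (by simp [CoxeterSystem.IsReduced])
      have hexists : ∃ j, ¬ cs.IsReduced (ω.take (j + 1)) := by
        refine ⟨ω.length - 1, ?_⟩
        rwa [show ω.length - 1 + 1 = ω.length from by omega, List.take_length]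
      let j := Nat.find hexists
      have hj : ¬ cs.IsReduced (ω.take (j + 1)) := Nat.find_spec hexists
      have hjle : j ≤ ω.length - 1 := Nat.find_min' hexists (by
        rwa [show ω.length - 1 + 1 = ω.length from by omega, List.take_length])
      have hjlt : j < ω.length := by omega
      have hredj : cs.IsReduced (ω.take j) := by
        rcases Nat.eq_zero_or_pos j with h0 | h0
        · rw [h0]; simp [CoxeterSystem.IsReduced]
        · have := Nat.find_min hexists (m := j - 1) (by omega)
          rw [not_not] at this
          rwa [show j - 1 + 1 = j from by omega] at this
      have htake : ω.take (j + 1) = ω.take j ++ [ω[j]] := by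
        rw [List.take_succ, List.getElem?_eq_getElem hjlt]
        rfl
      have hlenTake : (ω.take j).length = j := by
        rw [List.length_take]; omega
      have hlentj : cs.length (π (ω.take j)) = j := by
        have := hredj
        unfold CoxeterSystem.IsReduced at this
        omega
      have hdesc : cs.IsRightDescent (π (ω.take j)) ω[j] := by
        rcases cs.length_mul_simple (π (ω.take j)) ω[j] with hup | hdown
        · exfalso
          apply hj
          unfold CoxeterSystem.IsReduced
          rw [htake, cs.wordProd_append, List.length_append, hlenTake]
          simp only [wordProd_singleton, List.length_singleton]
          rw [hup, hlentj]
        · unfold CoxeterSystem.IsRightDescent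
          omega
      obtain ⟨r, hr, herase⟩ := exists_eraseIdx_of_isRightDescent cs (ω.take j) ω[j] hdesc
      set ω₁ := (ω.take j).eraseIdx r ++ ω.drop (j + 1) with hω₁
      have hprod : π ω₁ = π ω := by
        rw [hω₁, cs.wordProd_append, ← herase]
        conv_rhs => rw [← List.take_append_drop (j + 1) ω]
        rw [cs.wordProd_append, htake, cs.wordProd_append]
        simp [mul_assoc]
      have hsub : ω₁.Sublist ω := by
        have hdecomp : ω = ω.take j ++ (ω[j] :: ω.drop (j + 1)) := by
          conv_lhs => rw [← List.take_append_drop j ω]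
          rw [List.drop_eq_getElem_cons hjlt]
        rw [hdecomp, hω₁]
        exact List.Sublist.append (List.eraseIdx_sublist _ r) (List.sublist_cons_self _ _)
      have hlen₁ : ω₁.length ≤ n := by
        rw [hω₁, List.length_append]
        have h1 : ((ω.take j).eraseIdx r).length + 1 = j := by
          rw [List.length_eraseIdx_add_one (by omega : r < (ω.take j).length), hlenTake]
        have h2 : (ω.drop (j + 1)).length = ω.length - (j + 1) := List.length_drop
        omega
      obtain ⟨ω', h1, h2, h3⟩ := ih ω₁ hlen₁
      exact ⟨ω', h1.trans hsub, h2.trans hprod, h3⟩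

lemma wordProd_mem_closure {J : Set B} {ω : List B} (h : ∀ i ∈ ω, i ∈ J) :
    π ω ∈ Subgroup.closure (cs.simple '' J) := by
  induction ω with
  | nil => simp [one_mem]
  | cons i ω ih =>
    rw [wordProd_cons]
    exact mul_mem (Subgroup.subset_closure ⟨i, h i (List.mem_cons_self), rfl⟩)
      (ih fun x hx => h x (List.mem_cons_of_mem _ hx))

lemma exists_word_of_mem_closure {J : Set B} {w : W}
    (h : w ∈ Subgroup.closure (cs.simple '' J)) :
    ∃ ω, (∀ i ∈ ω, i ∈ J) ∧ π ω = w := by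
  induction h using Subgroup.closure_induction with
  | mem x hx =>
    obtain ⟨i, hi, rfl⟩ := hx
    exact ⟨[i], by simpa using hi, by simp⟩
  | one => exact ⟨[], by simp, by simp⟩
  | mul x y _ _ ihx ihy =>
    obtain ⟨ωx, hx1, hx2⟩ := ihx
    obtain ⟨ωy, hy1, hy2⟩ := ihy
    refine ⟨ωx ++ ωy, ?_, by rw [cs.wordProd_append, hx2, hy2]⟩
    intro i hi
    rcases List.mem_append.mp hi with h | h
    · exact hx1 i h
    · exact hy1 i h
  | inv x _ ihx =>
    obtain ⟨ωx, hx1, hx2⟩ := ihx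
    refine ⟨ωx.reverse, ?_, by rw [cs.wordProd_reverse, hx2]⟩
    intro i hi
    exact hx1 i (List.mem_reverse.mp hi)

lemma exists_reduced_word_over {J : Set B} {w : W}
    (h : w ∈ Subgroup.closure (cs.simple '' J)) :
    ∃ ω, (∀ i ∈ ω, i ∈ J) ∧ π ω = w ∧ cs.IsReduced ω := by
  obtain ⟨ω₀, h1, h2⟩ := exists_word_of_mem_closure cs h
  obtain ⟨ω, hsub, hprod, hred⟩ := exists_reduced_sublist cs ω₀.length ω₀ le_rfl
  exact ⟨ω, fun i hi => h1 i (hsub.mem hi), hprod.trans h2, hred⟩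

lemma prefix_mem_closure_aux :
    ∀ (n : ℕ) (J : Set B) (w : W), cs.length w ≤ n →
      w ∈ Subgroup.closure (cs.simple '' J) →
      ∀ ω : List B, cs.IsReduced ω → π ω = w →
      ∀ m : ℕ, π (ω.take m) ∈ Subgroup.closure (cs.simple '' J) := by
  intro n
  induction n with
  | zero =>
    intro J w hw _ ω hred hprod m
    have hω : ω = [] := by
      have : ω.length = 0 := by
        unfold CoxeterSystem.IsReduced at hred
        rw [hprod] at hred
        omega
      exact List.eq_nil_of_length_eq_zero this
    subst hω
    simp [one_mem]
  | succ n ih =>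
    intro J w hw hmem ω hred hprod m
    match ω with
    | [] => simp [one_mem]
    | i :: ω' =>
      have hred' : cs.IsReduced ω' := by
        have := CoxeterSystem.IsReduced.drop (ω := i :: ω') hred 1
        simpa using this
      have hω' : π ω' = s i * w := by
        rw [← hprod, wordProd_cons, cs.simple_mul_simple_cancel_left]
      have hlenw : cs.length w = ω'.length + 1 := by
        rw [← hprod]
        have := hred
        unfold CoxeterSystem.IsReduced at this
        rw [this]
        simp
      have hdesc : cs.IsLeftDescent w i := by
        unfold CoxeterSystem.IsLeftDescent
        have : cs.length (s i * w) ≤ ω'.length := by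
          rw [← hω']
          exact cs.length_wordProd_le ω'
        omega
      obtain ⟨τ, hτJ, hτprod, hτred⟩ := exists_reduced_word_over cs hmem
      have hdescτ : cs.IsLeftDescent (π τ) i := by rwa [hτprod]
      obtain ⟨j, hj, hgd⟩ := exists_getD_leftInvSeq_of_isLeftDescent cs τ i hdescτ
      have hsi : s i ∈ Subgroup.closure (cs.simple '' J) := by
        rw [← hgd, cs.getD_leftInvSeq]
        refine mul_mem (mul_mem (wordProd_mem_closure cs ?_) ?_)
          (inv_mem (wordProd_mem_closure cs ?_))
        · intro x hx; exact hτJ x (List.mem_of_mem_take hx)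
        · rw [List.getElem?_eq_getElem hj]
          exact Subgroup.subset_closure ⟨τ[j], hτJ _ (List.getElem_mem hj), rfl⟩
        · intro x hx; exact hτJ x (List.mem_of_mem_take hx)
      have hw₁mem : s i * w ∈ Subgroup.closure (cs.simple '' J) := by
        have herase : s i * w = π (τ.eraseIdx j) := by
          rw [← hτprod, ← hgd]
          exact cs.getD_leftInvSeq_mul_wordProd τ j
        rw [herase]
        exact wordProd_mem_closure cs fun x hx => hτJ x ((List.eraseIdx_sublist τ j).mem hx)
      have hlen₁ : cs.length (s i * w) ≤ n := by
        have : cs.length (s i * w) ≤ ω'.length := by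
          rw [← hω']; exact cs.length_wordProd_le ω'
        omega
      have hIH := ih J (s i * w) hlen₁ hw₁mem ω' hred' hω'
      match m with
      | 0 => simp [one_mem]
      | m + 1 =>
        have : (i :: ω').take (m + 1) = i :: ω'.take m := rfl
        rw [this, wordProd_cons]
        exact mul_mem hsi (hIH m)

lemma factor_mem_closure_of_length_add {J : Set B} {x y : W}
    (h : x * y ∈ Subgroup.closure (cs.simple '' J))
    (hadd : cs.length (x * y) = cs.length x + cs.length y) :
    x ∈ Subgroup.closure (cs.simple '' J) ∧ y ∈ Subgroup.closure (cs.simple '' J) := by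
  obtain ⟨ξ, hξred, hξ⟩ := cs.exists_reduced_word' x
  obtain ⟨υ, hυred, hυ⟩ := cs.exists_reduced_word' y
  have hprod : π (ξ ++ υ) = x * y := by rw [cs.wordProd_append, ← hξ, ← hυ]
  have hred : cs.IsReduced (ξ ++ υ) := by
    unfold CoxeterSystem.IsReduced at *
    rw [hprod, List.length_append, hadd, hξ, hυ, hξred, hυred]
  have hx : x ∈ Subgroup.closure (cs.simple '' J) := by
    have htake : (ξ ++ υ).take ξ.length = ξ := List.take_left
    have := prefix_mem_closure_aux cs (cs.length (x * y)) J (x * y) le_rfl h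
      (ξ ++ υ) hred hprod ξ.length
    rwa [htake, ← hξ] at this
  exact ⟨hx, by
    have : y = x⁻¹ * (x * y) := by group
    rw [this]
    exact mul_mem (inv_mem hx) h⟩

section Cosets

/-- Additivity of lengths for an element of minimal length in its right coset. -/
lemma length_mul_eq_add_of_min {K : Set B} {u : W}
    (hmin : ∀ c ∈ Subgroup.closure (cs.simple '' K), cs.length u ≤ cs.length (u * c)) :
    ∀ c ∈ Subgroup.closure (cs.simple '' K), cs.length (u * c) = cs.length u + cs.length c := by
  suffices H : ∀ n, ∀ c ∈ Subgroup.closure (cs.simple '' K), cs.length c ≤ n →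
      cs.length (u * c) = cs.length u + cs.length c by
    intro c hc
    exact H (cs.length c) c hc le_rfl
  intro n
  induction n with
  | zero =>
    intro c _ hc
    have : c = 1 := cs.length_eq_zero_iff.mp (by omega)
    subst this
    simp
  | succ n ihn =>
    intro c hc hcn
    obtain ⟨γ, hγK, hγprod, hγred⟩ := exists_reduced_word_over cs hc
    rcases List.eq_nil_or_concat γ with rfl | ⟨γ', k, rfl⟩
    · have : c = 1 := by rw [← hγprod]; simp
      subst this
      simp
    · have hkK : k ∈ K := hγK k (by simp)
      have hγ'red : cs.IsReduced γ' := by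
        have := hγred.take γ'.length
        rwa [List.concat_eq_append, List.take_left] at this
      have hγ'K : ∀ i ∈ γ', i ∈ K := fun i hi => hγK i (by simp [hi])
      set c' := π γ' with hc'
      have hc'mem : c' ∈ Subgroup.closure (cs.simple '' K) := wordProd_mem_closure cs hγ'K
      have hceq : c = c' * s k := by rw [← hγprod, cs.wordProd_concat]
      have hlc : cs.length c = γ'.length + 1 := by
        have := hγred
        unfold CoxeterSystem.IsReduced at this
        rw [hγprod, List.length_concat] at this
        omega
      have hlc' : cs.length c' = γ'.length := hγ'red
      have hIH : cs.length (u * c') = cs.length u + cs.length c' :=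
        ihn c' hc'mem (by omega)
      have hlck : cs.length (c' * s k) = γ'.length + 1 := by rw [← hceq]; omega
      rcases cs.length_mul_simple (u * c') k with hup | hdown
      · rw [hceq, ← mul_assoc, hup, hIH]
        omega
      · exfalso
        have hdesc : cs.IsRightDescent (u * c') k := by
          unfold CoxeterSystem.IsRightDescent
          omega
        obtain ⟨ωu, hωured, hωu⟩ := cs.exists_reduced_word' u
        have hprodw : π (ωu ++ γ') = u * c' := by rw [cs.wordProd_append, ← hωu, hc']
        have hdesc' : cs.IsRightDescent (π (ωu ++ γ')) k := by rwa [hprodw]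
        obtain ⟨e, he, herase⟩ := exists_eraseIdx_of_isRightDescent cs (ωu ++ γ') k hdesc'
        rw [hprodw] at herase
        rcases lt_or_ge e ωu.length with hlt | hge
        · rw [List.eraseIdx_append_of_lt_length hlt, cs.wordProd_append, ← hc'] at herase
          have hz : π (ωu.eraseIdx e) = u * (c' * s k * c'⁻¹) := by
            rw [← mul_assoc, ← mul_assoc, herase]
            group
          have hc₁mem : c' * s k * c'⁻¹ ∈ Subgroup.closure (cs.simple '' K) :=
            mul_mem (mul_mem hc'mem (Subgroup.subset_closure ⟨k, hkK, rfl⟩)) (inv_mem hc'mem)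
          have hcontra := hmin _ hc₁mem
          rw [← hz] at hcontra
          have hlen1 : cs.length (π (ωu.eraseIdx e)) ≤ (ωu.eraseIdx e).length :=
            cs.length_wordProd_le _
          have hlen2 : (ωu.eraseIdx e).length + 1 = ωu.length :=
            List.length_eraseIdx_add_one hlt
          have hlenu : cs.length u = ωu.length := by rw [hωu]; exact hωured
          omega
        · rw [List.eraseIdx_append_of_length_le hge, cs.wordProd_append, ← hωu] at herase
          have hck : c' * s k = π (γ'.eraseIdx (e - ωu.length)) := by
            rw [← mul_left_cancel_iff (a := u), ← mul_assoc]
            exact herase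
          have helt : e - ωu.length < γ'.length := by
            rw [List.length_append] at he
            omega
          have hlen1 : cs.length (c' * s k) ≤ (γ'.eraseIdx (e - ωu.length)).length := by
            rw [hck]; exact cs.length_wordProd_le _
          have hlen2 : (γ'.eraseIdx (e - ωu.length)).length + 1 = γ'.length :=
            List.length_eraseIdx_add_one helt
          rw [← hceq] at hlen1
          omega

/-- A right-`K`-reduced element is of minimal length in its right coset, with additivity. -/
lemma length_mul_eq_add_of_rightReduced {K : Set B} {u : W}
    (h : ∀ k ∈ K, ¬ cs.IsRightDescent u k) :
    ∀ c ∈ Subgroup.closure (cs.simple '' K), cs.length (u * c) = cs.length u + cs.length c := by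
  have hSne : (Set.range fun c : Subgroup.closure (cs.simple '' K) =>
      cs.length (u * (c : W))).Nonempty := ⟨_, ⟨⟨1, one_mem _⟩, rfl⟩⟩
  obtain ⟨⟨c₀, hc₀mem⟩, hc₀len⟩ := Nat.sInf_mem hSne
  beta_reduce at hc₀len
  have hmin₀ : ∀ c ∈ Subgroup.closure (cs.simple '' K),
      cs.length (u * c₀) ≤ cs.length (u * c) := by
    intro c hc
    rw [hc₀len]
    exact Nat.sInf_le ⟨⟨c, hc⟩, rfl⟩
  have hu₀min : ∀ c ∈ Subgroup.closure (cs.simple '' K),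
      cs.length (u * c₀) ≤ cs.length ((u * c₀) * c) := by
    intro c hc
    rw [mul_assoc]
    exact hmin₀ _ (mul_mem hc₀mem hc)
  have Hadd := length_mul_eq_add_of_min cs hu₀min
  have hinv : c₀⁻¹ ∈ Subgroup.closure (cs.simple '' K) := inv_mem hc₀mem
  have hlu : cs.length u = cs.length (u * c₀) + cs.length c₀⁻¹ := by
    have := Hadd c₀⁻¹ hinv
    rw [mul_assoc] at this
    simpa using this
  by_cases hc1 : c₀ = 1
  · subst hc1
    intro c hc
    have := Hadd c hc
    simpa using this
  · exfalso
    obtain ⟨γ, hγK, hγprod, hγred⟩ := exists_reduced_word_over cs hinv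
    rcases List.eq_nil_or_concat γ with rfl | ⟨γ', k, rfl⟩
    · apply hc1
      have : c₀⁻¹ = 1 := by rw [← hγprod]; simp
      simpa using congrArg (fun x => x⁻¹) this
    · have hkK : k ∈ K := hγK k (by simp)
      have hγ'red : cs.IsReduced γ' := by
        have := hγred.take γ'.length
        rwa [List.concat_eq_append, List.take_left] at this
      have hcs : c₀⁻¹ * s k = π γ' := by
        rw [← hγprod, cs.wordProd_concat, cs.simple_mul_simple_cancel_right]
      have hcsmem : c₀⁻¹ * s k ∈ Subgroup.closure (cs.simple '' K) := by
        rw [hcs]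
        exact wordProd_mem_closure cs fun i hi => hγK i (by simp [hi])
      have hlenγ : cs.length c₀⁻¹ = γ'.length + 1 := by
        have := hγred
        unfold CoxeterSystem.IsReduced at this
        rw [hγprod, List.length_concat] at this
        omega
      have hlencs : cs.length (c₀⁻¹ * s k) = γ'.length := by rw [hcs]; exact hγ'red
      have husk : u * s k = (u * c₀) * (c₀⁻¹ * s k) := by group
      have : cs.length (u * s k) = cs.length (u * c₀) + γ'.length := by
        rw [husk, Hadd _ hcsmem, hlencs]
      exact h k hkK (by unfold CoxeterSystem.IsRightDescent; omega)

lemma length_mul_eq_add_of_min_left {J : Set B} {m : W}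
    (hm : ∀ a ∈ Subgroup.closure (cs.simple '' J), cs.length m ≤ cs.length (a * m)) :
    ∀ a ∈ Subgroup.closure (cs.simple '' J), cs.length (a * m) = cs.length a + cs.length m := by
  have h' : ∀ c ∈ Subgroup.closure (cs.simple '' J), cs.length m⁻¹ ≤ cs.length (m⁻¹ * c) := by
    intro c hc
    rw [show m⁻¹ * c = (c⁻¹ * m)⁻¹ from by group, cs.length_inv, cs.length_inv]
    exact hm c⁻¹ (inv_mem hc)
  intro a ha
  have := length_mul_eq_add_of_min cs h' a⁻¹ (inv_mem ha)
  rw [show m⁻¹ * a⁻¹ = (a * m)⁻¹ from by group, cs.length_inv, cs.length_inv,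
    cs.length_inv] at this
  omega

lemma length_mul_eq_add_of_leftReduced {J : Set B} {u : W}
    (h : ∀ j ∈ J, ¬ cs.IsLeftDescent u j) :
    ∀ a ∈ Subgroup.closure (cs.simple '' J), cs.length (a * u) = cs.length a + cs.length u := by
  have h' : ∀ k ∈ J, ¬ cs.IsRightDescent u⁻¹ k := fun k hk hd =>
    h k hk (cs.isRightDescent_inv_iff.mp hd)
  intro a ha
  have := length_mul_eq_add_of_rightReduced cs h' a⁻¹ (inv_mem ha)
  rw [show u⁻¹ * a⁻¹ = (a * u)⁻¹ from by group, cs.length_inv, cs.length_inv,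
    cs.length_inv] at this
  omega

/-- Key lemma: an element that is left-`J`-reduced and right-`K`-reduced is of minimal
length in its double coset. -/
lemma length_le_of_bothReduced {J K : Set B} {u : W}
    (hJ : ∀ j ∈ J, ¬ cs.IsLeftDescent u j) (hK : ∀ k ∈ K, ¬ cs.IsRightDescent u k) :
    ∀ a ∈ Subgroup.closure (cs.simple '' J), ∀ b ∈ Subgroup.closure (cs.simple '' K),
      cs.length u ≤ cs.length (a * u * b) := by
  intro a ha b hb
  have hub : cs.length (u * b) = cs.length u + cs.length b :=
    length_mul_eq_add_of_rightReduced cs hK b hb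
  -- minimize the left coset of `u * b` under `P_J`
  have hSne : (Set.range fun x : Subgroup.closure (cs.simple '' J) =>
      cs.length ((x : W) * (u * b))).Nonempty := ⟨_, ⟨⟨1, one_mem _⟩, rfl⟩⟩
  obtain ⟨⟨x₀, hx₀mem⟩, hx₀len⟩ := Nat.sInf_mem hSne
  beta_reduce at hx₀len
  have hmin₀ : ∀ x ∈ Subgroup.closure (cs.simple '' J),
      cs.length (x₀ * (u * b)) ≤ cs.length (x * (u * b)) := by
    intro x hx
    rw [hx₀len]
    exact Nat.sInf_le ⟨⟨x, hx⟩, rfl⟩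
  have hmEmin : ∀ x ∈ Subgroup.closure (cs.simple '' J),
      cs.length (x₀ * (u * b)) ≤ cs.length (x * (x₀ * (u * b))) := by
    intro x hx
    rw [← mul_assoc x x₀ (u * b)]
    exact hmin₀ _ (mul_mem hx hx₀mem)
  have Hadd := length_mul_eq_add_of_min_left cs hmEmin
  have haw : cs.length (x₀ * (u * b)) ≤ cs.length (a * u * b) := by
    have h1 : a * u * b = (a * x₀⁻¹) * (x₀ * (u * b)) := by group
    rw [h1, Hadd _ (mul_mem ha (inv_mem hx₀mem))]
    omega
  -- now show `ℓ u ≤ ℓ (x₀ * (u * b))` via the exchange chain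
  obtain ⟨μ, hμred, hμ⟩ := cs.exists_reduced_word' (x₀ * (u * b))
  have hx₀inv : x₀⁻¹ ∈ Subgroup.closure (cs.simple '' J) := inv_mem hx₀mem
  obtain ⟨α, hαJ, hαprod, hαred⟩ := exists_reduced_word_over cs hx₀inv
  have hαμprod : π (α ++ μ) = u * b := by
    rw [cs.wordProd_append, hαprod, ← hμ]
    group
  have hαμlen : cs.length (u * b) = α.length + μ.length := by
    have h1 : cs.length (x₀⁻¹ * (x₀ * (u * b)))
        = cs.length x₀⁻¹ + cs.length (x₀ * (u * b)) := Hadd _ hx₀inv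
    rw [show x₀⁻¹ * (x₀ * (u * b)) = u * b from by group] at h1
    rw [h1, hμ]
    unfold CoxeterSystem.IsReduced at hμred hαred
    rw [hμred, ← hαprod, hαred]
  have hαμred : cs.IsReduced (α ++ μ) := by
    unfold CoxeterSystem.IsReduced
    rw [hαμprod, List.length_append, hαμlen]
  obtain ⟨β, hβK, hβprod, hβred⟩ := exists_reduced_word_over cs hb
  have htakemem : ∀ r, π (β.take r) ∈ Subgroup.closure (cs.simple '' K) := fun r =>
    wordProd_mem_closure cs fun i hi => hβK i (List.mem_of_mem_take hi)
  have hlentake : ∀ r, r ≤ β.length → cs.length (u * π (β.take r)) = cs.length u + r := by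
    intro r hr
    rw [length_mul_eq_add_of_rightReduced cs hK _ (htakemem r)]
    have := hβred.take r
    unfold CoxeterSystem.IsReduced at this
    rw [this, List.length_take]
    omega
  have hchain : ∀ t, t ≤ β.length → ∃ A Y : List B, A.Sublist α ∧ Y.Sublist μ ∧
      cs.IsReduced (A ++ Y) ∧ π (A ++ Y) = u * π (β.take (β.length - t)) := by
    intro t
    induction t with
    | zero =>
      intro _
      refine ⟨α, μ, List.Sublist.refl _, List.Sublist.refl _, hαμred, ?_⟩
      rw [Nat.sub_zero, List.take_length, hβprod, hαμprod]
    | succ t iht =>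
      intro ht
      obtain ⟨A, Y, hA, hY, hredAY, hprodAY⟩ := iht (by omega)
      have hrlt : β.length - (t + 1) < β.length := by omega
      have hrsucc : β.length - t = (β.length - (t + 1)) + 1 := by omega
      set r := β.length - (t + 1) with hr
      rw [hrsucc] at hprodAY
      have htakesucc : β.take (r + 1) = β.take r ++ [β[r]] := by
        rw [List.take_succ, List.getElem?_eq_getElem hrlt]
        rfl
      have hprodsucc : π (β.take (r + 1)) = π (β.take r) * s β[r] := by
        rw [htakesucc, cs.wordProd_append, cs.wordProd_singleton]
      have hcancel : π (A ++ Y) * s β[r] = u * π (β.take r) := by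
        rw [hprodAY, hprodsucc, ← mul_assoc, cs.simple_mul_simple_cancel_right]
      have hlenAY : cs.length (π (A ++ Y)) = cs.length u + (r + 1) := by
        rw [hprodAY]
        exact hlentake (r + 1) (by omega)
      have hdesc : cs.IsRightDescent (π (A ++ Y)) β[r] := by
        unfold CoxeterSystem.IsRightDescent
        rw [hcancel, hlenAY, hlentake r (by omega)]
        omega
      obtain ⟨e, he, herase⟩ := exists_eraseIdx_of_isRightDescent cs (A ++ Y) β[r] hdesc
      have hζsub : ((A ++ Y).eraseIdx e).Sublist (A ++ Y) := List.eraseIdx_sublist _ e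
      obtain ⟨A', Y', hζeq, hA', hY'⟩ := List.sublist_append_iff.mp hζsub
      have hprodnew : π (A' ++ Y') = u * π (β.take r) := by
        rw [← hζeq, ← herase, hcancel]
      have hrednew : cs.IsReduced (A' ++ Y') := by
        unfold CoxeterSystem.IsReduced
        rw [hprodnew, hlentake r (by omega), ← hζeq]
        have h1 : ((A ++ Y).eraseIdx e).length + 1 = (A ++ Y).length :=
          List.length_eraseIdx_add_one he
        have h2 : (A ++ Y).length = cs.length u + (r + 1) := by
          have := hredAY
          unfold CoxeterSystem.IsReduced at this
          omega
        omega
      exact ⟨A', Y', hA'.trans hA, hY'.trans hY, hrednew, hprodnew⟩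
  obtain ⟨A₀, Y₀, hA₀, hY₀, hred₀, hprod₀⟩ := hchain β.length le_rfl
  rw [Nat.sub_self] at hprod₀
  simp only [List.take_zero, wordProd_nil, mul_one] at hprod₀
  have hπA₀ : π A₀ ∈ Subgroup.closure (cs.simple '' J) :=
    wordProd_mem_closure cs fun i hi => hαJ i (hA₀.mem hi)
  have hYeq : π Y₀ = (π A₀)⁻¹ * u := by
    rw [← hprod₀, cs.wordProd_append]
    group
  have hYlen : cs.length (π Y₀) = cs.length ((π A₀)⁻¹) + cs.length u := by
    rw [hYeq]
    exact length_mul_eq_add_of_leftReduced cs hJ _ (inv_mem hπA₀)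
  have h1 : cs.length (π Y₀) ≤ μ.length := le_trans (cs.length_wordProd_le Y₀) hY₀.length_le
  have h2 : μ.length = cs.length (x₀ * (u * b)) := by
    unfold CoxeterSystem.IsReduced at hμred
    rw [← hμ] at hμred
    omega
  omega


/-- Every element decomposes as `a * d * b` with `a ∈ P_J`, `b ∈ P_K`, lengths adding,
and `d` reduced on both sides. -/
lemma exists_bothReduced_decomp (J K : Set B) :
    ∀ u : W, ∃ a d b : W, a ∈ Subgroup.closure (cs.simple '' J) ∧
      b ∈ Subgroup.closure (cs.simple '' K) ∧ u = a * d * b ∧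
      cs.length u = cs.length a + cs.length d + cs.length b ∧
      (∀ j ∈ J, ¬ cs.IsLeftDescent d j) ∧ (∀ k ∈ K, ¬ cs.IsRightDescent d k) := by
  suffices H : ∀ n, ∀ u : W, cs.length u ≤ n → ∃ a d b : W,
      a ∈ Subgroup.closure (cs.simple '' J) ∧
      b ∈ Subgroup.closure (cs.simple '' K) ∧ u = a * d * b ∧
      cs.length u = cs.length a + cs.length d + cs.length b ∧
      (∀ j ∈ J, ¬ cs.IsLeftDescent d j) ∧ (∀ k ∈ K, ¬ cs.IsRightDescent d k) by
    intro u
    exact H (cs.length u) u le_rfl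
  intro n
  induction n with
  | zero =>
    intro u hu
    refine ⟨1, u, 1, one_mem _, one_mem _, by group, by simp, ?_, ?_⟩
    · intro j _ hd
      unfold CoxeterSystem.IsLeftDescent at hd
      omega
    · intro k _ hd
      unfold CoxeterSystem.IsRightDescent at hd
      omega
  | succ n ih =>
    intro u hu
    by_cases hL : ∃ j ∈ J, cs.IsLeftDescent u j
    · obtain ⟨j, hjJ, hdesc⟩ := hL
      have hlen₁ : cs.length (s j * u) + 1 = cs.length u := by
        rcases cs.length_simple_mul u j with h1 | h1
        · unfold CoxeterSystem.IsLeftDescent at hdesc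
          omega
        · exact h1
      obtain ⟨a, d, b, haJ, hbK, heq, hlen, hdL, hdR⟩ := ih (s j * u) (by omega)
      have hueq : u = (s j * a) * d * b := by
        have h0 : u = s j * (a * d * b) := by
          rw [← heq, cs.simple_mul_simple_cancel_left]
        rw [h0]
        group
      refine ⟨s j * a, d, b, mul_mem (Subgroup.subset_closure ⟨j, hjJ, rfl⟩) haJ, hbK,
        hueq, ?_, hdL, hdR⟩
      have hb1 : cs.length (s j * a) ≤ 1 + cs.length a := by
        have := cs.length_mul_le (s j) a
        rwa [cs.length_simple] at this
      have hb2 : cs.length u ≤ cs.length (s j * a) + cs.length d + cs.length b := by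
        rw [hueq]
        calc cs.length (s j * a * d * b) ≤ cs.length (s j * a * d) + cs.length b :=
              cs.length_mul_le _ _
          _ ≤ cs.length (s j * a) + cs.length d + cs.length b := by
              have := cs.length_mul_le (s j * a) d
              omega
      omega
    · by_cases hR : ∃ k ∈ K, cs.IsRightDescent u k
      · obtain ⟨k, hkK, hdesc⟩ := hR
        have hlen₁ : cs.length (u * s k) + 1 = cs.length u := by
          rcases cs.length_mul_simple u k with h1 | h1
          · unfold CoxeterSystem.IsRightDescent at hdesc
            omega
          · exact h1
        obtain ⟨a, d, b, haJ, hbK, heq, hlen, hdL, hdR⟩ := ih (u * s k) (by omega)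
        have hueq : u = a * d * (b * s k) := by
          have h0 : u = (a * d * b) * s k := by
            rw [← heq, cs.simple_mul_simple_cancel_right]
          rw [h0]
          group
        refine ⟨a, d, b * s k, haJ,
          mul_mem hbK (Subgroup.subset_closure ⟨k, hkK, rfl⟩), hueq, ?_, hdL, hdR⟩
        have hb1 : cs.length (b * s k) ≤ cs.length b + 1 := by
          have := cs.length_mul_le b (s k)
          rwa [cs.length_simple] at this
        have hb2 : cs.length u ≤ cs.length a + cs.length d + cs.length (b * s k) := by
          rw [hueq]
          calc cs.length (a * d * (b * s k)) ≤ cs.length (a * d) + cs.length (b * s k) :=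
                cs.length_mul_le _ _
            _ ≤ cs.length a + cs.length d + cs.length (b * s k) := by
                have := cs.length_mul_le a d
                omega
        omega
      · push_neg at hL hR
        exact ⟨1, u, 1, one_mem _, one_mem _, by group, by simp, hL, hR⟩

/-- Main combinatorial theorem at the level of `W`. -/
lemma main_W (J K L : Set B) (u : W) (huL : u ∈ Subgroup.closure (cs.simple '' L))
    (hmin : ∀ a, a ∈ Subgroup.closure (cs.simple '' L) → a ∈ Subgroup.closure (cs.simple '' J) →
      ∀ b, b ∈ Subgroup.closure (cs.simple '' L) → b ∈ Subgroup.closure (cs.simple '' K) →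
      cs.length u ≤ cs.length (a * u * b)) :
    ∀ a ∈ Subgroup.closure (cs.simple '' J), ∀ b ∈ Subgroup.closure (cs.simple '' K),
      cs.length u ≤ cs.length (a * u * b) := by
  obtain ⟨a₀, d, b₀, ha₀, hb₀, heq, hlen, hdL, hdR⟩ := exists_bothReduced_decomp cs J K u
  -- supports
  have hlen1 : cs.length (d * b₀) = cs.length d + cs.length b₀ := by
    have h1 : cs.length u ≤ cs.length a₀ + cs.length (d * b₀) := by
      rw [heq, mul_assoc]
      exact cs.length_mul_le _ _
    have h2 : cs.length (d * b₀) ≤ cs.length d + cs.length b₀ := cs.length_mul_le _ _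
    omega
  have hfact1 := factor_mem_closure_of_length_add cs (J := L)
    (x := a₀) (y := d * b₀) (by rw [← mul_assoc, ← heq]; exact huL)
    (by rw [← mul_assoc, ← heq, hlen, hlen1]; ring)
  have hfact2 := factor_mem_closure_of_length_add cs (J := L)
    (x := d) (y := b₀) hfact1.2 hlen1
  have hdlen : cs.length u ≤ cs.length d := by
    have h1 := hmin a₀⁻¹ (inv_mem hfact1.1) (inv_mem ha₀) b₀⁻¹ (inv_mem hfact2.2)
      (inv_mem hb₀)
    rw [show a₀⁻¹ * u * b₀⁻¹ = d from by rw [heq]; group] at h1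
    exact h1
  intro a ha b hb
  have h2 : a * u * b = (a * a₀) * d * (b₀ * b) := by rw [heq]; group
  rw [h2]
  exact le_trans hdlen (length_le_of_bothReduced cs hdL hdR _
    (mul_mem ha ha₀) _ (mul_mem hb₀ hb))

end Cosets

end

end Stmt7Aux

/-- With `W₁' = W₁Ω₁` (`Ω₁` stabilizing `S₁`) and
`W_{1,2} = W₁ ∩ W₂`: if `σ ∈ W₁'` is of minimal length in its double coset
`W_{1,2}σW_{1,2}`, then `σ` is of minimal length in its double coset `W₂σW₂`:
`ℓ(w₂σw₂') ≥ ℓ(σ)` for all `w₂, w₂' ∈ W₂`. -/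
theorem stmt7 {B : Type*} {M : CoxeterMatrix B} {W : Type*} [Group W]
    (cs : CoxeterSystem M W) {Ω : Type*} [Group Ω] (φ : Ω →* MulAut W)
    (hφ : ∀ (ρ : Ω) (v : W), cs.length (φ ρ v) = cs.length v)
    (ℓt : W ⋊[φ] Ω → ℕ) (hℓt : ∀ x, ℓt x = cs.length x.left)
    (S₁ S₂ : Set B) (W₁ W₂ : Subgroup W)
    (hW₁ : W₁ = Subgroup.closure (cs.simple '' S₁))
    (hW₂ : W₂ = Subgroup.closure (cs.simple '' S₂))
    (Ω₁ : Subgroup Ω)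
    (hΩ₁ : ∀ ρ ∈ Ω₁, ∀ i ∈ S₁, ∃ j ∈ S₁, φ ρ (cs.simple i) = cs.simple j)
    (W₁' : Subgroup (W ⋊[φ] Ω))
    (hW₁' : W₁' = Subgroup.map (inl : W →* W ⋊[φ] Ω) W₁ ⊔
        Subgroup.map (inr : Ω →* W ⋊[φ] Ω) Ω₁)
    (W₁₂ : Subgroup W) (hW₁₂ : W₁₂ = W₁ ⊓ W₂)
    (σ : W ⋊[φ] Ω) (hσ : σ ∈ W₁')
    (hmin : ∀ a ∈ W₁₂, ∀ b ∈ W₁₂, ℓt σ ≤ ℓt (inl a * σ * inl b)) :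
    ∀ w₂ ∈ W₂, ∀ w₂' ∈ W₂, ℓt σ ≤ ℓt (inl w₂ * σ * inl w₂') := by
  classical
  intro w₂ hw₂ w₂' hw₂'
  -- every `φ τ` permutes the simple reflections
  have hsimage : ∀ (τ : Ω) (i : B), ∃ j, φ τ (cs.simple i) = cs.simple j := by
    intro τ i
    have h1 : cs.length (φ τ (cs.simple i)) = 1 := by rw [hφ]; exact cs.length_simple i
    exact cs.length_eq_one_iff.mp h1
  -- `Ω₁` preserves `W₁`
  have hmapW₁ : ∀ τ ∈ Ω₁, ∀ x ∈ W₁, φ τ x ∈ W₁ := by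
    intro τ hτ x hx
    rw [hW₁] at hx ⊢
    induction hx using Subgroup.closure_induction with
    | mem y hy =>
      obtain ⟨i, hi, rfl⟩ := hy
      obtain ⟨j, hjS, hj⟩ := hΩ₁ τ hτ i hi
      rw [hj]
      exact Subgroup.subset_closure ⟨j, hjS, rfl⟩
    | one => rw [map_one]; exact one_mem _
    | mul a b _ _ iha ihb => rw [map_mul]; exact mul_mem iha ihb
    | inv a _ iha => rw [map_inv]; exact inv_mem iha
  -- unpack `σ`
  have hσmem : σ.left ∈ W₁ ∧ σ.right ∈ Ω₁ := by
    let G : Subgroup (W ⋊[φ] Ω) :=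
      { carrier := {x : W ⋊[φ] Ω | x.left ∈ W₁ ∧ x.right ∈ Ω₁}
        mul_mem' := by
          rintro x y ⟨hx1, hx2⟩ ⟨hy1, hy2⟩
          refine ⟨?_, mul_mem hx2 hy2⟩
          rw [mul_left]
          exact mul_mem hx1 (hmapW₁ x.right hx2 y.left hy1)
        one_mem' := ⟨by rw [one_left]; exact one_mem _, by rw [one_right]; exact one_mem _⟩
        inv_mem' := by
          rintro x ⟨hx1, hx2⟩
          refine ⟨?_, inv_mem hx2⟩
          rw [inv_left]
          exact hmapW₁ _ (inv_mem hx2) _ (inv_mem hx1) }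
    have hle : W₁' ≤ G := by
      rw [hW₁']
      apply sup_le
      · intro x hx
        rw [Subgroup.mem_map] at hx
        obtain ⟨n, hn, rfl⟩ := hx
        exact ⟨by rw [left_inl]; exact hn, by rw [right_inl]; exact one_mem _⟩
      · intro x hx
        rw [Subgroup.mem_map] at hx
        obtain ⟨g, hg, rfl⟩ := hx
        exact ⟨by rw [left_inr]; exact one_mem _, by rw [right_inr]; exact hg⟩
    exact hle hσ
  obtain ⟨huW₁, hρΩ₁⟩ := hσmem
  -- the image of `S₂` under the diagram automorphism induced by `σ.right`
  set K : Set B := {j | ∃ i ∈ S₂, φ σ.right (cs.simple i) = cs.simple j} with hKdef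
  have hinvρ : ∀ v : W, φ σ.right⁻¹ (φ σ.right v) = v := by
    intro v
    rw [← MulAut.mul_apply, ← map_mul, inv_mul_cancel, map_one, MulAut.one_apply]
  have hρinv : ∀ v : W, φ σ.right (φ σ.right⁻¹ v) = v := by
    intro v
    rw [← MulAut.mul_apply, ← map_mul, mul_inv_cancel, map_one, MulAut.one_apply]
  have hforW₂ : ∀ x ∈ W₂, φ σ.right x ∈ Subgroup.closure (cs.simple '' K) := by
    intro x hx
    rw [hW₂] at hx
    induction hx using Subgroup.closure_induction with
    | mem y hy =>
      obtain ⟨i, hi, rfl⟩ := hy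
      obtain ⟨j, hj⟩ := hsimage σ.right i
      rw [hj]
      exact Subgroup.subset_closure ⟨j, ⟨i, hi, hj⟩, rfl⟩
    | one => rw [map_one]; exact one_mem _
    | mul a b _ _ iha ihb => rw [map_mul]; exact mul_mem iha ihb
    | inv a _ iha => rw [map_inv]; exact inv_mem iha
  have hbackK : ∀ y ∈ Subgroup.closure (cs.simple '' K), φ σ.right⁻¹ y ∈ W₂ := by
    intro y hy
    rw [hW₂]
    induction hy using Subgroup.closure_induction with
    | mem z hz =>
      obtain ⟨j, hjK, rfl⟩ := hz
      obtain ⟨i, hiS, hij⟩ := hjK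
      rw [← hij, hinvρ]
      exact Subgroup.subset_closure ⟨i, hiS, rfl⟩
    | one => rw [map_one]; exact one_mem _
    | mul a b _ _ iha ihb => rw [map_mul]; exact mul_mem iha ihb
    | inv a _ iha => rw [map_inv]; exact inv_mem iha
  -- the minimality hypothesis, in terms of `W`
  have hmin' : ∀ a, a ∈ Subgroup.closure (cs.simple '' S₁) →
      a ∈ Subgroup.closure (cs.simple '' S₂) →
      ∀ b, b ∈ Subgroup.closure (cs.simple '' S₁) →
      b ∈ Subgroup.closure (cs.simple '' K) →
      cs.length σ.left ≤ cs.length (a * σ.left * b) := by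
    intro a haL haJ b hbL hbK
    have hb₀W₂ : φ σ.right⁻¹ b ∈ W₂ := hbackK b hbK
    have hb₀W₁ : φ σ.right⁻¹ b ∈ W₁ := hmapW₁ σ.right⁻¹ (inv_mem hρΩ₁) b (by rw [hW₁]; exact hbL)
    have hb12 : φ σ.right⁻¹ b ∈ W₁₂ := by rw [hW₁₂]; exact ⟨hb₀W₁, hb₀W₂⟩
    have ha12 : a ∈ W₁₂ := by
      rw [hW₁₂]
      exact ⟨by rw [hW₁]; exact haL, by rw [hW₂]; exact haJ⟩
    have h1 := hmin a ha12 (φ σ.right⁻¹ b) hb12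
    rw [hℓt, hℓt] at h1
    have hleft : (inl a * σ * inl (φ σ.right⁻¹ b)).left = a * σ.left * b := by
      rw [mul_left, mul_left, left_inl, left_inl, right_inl, mul_right, right_inl, one_mul,
        map_one, MulAut.one_apply, hρinv]
    rwa [hleft] at h1
  -- apply the main combinatorial theorem
  have huL : σ.left ∈ Subgroup.closure (cs.simple '' S₁) := by rw [← hW₁]; exact huW₁
  have hmain := Stmt7Aux.main_W cs S₂ K S₁ σ.left huL hmin'
  have hw₂J : w₂ ∈ Subgroup.closure (cs.simple '' S₂) := by rw [← hW₂]; exact hw₂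
  have hw₂K : φ σ.right w₂' ∈ Subgroup.closure (cs.simple '' K) := hforW₂ w₂' hw₂'
  have h2 := hmain w₂ hw₂J (φ σ.right w₂') hw₂K
  rw [hℓt, hℓt]
  have hleft2 : (inl w₂ * σ * inl w₂').left = w₂ * σ.left * φ σ.right w₂' := by
    rw [mul_left, mul_left, left_inl, left_inl, right_inl, mul_right, right_inl, one_mul,
      map_one, MulAut.one_apply]
  rwa [hleft2]
end

section
/- With notation as above: if σ ∈ W₁' is of minimal length in its W_{1,2}-double coset, then W₂ ∩ σW₂σ⁻¹ is a special (standard parabolic) subgroup of W₂. -/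
open List
open scoped Classical

namespace StmtAux

noncomputable section

variable {B : Type*} {M : CoxeterMatrix B} {W : Type*} [Group W] (cs : CoxeterSystem M W)

local prefix:100 "s" => cs.simple
local prefix:100 "π" => cs.wordProd
local prefix:100 "ℓ" => cs.length
local prefix:100 "ris" => cs.rightInvSeq
local prefix:100 "lis" => cs.leftInvSeq

/-- The building block of the parity representation. -/
noncomputable def pf (i : B) : Function.End (W × ZMod 2) :=
  fun p => (s i * p.1 * s i, p.2 + if p.1 = s i then 1 else 0)

lemma conj_simple_simple (i j : B) (x : W) :
    s i * (s j * x * s j) * s i = (s i * s j) * x * (s i * s j)⁻¹ := by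
  rw [mul_inv_rev, cs.inv_simple, cs.inv_simple]
  group

lemma conj_simple_eq_iff (j : B) (x y : W) :
    s j * x * s j = y ↔ x = s j * y * s j := by
  constructor
  · rintro rfl
    simp [mul_assoc, cs.simple_mul_simple_self, cs.simple_mul_simple_cancel_left]
  · rintro rfl
    simp [mul_assoc, cs.simple_mul_simple_self, cs.simple_mul_simple_cancel_left]

lemma simple_mul_pow (i j : B) (a : ℕ) :
    s j * (s i * s j) ^ a = ((s i * s j) ^ a)⁻¹ * s j := by
  induction a with
  | zero => simp
  | succ a ih =>
    have h1 : s j * (s i * s j) = (s i * s j)⁻¹ * s j := by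
      rw [mul_inv_rev, cs.inv_simple, cs.inv_simple, mul_assoc]
    rw [pow_succ, ← mul_assoc, ih, mul_assoc, h1, ← mul_assoc, ← mul_inv_rev, ← pow_succ', pow_succ]

lemma pf_mul_pow (i j : B) (k : ℕ) (t : W) (ε : ZMod 2) :
    ((pf cs i * pf cs j) ^ k) (t, ε) =
      ((s i * s j) ^ k * t * ((s i * s j) ^ k)⁻¹,
        ε + ∑ a ∈ Finset.range (2 * k),
          (if (s i * s j) ^ a * t = s j then (1 : ZMod 2) else 0)) := by
  induction k with
  | zero => simp [Function.End]; rfl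
  | succ k ih =>
    have hstep : ((pf cs i * pf cs j) ^ (k+1)) (t, ε)
        = (pf cs i) ((pf cs j) (((pf cs i * pf cs j) ^ k) (t, ε))) := by
      rw [pow_succ']
      rfl
    rw [hstep, ih]
    unfold pf
    simp only
    refine Prod.ext ?_ ?_
    · show s i * (s j * ((s i * s j) ^ k * t * ((s i * s j) ^ k)⁻¹) * s j) * s i = _
      rw [conj_simple_simple, pow_succ', mul_inv_rev]
      simp [mul_assoc]
    · show (ε + ∑ a ∈ Finset.range (2 * k), _) + _ + _ = _
      have h2 : 2 * (k + 1) = (2 * k) + 1 + 1 := by ring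
      rw [h2, Finset.sum_range_succ, Finset.sum_range_succ]
      have hA : ((s i * s j) ^ k * t * ((s i * s j) ^ k)⁻¹ = s j)
          ↔ ((s i * s j) ^ (2 * k) * t = s j) := by
        rw [mul_inv_eq_iff_eq_mul, simple_mul_pow, eq_inv_mul_iff_mul_eq, ← mul_assoc,
          ← pow_add, two_mul]
      have hB : (s j * ((s i * s j) ^ k * t * ((s i * s j) ^ k)⁻¹) * s j = s i)
          ↔ ((s i * s j) ^ (2 * k + 1) * t = s j) := by
        rw [conj_simple_eq_iff, mul_inv_eq_iff_eq_mul]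
        have h3 : s j * s i * s j * (s i * s j) ^ k = ((s i * s j) ^ (k + 1))⁻¹ * s j := by
          have h4 : s j * s i * s j = (s i * s j)⁻¹ * s j := by
            rw [mul_inv_rev, cs.inv_simple, cs.inv_simple]
          rw [h4, mul_assoc, simple_mul_pow, ← mul_assoc, ← mul_inv_rev, ← pow_succ]
        rw [h3, eq_inv_mul_iff_mul_eq, ← mul_assoc, ← pow_add]
        have h5 : k + 1 + k = 2 * k + 1 := by ring
        rw [h5]
      rw [if_congr hA rfl rfl, if_congr hB rfl rfl]
      ring

lemma pf_liftable : CoxeterMatrix.IsLiftable M (pf cs) := by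
  intro i j
  have hm := cs.simple_mul_simple_pow i j
  funext p
  obtain ⟨t, ε⟩ := p
  have := pf_mul_pow cs i j (M i j) t ε
  rw [this]
  show _ = (t, ε)
  refine Prod.ext ?_ ?_
  · simp [hm]
  · show ε + ∑ a ∈ Finset.range (2 * M i j), _ = ε
    have h2 : 2 * M i j = M i j + M i j := by ring
    rw [h2, Finset.sum_range_add]
    have h3 : ∀ a ∈ Finset.range (M i j),
        (if (s i * s j) ^ (M i j + a) * t = s j then (1 : ZMod 2) else 0)
        = (if (s i * s j) ^ a * t = s j then (1 : ZMod 2) else 0) := by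
      intro a _
      rw [pow_add, hm, one_mul]
    rw [Finset.sum_congr rfl h3]
    have : ∀ x : ZMod 2, x + x = 0 := by decide
    rw [this]
    ring

/-- The parity representation. -/
noncomputable def Phi : W →* Function.End (W × ZMod 2) := cs.lift ⟨pf cs, pf_liftable cs⟩

@[simp] lemma Phi_simple (i : B) : Phi cs (s i) = pf cs i :=
  cs.lift_apply_simple (pf_liftable cs) i

/-- Count modulo 2. -/
def cnt (t : W) : List W → ZMod 2
  | [] => 0
  | x :: l => (if x = t then 1 else 0) + cnt t l

lemma mem_of_cnt_eq_one {t : W} : ∀ {l : List W}, cnt t l = 1 → t ∈ l := by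
  intro l
  induction l with
  | nil => intro h; simp [cnt] at h
  | cons x l ih =>
    intro h
    by_cases hx : x = t
    · exact hx ▸ (List.mem_cons_self (a := x) (l := l))
    · rw [cnt, if_neg hx, zero_add] at h
      exact List.mem_cons_of_mem x (ih h)

lemma conj_eq_iff (a x y : W) : a * x * a⁻¹ = y ↔ x = a⁻¹ * y * a := by
  constructor
  · rintro rfl; group
  · rintro rfl; group

lemma Phi_wordProd (ω : List B) (t : W) (ε : ZMod 2) :
    Phi cs (π ω) (t, ε) = (π ω * t * (π ω)⁻¹, ε + cnt t (cs.rightInvSeq ω)) := by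
  induction ω with
  | nil =>
    rw [cs.wordProd_nil, map_one]
    show (t, ε) = _
    simp [cnt]
  | cons i ω ih =>
    have h1 : Phi cs (π (i :: ω)) (t, ε) = pf cs i (Phi cs (π ω) (t, ε)) := by
      rw [cs.wordProd_cons, map_mul, Phi_simple]; rfl
    rw [h1, ih]
    unfold pf
    refine Prod.ext ?_ ?_
    · show s i * (π ω * t * (π ω)⁻¹) * s i = π (i :: ω) * t * (π (i :: ω))⁻¹
      rw [cs.wordProd_cons, mul_inv_rev, cs.inv_simple]
      simp [mul_assoc]
    · show (ε + _) + (if π ω * t * (π ω)⁻¹ = s i then 1 else 0) = ε + _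
      have h2 : cs.rightInvSeq (i :: ω) = ((π ω)⁻¹ * s i * π ω) :: cs.rightInvSeq ω := rfl
      rw [h2]
      simp only [cnt]
      have h3 : ((π ω)⁻¹ * s i * π ω = t) ↔ (π ω * t * (π ω)⁻¹ = s i) := by
        rw [conj_eq_iff]
        constructor
        · intro h; rw [h]
        · intro h; rw [h]
      rw [if_congr h3 rfl rfl]
      ring

/-- The parity cocycle. -/
def eta (w t : W) : ZMod 2 := (Phi cs w (t, 0)).2

lemma eta_wordProd (ω : List B) (t : W) : eta cs (π ω) t = cnt t (cs.rightInvSeq ω) := by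
  rw [eta, Phi_wordProd, zero_add]

lemma Phi_apply (w x : W) (ε : ZMod 2) :
    Phi cs w (x, ε) = (w * x * w⁻¹, ε + eta cs w x) := by
  obtain ⟨ω, rfl⟩ := cs.wordProd_surjective w
  rw [Phi_wordProd, eta_wordProd]

lemma eta_mul (a b t : W) : eta cs (a * b) t = eta cs b t + eta cs a (b * t * b⁻¹) := by
  have h1 : Phi cs (a * b) (t, 0) = Phi cs a (Phi cs b (t, 0)) := by rw [map_mul]; rfl
  rw [Phi_apply, Phi_apply, Phi_apply] at h1
  have h2 := congrArg Prod.snd h1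
  simpa using h2

lemma eta_one (t : W) : eta cs 1 t = 0 := by
  rw [eta, map_one]
  rfl

lemma eta_simple_self (i : B) : eta cs (s i) (s i) = 1 := by
  rw [eta, Phi_simple]
  unfold pf
  simp

lemma eta_refl_self (t : W) (ht : cs.IsReflection t) : eta cs t t = 1 := by
  obtain ⟨v, i, rfl⟩ := ht
  have hconj : v⁻¹ * (v * s i * v⁻¹) * v⁻¹⁻¹ = s i := by group
  have h0 : eta cs v⁻¹ (v * s i * v⁻¹) + eta cs v (s i) = 0 := by
    have h := eta_mul cs v v⁻¹ (v * s i * v⁻¹)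
    rw [mul_inv_cancel, eta_one, hconj] at h
    exact h.symm
  have h1 := eta_mul cs (v * s i) v⁻¹ (v * s i * v⁻¹)
  rw [hconj] at h1
  have h2 := eta_mul cs v (s i) (s i)
  have h3 : s i * s i * (s i)⁻¹ = s i := by group
  rw [h3, eta_simple_self] at h2
  rw [h1, h2]
  linear_combination h0

lemma exists_erase_of_eta_one {w t : W} (h : eta cs w t = 1) (ω : List B) (hω : π ω = w) :
    ∃ k, k < ω.length ∧ w * t = π (ω.eraseIdx k) := by
  subst hω
  rw [eta_wordProd] at h
  have hmem : t ∈ cs.rightInvSeq ω := mem_of_cnt_eq_one h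
  obtain ⟨k, hk, hget⟩ := List.getElem_of_mem hmem
  rw [cs.length_rightInvSeq] at hk
  refine ⟨k, hk, ?_⟩
  have hgd : (cs.rightInvSeq ω).getD k 1 = t := by
    rw [List.getD_eq_getElem _ _ (by rwa [cs.length_rightInvSeq])]
    exact hget
  rw [← hgd]
  exact cs.wordProd_mul_getD_rightInvSeq ω k

lemma length_mul_lt_of_eta_one {w t : W} (h : eta cs w t = 1) : ℓ (w * t) < ℓ w := by
  obtain ⟨ω, hlen, hw⟩ := cs.exists_reduced_word w
  obtain ⟨k, hk, heq⟩ := exists_erase_of_eta_one cs h ω hw.symm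
  calc ℓ (w * t) = ℓ (π (ω.eraseIdx k)) := by rw [heq]
    _ ≤ (ω.eraseIdx k).length := cs.length_wordProd_le _
    _ < ω.length := by rw [List.length_eraseIdx_of_lt hk]; omega
    _ = ℓ w := by rw [hw]; exact hlen.eq.symm

lemma eta_eq_one_of_length_lt {w t : W} (ht : cs.IsReflection t) (h : ℓ (w * t) < ℓ w) :
    eta cs w t = 1 := by
  by_contra h0
  have h1 : eta cs w t = 0 := by
    have : ∀ x : ZMod 2, x ≠ 1 → x = 0 := by decide
    exact this _ h0
  have h2 := eta_mul cs (w * t) t t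
  have h3 : (w * t) * t = w := by rw [mul_assoc, ht.mul_self, mul_one]
  have h4 : t * t * t⁻¹ = t := by group
  rw [h3, h4, eta_refl_self cs t ht, h1] at h2
  have h5 : eta cs (w * t) t = 1 := by
    have : ∀ x : ZMod 2, 0 = 1 + x → x = 1 := by decide
    exact this _ h2
  have h6 := length_mul_lt_of_eta_one cs h5
  rw [h3] at h6
  omega

theorem strong_exchange_right {t : W} (ht : cs.IsReflection t) (ω : List B)
    (h : ℓ (π ω * t) < ℓ (π ω)) :
    ∃ k, k < ω.length ∧ π ω * t = π (ω.eraseIdx k) :=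
  exists_erase_of_eta_one cs (eta_eq_one_of_length_lt cs ht h) ω rfl

theorem strong_exchange_left {t : W} (ht : cs.IsReflection t) (ω : List B)
    (h : ℓ (t * π ω) < ℓ (π ω)) :
    ∃ k, k < ω.length ∧ t * π ω = π (ω.eraseIdx k) := by
  have h1 : ℓ (π ω.reverse * t) < ℓ (π ω.reverse) := by
    rw [cs.wordProd_reverse]
    have h2 : (π ω)⁻¹ * t = (t * π ω)⁻¹ := by rw [mul_inv_rev, ht.inv]
    rw [h2, cs.length_inv, cs.length_inv]
    exact h
  have h3 : eta cs (π ω.reverse) t = 1 := eta_eq_one_of_length_lt cs ht h1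
  rw [eta_wordProd, cs.rightInvSeq_reverse] at h3
  have hmem : t ∈ cs.leftInvSeq ω := by
    have := mem_of_cnt_eq_one h3
    rwa [List.mem_reverse] at this
  obtain ⟨k, hk, hget⟩ := List.getElem_of_mem hmem
  rw [cs.length_leftInvSeq] at hk
  refine ⟨k, hk, ?_⟩
  have hgd : (cs.leftInvSeq ω).getD k 1 = t := by
    rw [List.getD_eq_getElem _ _ (by rwa [cs.length_leftInvSeq])]
    exact hget
  rw [← hgd]
  exact cs.getD_leftInvSeq_mul_wordProd ω k

/-- The standard parabolic subgroup. -/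
def WP (I : Set B) : Subgroup W := Subgroup.closure (cs.simple '' I)

variable {I : Set B}

lemma simple_mem_WP {i : B} (hi : i ∈ I) : s i ∈ WP cs I :=
  Subgroup.subset_closure ⟨i, hi, rfl⟩

lemma wordProd_mem_WP (ω : List B) (hω : ∀ i ∈ ω, i ∈ I) : π ω ∈ WP cs I := by
  induction ω with
  | nil => rw [cs.wordProd_nil]; exact one_mem _
  | cons i α ih =>
    rw [cs.wordProd_cons]
    exact mul_mem (simple_mem_WP cs (hω i ((List.mem_cons_self (a := i) (l := α)))))
      (ih fun j hj => hω j (List.mem_cons_of_mem i hj))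

lemma exists_word_of_mem_WP {w : W} (hw : w ∈ WP cs I) :
    ∃ ω : List B, (∀ i ∈ ω, i ∈ I) ∧ w = π ω := by
  induction hw using Subgroup.closure_induction with
  | mem x hx =>
    obtain ⟨i, hi, rfl⟩ := hx
    exact ⟨[i], by simpa using hi, by rw [cs.wordProd_singleton]⟩
  | one => exact ⟨[], by simp, by rw [cs.wordProd_nil]⟩
  | mul x y hx hy ihx ihy =>
    obtain ⟨ω₁, h₁, rfl⟩ := ihx
    obtain ⟨ω₂, h₂, rfl⟩ := ihy
    exact ⟨ω₁ ++ ω₂, by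
      intro i hi
      rcases List.mem_append.mp hi with h | h
      exacts [h₁ i h, h₂ i h], by rw [cs.wordProd_append]⟩
  | inv x hx ih =>
    obtain ⟨ω, h₁, rfl⟩ := ih
    exact ⟨ω.reverse, fun i hi => h₁ i (List.mem_reverse.mp hi), by rw [cs.wordProd_reverse]⟩

lemma exists_reduced_word_of_word : ∀ n (ω : List B), ω.length ≤ n → (∀ i ∈ ω, i ∈ I) →
    ∃ γ : List B, (∀ i ∈ γ, i ∈ I) ∧ cs.IsReduced γ ∧ π γ = π ω := by
  intro n
  induction n with
  | zero =>
    intro ω hlen _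
    have : ω = [] := List.eq_nil_of_length_eq_zero (by omega)
    subst this
    exact ⟨[], by simp, by simp [CoxeterSystem.IsReduced], rfl⟩
  | succ n ih =>
    intro ω hlen hI
    match ω with
    | [] => exact ⟨[], by simp, by simp [CoxeterSystem.IsReduced], rfl⟩
    | i :: α =>
      have hlenα : α.length ≤ n := by simpa using hlen
      have hIα : ∀ j ∈ α, j ∈ I := fun j hj => hI j (List.mem_cons_of_mem i hj)
      obtain ⟨β, hβI, hβred, hβ⟩ := ih α hlenα hIα
      rcases cs.length_simple_mul (π α) i with hup | hdown
      · refine ⟨i :: β, ?_, ?_, ?_⟩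
        · intro j hj
          rcases List.mem_cons.mp hj with h | h
          exacts [h ▸ hI i ((List.mem_cons_self (a := i) (l := α))), hβI j h]
        · show ℓ (π (i :: β)) = (i :: β).length
          rw [cs.wordProd_cons, hβ, hup, List.length_cons]
          rw [← hβ, hβred]
        · rw [cs.wordProd_cons, cs.wordProd_cons, hβ]
      · have hlt : ℓ (s i * π β) < ℓ (π β) := by rw [hβ]; omega
        obtain ⟨k, hk, heq⟩ := strong_exchange_left cs (cs.isReflection_simple i) β hlt
        have hβlen : β.length ≤ α.length := by
          have h1 : β.length = ℓ (π β) := hβred.symm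
          have h2 : ℓ (π α) ≤ α.length := cs.length_wordProd_le α
          rw [hβ] at h1
          omega
        have hlen2 : (β.eraseIdx k).length ≤ n := by
          rw [List.length_eraseIdx_of_lt hk]
          omega
        have hI2 : ∀ j ∈ β.eraseIdx k, j ∈ I := fun j hj => hβI j (List.eraseIdx_subset hj)
        obtain ⟨γ, hγI, hγred, hγ⟩ := ih (β.eraseIdx k) hlen2 hI2
        refine ⟨γ, hγI, hγred, ?_⟩
        rw [hγ, ← heq, hβ, cs.wordProd_cons]

lemma exists_reduced_word_of_mem_WP {w : W} (hw : w ∈ WP cs I) :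
    ∃ ω, (∀ i ∈ ω, i ∈ I) ∧ cs.IsReduced ω ∧ w = π ω := by
  obtain ⟨ω, hI, rfl⟩ := exists_word_of_mem_WP cs hw
  obtain ⟨γ, h1, h2, h3⟩ := exists_reduced_word_of_word cs ω.length ω le_rfl hI
  exact ⟨γ, h1, h2, h3.symm⟩

lemma exists_left_descent_of_mem_WP {w : W} (hw : w ∈ WP cs I) (hne : w ≠ 1) :
    ∃ i ∈ I, ℓ (s i * w) < ℓ w ∧ s i * w ∈ WP cs I := by
  obtain ⟨ω, hI, hred, rfl⟩ := exists_reduced_word_of_mem_WP cs hw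
  match ω with
  | [] => exact absurd (cs.wordProd_nil) hne
  | i :: α =>
    have hcancel : s i * π (i :: α) = π α := by
      rw [cs.wordProd_cons, cs.simple_mul_simple_cancel_left]
    have hα : cs.IsReduced α := by
      have := hred.drop 1
      simpa using this
    refine ⟨i, hI i ((List.mem_cons_self (a := i) (l := α))), ?_, ?_⟩
    · rw [hcancel, hα, hred]
      simp
    · rw [hcancel]
      exact wordProd_mem_WP cs α (fun j hj => hI j (List.mem_cons_of_mem i hj))

lemma exists_right_descent_of_mem_WP {w : W} (hw : w ∈ WP cs I) (hne : w ≠ 1) :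
    ∃ i ∈ I, ℓ (w * s i) < ℓ w ∧ w * s i ∈ WP cs I := by
  obtain ⟨i, hiI, hlt, hmem⟩ := exists_left_descent_of_mem_WP cs (inv_mem hw) (by simpa using hne)
  refine ⟨i, hiI, ?_, ?_⟩
  · have h1 : w * s i = (s i * w⁻¹)⁻¹ := by rw [mul_inv_rev, cs.inv_simple, inv_inv]
    rw [h1]
    rw [cs.length_inv] at hlt ⊢
    simpa using hlt
  · have h1 : w * s i = (s i * w⁻¹)⁻¹ := by rw [mul_inv_rev, cs.inv_simple, inv_inv]
    rw [h1]
    exact inv_mem hmem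

lemma ris_mem_WP (ω : List B) (hI : ∀ i ∈ ω, i ∈ I) {t : W} (ht : t ∈ cs.rightInvSeq ω) :
    t ∈ WP cs I := by
  induction ω with
  | nil => simp [CoxeterSystem.rightInvSeq] at ht
  | cons i α ih =>
    have h2 : cs.rightInvSeq (i :: α) = ((π α)⁻¹ * s i * π α) :: cs.rightInvSeq α := rfl
    rw [h2, List.mem_cons] at ht
    have hmemα : π α ∈ WP cs I :=
      wordProd_mem_WP cs α (fun j hj => hI j (List.mem_cons_of_mem i hj))
    rcases ht with h | h
    · rw [h]
      exact mul_mem (mul_mem (inv_mem hmemα) (simple_mem_WP cs (hI i ((List.mem_cons_self (a := i) (l := α)))))) hmemα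
    · exact ih (fun j hj => hI j (List.mem_cons_of_mem i hj)) h

lemma refl_mem_WP_of_right_descent {w t : W} (hw : w ∈ WP cs I) (ht : cs.IsReflection t)
    (hlt : ℓ (w * t) < ℓ w) : t ∈ WP cs I := by
  obtain ⟨ω, hI, rfl⟩ := exists_word_of_mem_WP cs hw
  have h1 : eta cs (π ω) t = 1 := eta_eq_one_of_length_lt cs ht hlt
  rw [eta_wordProd] at h1
  exact ris_mem_WP cs ω hI (mem_of_cnt_eq_one h1)

lemma refl_mem_WP_of_left_descent {w t : W} (hw : w ∈ WP cs I) (ht : cs.IsReflection t)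
    (hlt : ℓ (t * w) < ℓ w) : t ∈ WP cs I := by
  have h1 : ℓ (w⁻¹ * t) < ℓ w⁻¹ := by
    have h2 : w⁻¹ * t = (t * w)⁻¹ := by rw [mul_inv_rev, ht.inv]
    rw [h2, cs.length_inv, cs.length_inv]
    exact hlt
  exact refl_mem_WP_of_right_descent cs (inv_mem hw) ht h1

lemma length_add_of_min {d : W} (hmin : ∀ v ∈ WP cs I, ℓ d ≤ ℓ (d * v)) :
    ∀ n, ∀ v ∈ WP cs I, ℓ v ≤ n → ℓ (d * v) = ℓ d + ℓ v := by
  intro n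
  induction n with
  | zero =>
    intro v _ hle
    have h1 : v = 1 := cs.length_eq_zero_iff.mp (by omega)
    subst h1
    simp
  | succ n ih =>
    intro v hv hle
    by_cases hv1 : v = 1
    · subst hv1; simp
    obtain ⟨j, hjI, hdesc, hmem⟩ := exists_right_descent_of_mem_WP cs hv hv1
    have hvj : ℓ (v * s j) + 1 = ℓ v := by
      rcases cs.length_mul_simple v j with h | h
      · omega
      · omega
    have hd' : ℓ (d * (v * s j)) = ℓ d + ℓ (v * s j) := ih (v * s j) hmem (by omega)
    have hv'j : (v * s j) * s j = v := cs.simple_mul_simple_cancel_right j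
    rcases cs.length_mul_simple (d * (v * s j)) j with hup | hdown
    · rw [mul_assoc, hv'j] at hup
      rw [hup, hd']
      omega
    · exfalso
      rw [mul_assoc, hv'j] at hdown
      obtain ⟨δ, hδlen, hδw⟩ := cs.exists_reduced_word d
      obtain ⟨γ, hγI, hγred, hγw⟩ := exists_reduced_word_of_mem_WP cs hmem
      have hcat : π (δ ++ γ) = d * (v * s j) := by
        rw [cs.wordProd_append, ← hδw, ← hγw]
      have hlt : ℓ (π (δ ++ γ) * s j) < ℓ (π (δ ++ γ)) := by
        rw [hcat, mul_assoc, hv'j]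
        omega
      obtain ⟨k, hk, heq⟩ := strong_exchange_right cs (cs.isReflection_simple j) (δ ++ γ) hlt
      rw [hcat, mul_assoc, hv'j] at heq
      by_cases hcase : k < δ.length
      · have herase : (δ ++ γ).eraseIdx k = δ.eraseIdx k ++ γ :=
          List.eraseIdx_append_of_lt_length hcase γ
        rw [herase, cs.wordProd_append, ← hγw] at heq
        -- heq : d * v = π (δ.eraseIdx k) * (v * s j)
        have hx : (v * s j * v⁻¹) * (v * s j) = v := by
          have hy : v * s j * v⁻¹ * (v * s j) = v * (s j * s j) := by group
          rw [hy, cs.simple_mul_simple_self, mul_one]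
        have h8 : d * (v * s j * v⁻¹) * (v * s j) = π (δ.eraseIdx k) * (v * s j) := by
          rw [mul_assoc, hx, heq]
        have h9 : d * (v * s j * v⁻¹) = π (δ.eraseIdx k) := mul_right_cancel h8
        have h10 : v * s j * v⁻¹ ∈ WP cs I :=
          mul_mem (mul_mem hv (simple_mem_WP cs hjI)) (inv_mem hv)
        have h11 := hmin _ h10
        rw [h9] at h11
        have h12 : ℓ (π (δ.eraseIdx k)) ≤ (δ.eraseIdx k).length := cs.length_wordProd_le _
        have h13 : (δ.eraseIdx k).length = δ.length - 1 := List.length_eraseIdx_of_lt hcase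
        have hδ' : δ.length = ℓ d := by rw [hδw]; exact hδlen.eq.symm
        have h14 : 0 < δ.length := by omega
        omega
      · push_neg at hcase
        have herase : (δ ++ γ).eraseIdx k = δ ++ γ.eraseIdx (k - δ.length) :=
          List.eraseIdx_append_of_length_le hcase γ
        rw [herase, cs.wordProd_append, ← hδw] at heq
        -- heq : d * v = d * π (γ.eraseIdx (k - δ.length))
        have h8 : v = π (γ.eraseIdx (k - δ.length)) := mul_left_cancel heq
        have h9 : ℓ v ≤ (γ.eraseIdx (k - δ.length)).length := h8 ▸ cs.length_wordProd_le _
        have h10 : k - δ.length < γ.length := by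
          rw [List.length_append] at hk
          omega
        have h11 : (γ.eraseIdx (k - δ.length)).length = γ.length - 1 :=
          List.length_eraseIdx_of_lt h10
        have h12 : γ.length = ℓ (v * s j) := by rw [hγred.symm, hγw]
        omega

lemma length_add_of_no_right_descent {d : W} (h : ∀ j ∈ I, ¬cs.IsRightDescent d j) :
    ∀ v ∈ WP cs I, ℓ (d * v) = ℓ d + ℓ v := by
  have hex : ∃ m, ∃ v, v ∈ WP cs I ∧ ℓ (d * v) = m := ⟨ℓ (d * 1), 1, one_mem _, rfl⟩
  obtain ⟨v₀, hv₀, hv₀len⟩ := Nat.find_spec hex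
  have hminspec : ∀ v ∈ WP cs I, ℓ (d * v₀) ≤ ℓ (d * v) := fun v hv => by
    rw [hv₀len]; exact Nat.find_le ⟨v, hv, rfl⟩
  have hmin0 : ∀ v ∈ WP cs I, ℓ (d * v₀) ≤ ℓ (d * v₀ * v) := fun v hv => by
    rw [mul_assoc]; exact hminspec _ (mul_mem hv₀ hv)
  have hadd : ∀ v ∈ WP cs I, ℓ (d * v₀ * v) = ℓ (d * v₀) + ℓ v := fun v hv =>
    length_add_of_min cs hmin0 (ℓ v) v hv le_rfl
  have hv₀1 : v₀ = 1 := by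
    by_contra h1
    have h1' : v₀⁻¹ ≠ 1 := by simpa using h1
    obtain ⟨j, hjI, hdesc, hmem⟩ := exists_right_descent_of_mem_WP cs (inv_mem hv₀) h1'
    have h3 : ℓ d = ℓ (d * v₀) + ℓ v₀⁻¹ := by
      have h6 := hadd v₀⁻¹ (inv_mem hv₀)
      rw [mul_assoc, mul_inv_cancel, mul_one] at h6
      exact h6
    have h4 : ℓ (d * s j) = ℓ (d * v₀) + ℓ (v₀⁻¹ * s j) := by
      have h6 := hadd (v₀⁻¹ * s j) hmem
      have h5 : d * v₀ * (v₀⁻¹ * s j) = d * s j := by group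
      rw [h5] at h6
      exact h6
    have h7 : cs.IsRightDescent d j := by
      show ℓ (d * s j) < ℓ d
      omega
    exact h j hjI h7
  subst hv₀1
  intro v hv
  have h6 := hadd v hv
  simpa using h6

lemma length_add_of_no_left_descent {d : W} (h : ∀ i ∈ I, ¬cs.IsLeftDescent d i) :
    ∀ a ∈ WP cs I, ℓ (a * d) = ℓ a + ℓ d := by
  intro a ha
  have h1 : ∀ j ∈ I, ¬cs.IsRightDescent d⁻¹ j := fun j hj hr =>
    h j hj ((cs.isRightDescent_inv_iff).mp hr)
  have h2 := length_add_of_no_right_descent cs h1 a⁻¹ (inv_mem ha)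
  have h3 : a * d = (d⁻¹ * a⁻¹)⁻¹ := by group
  rw [h3, cs.length_inv, h2, cs.length_inv, cs.length_inv]
  omega

/-- The subgroup of elements whose `d`-conjugate lies in `H`. -/
def conjIn (d : W) (H : Subgroup W) : Subgroup W where
  carrier := {x | d⁻¹ * x * d ∈ H}
  one_mem' := by
    show d⁻¹ * 1 * d ∈ H
    rw [mul_one, inv_mul_cancel]
    exact one_mem H
  mul_mem' := by
    intro a b ha hb
    show d⁻¹ * (a * b) * d ∈ H
    have h : d⁻¹ * (a * b) * d = (d⁻¹ * a * d) * (d⁻¹ * b * d) := by group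
    rw [h]
    exact mul_mem ha hb
  inv_mem' := by
    intro a ha
    show d⁻¹ * a⁻¹ * d ∈ H
    have h : d⁻¹ * a⁻¹ * d = (d⁻¹ * a * d)⁻¹ := by group
    rw [h]
    exact inv_mem ha

@[simp] lemma mem_conjIn {d x : W} {H : Subgroup W} :
    x ∈ conjIn d H ↔ d⁻¹ * x * d ∈ H := Iff.rfl

lemma kilmoyer_forward {I J : Set B} {d : W}
    (h1 : ∀ i ∈ I, ¬cs.IsLeftDescent d i) (h2 : ∀ j ∈ J, ¬cs.IsRightDescent d j) :
    ∀ n x, ℓ x ≤ n → x ∈ WP cs I → d⁻¹ * x * d ∈ WP cs J →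
      x ∈ WP cs {i | i ∈ I ∧ d⁻¹ * s i * d ∈ WP cs J} := by
  intro n
  induction n with
  | zero =>
    intro x hle _ _
    have h0 : x = 1 := cs.length_eq_zero_iff.mp (by omega)
    subst h0
    exact one_mem _
  | succ n ih =>
    intro x hle hxI hxJ
    by_cases hx1 : x = 1
    · subst hx1; exact one_mem _
    obtain ⟨i, hiI, hdesc, hmemI⟩ := exists_left_descent_of_mem_WP cs hxI hx1
    set v := d⁻¹ * x * d with hvdef
    have hxd : x * d = d * v := by rw [hvdef]; group
    have hLv : ℓ (d * v) = ℓ d + ℓ v := length_add_of_no_right_descent cs h2 v hxJ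
    have hLx : ℓ (x * d) = ℓ x + ℓ d := length_add_of_no_left_descent cs h1 x hxI
    have hLsx : ℓ ((s i * x) * d) = ℓ (s i * x) + ℓ d :=
      length_add_of_no_left_descent cs h1 _ hmemI
    obtain ⟨δ, hδlen, hδw⟩ := cs.exists_reduced_word d
    obtain ⟨γ, hγJ, hγred, hγw⟩ := exists_reduced_word_of_mem_WP cs hxJ
    have hcat : π (δ ++ γ) = x * d := by
      rw [cs.wordProd_append, ← hδw, ← hγw, hxd]
    have hlt : ℓ (s i * π (δ ++ γ)) < ℓ (π (δ ++ γ)) := by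
      rw [hcat]
      have : ℓ (s i * (x * d)) = ℓ (s i * x) + ℓ d := by rw [← mul_assoc]; exact hLsx
      omega
    obtain ⟨k, hk, heq⟩ := strong_exchange_left cs (cs.isReflection_simple i) (δ ++ γ) hlt
    by_cases hcase : k < δ.length
    · exfalso
      rw [List.eraseIdx_append_of_lt_length hcase, cs.wordProd_append, cs.wordProd_append,
        ← hδw, ← hγw, ← mul_assoc] at heq
      -- heq : s i * d * v = π (δ.eraseIdx k) * v
      have h5 : s i * d = π (δ.eraseIdx k) := mul_right_cancel heq
      have h6 : ℓ (s i * d) ≤ (δ.eraseIdx k).length := h5 ▸ cs.length_wordProd_le _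
      have h7 : (δ.eraseIdx k).length = δ.length - 1 := List.length_eraseIdx_of_lt hcase
      have h8 : cs.IsLeftDescent d i := by
        show ℓ (s i * d) < ℓ d
        have hδ' : δ.length = ℓ d := by rw [hδw]; exact hδlen.eq.symm
        omega
      exact h1 i hiI h8
    · push_neg at hcase
      rw [List.eraseIdx_append_of_length_le hcase, cs.wordProd_append, cs.wordProd_append,
        ← hδw, ← hγw] at heq
      -- heq : s i * (d * v) = d * π (γ.eraseIdx (k - δ.length))
      have hconj : d⁻¹ * s i * d = π (γ.eraseIdx (k - δ.length)) * v⁻¹ := by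
        have h5 : d⁻¹ * (s i * (d * v)) * v⁻¹ = d⁻¹ * (d * π (γ.eraseIdx (k - δ.length))) * v⁻¹ := by
          rw [heq]
        have h6 : d⁻¹ * (s i * (d * v)) * v⁻¹ = d⁻¹ * s i * d := by group
        have h7 : d⁻¹ * (d * π (γ.eraseIdx (k - δ.length))) * v⁻¹
            = π (γ.eraseIdx (k - δ.length)) * v⁻¹ := by group
        rw [h6, h7] at h5
        exact h5
      have hiJ : d⁻¹ * s i * d ∈ WP cs J := by
        rw [hconj]
        exact mul_mem
          (wordProd_mem_WP cs _ (fun j hj => hγJ j (List.eraseIdx_subset hj)))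
          (inv_mem hxJ)
      have hsxJ : d⁻¹ * (s i * x) * d ∈ WP cs J := by
        have h5 : d⁻¹ * (s i * x) * d = (d⁻¹ * s i * d) * (d⁻¹ * x * d) := by group
        rw [h5]
        exact mul_mem hiJ hxJ
      have hrec := ih (s i * x) (by omega) hmemI hsxJ
      have hxeq : x = s i * (s i * x) := (cs.simple_mul_simple_cancel_left i).symm
      rw [hxeq]
      exact mul_mem (simple_mem_WP cs ⟨hiI, hiJ⟩) hrec

theorem kilmoyer {I J : Set B} {d : W}
    (h1 : ∀ i ∈ I, ¬cs.IsLeftDescent d i) (h2 : ∀ j ∈ J, ¬cs.IsRightDescent d j) :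
    WP cs I ⊓ conjIn d (WP cs J) = WP cs {i | i ∈ I ∧ d⁻¹ * s i * d ∈ WP cs J} := by
  apply _root_.le_antisymm
  · rintro x ⟨hxI, hxJ⟩
    exact kilmoyer_forward cs h1 h2 (ℓ x) x le_rfl hxI hxJ
  · rw [WP]
    apply (Subgroup.closure_le _).mpr
    rintro _ ⟨i, ⟨hiI, hiJ⟩, rfl⟩
    exact ⟨simple_mem_WP cs hiI, hiJ⟩

end

end StmtAux
open SemidirectProduct

/-- With `W₁' = W₁Ω₁` (`Ω₁` stabilizing `S₁`) and
`W_{1,2} = W₁ ∩ W₂`: if `σ ∈ W₁'` is of minimal length in its double coset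
`W_{1,2}σW_{1,2}`, then `W₂ ∩ σW₂σ⁻¹` is a standard parabolic (special)
subgroup of `W₂`. -/
theorem stmt8 {B : Type*} {M : CoxeterMatrix B} {W : Type*} [Group W]
    (cs : CoxeterSystem M W) {Ω : Type*} [Group Ω] (φ : Ω →* MulAut W)
    (hφ : ∀ (ρ : Ω) (v : W), cs.length (φ ρ v) = cs.length v)
    (ℓt : W ⋊[φ] Ω → ℕ) (hℓt : ∀ x, ℓt x = cs.length x.left)
    (S₁ S₂ : Set B) (W₁ W₂ : Subgroup W)
    (hW₁ : W₁ = Subgroup.closure (cs.simple '' S₁))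
    (hW₂ : W₂ = Subgroup.closure (cs.simple '' S₂))
    (Ω₁ : Subgroup Ω)
    (hΩ₁ : ∀ ρ ∈ Ω₁, ∀ i ∈ S₁, ∃ j ∈ S₁, φ ρ (cs.simple i) = cs.simple j)
    (W₁' : Subgroup (W ⋊[φ] Ω))
    (hW₁' : W₁' = Subgroup.map (inl : W →* W ⋊[φ] Ω) W₁ ⊔
        Subgroup.map (inr : Ω →* W ⋊[φ] Ω) Ω₁)
    (W₁₂ : Subgroup W) (hW₁₂ : W₁₂ = W₁ ⊓ W₂)
    (σ : W ⋊[φ] Ω) (hσ : σ ∈ W₁')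
    (hmin : ∀ a ∈ W₁₂, ∀ b ∈ W₁₂, ℓt σ ≤ ℓt (inl a * σ * inl b)) :
    ∃ T ⊆ S₂,
      W₂ ⊓ Subgroup.comap (inl : W →* W ⋊[φ] Ω)
          (Subgroup.map (MulAut.conj σ).toMonoidHom
            (Subgroup.map (inl : W →* W ⋊[φ] Ω) W₂))
        = Subgroup.closure (cs.simple '' T) := by
  classical
  -- Ω₁ stabilizes W₁
  have hstab : ∀ r ∈ Ω₁, ∀ w ∈ W₁, φ r w ∈ W₁ := by
    intro r hr w hw
    rw [hW₁] at hw ⊢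
    induction hw using Subgroup.closure_induction with
    | mem x hx =>
      obtain ⟨i, hi, rfl⟩ := hx
      obtain ⟨j, hjS₁, hj⟩ := hΩ₁ r hr i hi
      rw [hj]
      exact Subgroup.subset_closure ⟨j, hjS₁, rfl⟩
    | one => rw [map_one]; exact one_mem _
    | mul x y _ _ ihx ihy => rw [map_mul]; exact mul_mem ihx ihy
    | inv x _ ihx => rw [map_inv]; exact inv_mem ihx
  -- decompose σ
  have hdecomp : σ.left ∈ W₁ ∧ σ.right ∈ Ω₁ := by
    let P : Subgroup (W ⋊[φ] Ω) :=
      { carrier := {x | x.left ∈ W₁ ∧ x.right ∈ Ω₁}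
        one_mem' := ⟨by rw [one_left]; exact one_mem _, by rw [one_right]; exact one_mem _⟩
        mul_mem' := by
          rintro a b ⟨ha1, ha2⟩ ⟨hb1, hb2⟩
          exact ⟨by rw [mul_left]; exact mul_mem ha1 (hstab a.right ha2 b.left hb1),
            by rw [mul_right]; exact mul_mem ha2 hb2⟩
        inv_mem' := by
          rintro a ⟨ha1, ha2⟩
          exact ⟨by rw [inv_left]; exact hstab a.right⁻¹ (inv_mem ha2) a.left⁻¹ (inv_mem ha1),
            by rw [inv_right]; exact inv_mem ha2⟩ }
    have hP : W₁' ≤ P := by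
      rw [hW₁']
      apply sup_le
      · rintro _ ⟨w, hw, rfl⟩
        exact ⟨by rw [left_inl]; exact hw, by rw [right_inl]; exact one_mem _⟩
      · rintro _ ⟨r, hr, rfl⟩
        exact ⟨by rw [left_inr]; exact one_mem _, by rw [right_inr]; exact hr⟩
    exact hP hσ
  obtain ⟨huW₁, hρΩ₁⟩ := hdecomp
  -- the permutation of simple reflections induced by φ σ.right
  have hτex : ∀ i : B, ∃ j : B, φ σ.right (cs.simple i) = cs.simple j := by
    intro i
    have h1 : cs.length (φ σ.right (cs.simple i)) = 1 := by
      rw [hφ, cs.length_simple]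
    obtain ⟨j, hj⟩ := cs.length_eq_one_iff.mp h1
    exact ⟨j, hj⟩
  choose τ hτ using hτex
  have hinvφ : ∀ x : W, φ σ.right⁻¹ (φ σ.right x) = x := by
    intro x
    rw [map_inv, MulAut.inv_def, MulEquiv.symm_apply_apply]
  -- image of W₂ under φ σ.right
  have hmapW₂ : Subgroup.map (φ σ.right).toMonoidHom W₂
      = Subgroup.closure (cs.simple '' (τ '' S₂)) := by
    rw [hW₂, MonoidHom.map_closure]
    congr 1
    rw [Set.image_image, Set.image_image]
    exact Set.image_congr fun i _ => hτ i
  -- membership in the conjugated subgroup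
  have hconjel : ∀ w : W, σ * inl w * σ⁻¹ = inl (σ.left * φ σ.right w * σ.left⁻¹) := by
    intro w
    ext
    · simp [mul_assoc, map_inv, MulAut.inv_def]
    · simp
  have hCmem : ∀ x : W,
      (x ∈ Subgroup.comap (inl : W →* W ⋊[φ] Ω)
        (Subgroup.map (MulAut.conj σ).toMonoidHom
          (Subgroup.map (inl : W →* W ⋊[φ] Ω) W₂)))
      ↔ σ.left⁻¹ * x * σ.left ∈ Subgroup.map (φ σ.right).toMonoidHom W₂ := by
    intro x
    rw [Subgroup.mem_comap, Subgroup.mem_map, Subgroup.mem_map]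
    constructor
    · rintro ⟨y, ⟨w, hw, rfl⟩, hx⟩
      simp only [MulEquiv.coe_toMonoidHom, MulAut.conj_apply] at hx
      rw [hconjel, inl_inj] at hx
      refine ⟨w, hw, ?_⟩
      simp only [MulEquiv.coe_toMonoidHom]
      rw [← hx]
      group
    · rintro ⟨w, hw, hweq⟩
      simp only [MulEquiv.coe_toMonoidHom] at hweq
      refine ⟨inl w, ⟨w, hw, rfl⟩, ?_⟩
      simp only [MulEquiv.coe_toMonoidHom, MulAut.conj_apply]
      rw [hconjel, inl_inj, hweq]
      group
  -- minimality facts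
  have hUmem : σ.left ∈ StmtAux.WP cs S₁ := by
    have h0 : σ.left ∈ Subgroup.closure (cs.simple '' S₁) := hW₁ ▸ huW₁
    exact h0
  have hm1 : ∀ i ∈ S₂, ¬cs.IsLeftDescent σ.left i := by
    intro i hi hdesc
    have hs1 : cs.simple i ∈ StmtAux.WP cs S₁ :=
      StmtAux.refl_mem_WP_of_left_descent cs hUmem (cs.isReflection_simple i) hdesc
    have hs12 : cs.simple i ∈ W₁₂ := by
      rw [hW₁₂]
      refine Subgroup.mem_inf.mpr ⟨?_, ?_⟩
      · rw [hW₁]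
        exact hs1
      · rw [hW₂]
        exact StmtAux.simple_mem_WP cs hi
    have hmm := hmin (cs.simple i) hs12 1 (one_mem _)
    simp only [hℓt, mul_left, mul_right, left_inl, right_inl, map_one, MulAut.one_apply,
      one_mul, mul_one] at hmm
    exact absurd hmm (Nat.not_le.mpr hdesc)
  have hm2 : ∀ j ∈ τ '' S₂, ¬cs.IsRightDescent σ.left j := by
    rintro _ ⟨j, hj, rfl⟩ hdesc
    have hs1 : cs.simple (τ j) ∈ StmtAux.WP cs S₁ :=
      StmtAux.refl_mem_WP_of_right_descent cs hUmem (cs.isReflection_simple (τ j)) hdesc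
    have hsj : cs.simple j ∈ W₁ := by
      have h1 : φ σ.right⁻¹ (cs.simple (τ j)) = cs.simple j := by
        rw [← hτ j, hinvφ]
      rw [← h1]
      apply hstab σ.right⁻¹ (inv_mem hρΩ₁)
      rw [hW₁]
      exact hs1
    have hs12 : cs.simple j ∈ W₁₂ := by
      rw [hW₁₂]
      refine Subgroup.mem_inf.mpr ⟨hsj, ?_⟩
      rw [hW₂]
      exact StmtAux.simple_mem_WP cs hj
    have hmm := hmin 1 (one_mem _) (cs.simple j) hs12
    simp only [hℓt, mul_left, mul_right, left_inl, right_inl, map_one, MulAut.one_apply,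
      one_mul, mul_one] at hmm
    rw [hτ j] at hmm
    exact absurd hmm (Nat.not_le.mpr hdesc)
  -- Kilmoyer's theorem
  have hkil := StmtAux.kilmoyer cs (I := S₂) (J := τ '' S₂) (d := σ.left) hm1 hm2
  refine ⟨{i | i ∈ S₂ ∧ σ.left⁻¹ * cs.simple i * σ.left ∈ StmtAux.WP cs (τ '' S₂)},
    fun i hi => hi.1, ?_⟩
  have hC : Subgroup.comap (inl : W →* W ⋊[φ] Ω)
        (Subgroup.map (MulAut.conj σ).toMonoidHom
          (Subgroup.map (inl : W →* W ⋊[φ] Ω) W₂))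
      = StmtAux.conjIn σ.left (StmtAux.WP cs (τ '' S₂)) := by
    ext x
    rw [hCmem x, StmtAux.mem_conjIn]
    have : StmtAux.WP cs (τ '' S₂) = Subgroup.map (φ σ.right).toMonoidHom W₂ := by
      rw [hmapW₂]; rfl
    rw [this]
  rw [hC, hW₂]
  exact hkil
end

section
/- In the extended affine Weyl group of type Ã₃ with simple reflections s₀, s₁, s₂, s₃ (indices mod 4, Dynkin diagram a 4-cycle) and Ω = ⟨ω⟩ ≅ C₂ acting by s₀ ↔ s₂, s₁ ↔ s₃: setting W₂' = ⟨s₀, s₂, ω⟩ and W₁ = ⟨s₁, s₃⟩, one has W₂' ∩ W₁ = {1}, yet s₁ and s₃ are distinct elements of W₁ lying in the same W₂'-double coset, namely s₃ = ωs₁ω ∈ W₂'s₁W₂'. Hence the uniqueness of double coset representatives fails when W₂ is allowed to contain a nontrivial subgroup of Ω. -/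
open SemidirectProduct Pointwise

/-- The "block" map `ZMod 4 → Bool` for the partition `{{0,1},{2,3}}`. -/
private def qb : ZMod 4 → Bool := fun a => decide (a = 2 ∨ a = 3)

/-- The pair (rotation by 2, flip of blocks). -/
private def tP : Equiv.Perm (ZMod 4) × Equiv.Perm Bool :=
  (Equiv.addLeft 2, Equiv.swap false true)

/-- Subgroup of pairs `(σ, τ)` such that `σ` permutes the blocks of the partition
`{{0,1},{2,3}}` according to `τ`. -/
private def Hsub : Subgroup (Equiv.Perm (ZMod 4) × Equiv.Perm Bool) where
  carrier := {p | ∀ a : ZMod 4, qb (p.1 a) = p.2 (qb a)}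
  one_mem' := fun _ => rfl
  mul_mem' := by
    intro x y hx hy a
    show qb (x.1 (y.1 a)) = x.2 (y.2 (qb a))
    rw [← hy a, ← hx (y.1 a)]
  inv_mem' := by
    intro x hx a
    show qb (x.1⁻¹ a) = x.2⁻¹ (qb a)
    have h := hx (x.1⁻¹ a)
    rw [Equiv.Perm.coe_inv, Equiv.apply_symm_apply] at h
    rw [h]; simp only [Equiv.Perm.coe_inv, Equiv.symm_apply_apply]

private lemma mem_Hsub {p : Equiv.Perm (ZMod 4) × Equiv.Perm Bool}
    (h : ∀ a : ZMod 4, qb (p.1 a) = p.2 (qb a)) : p ∈ Hsub := h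

private lemma Hsub_spec {p : Equiv.Perm (ZMod 4) × Equiv.Perm Bool}
    (h : p ∈ Hsub) : ∀ a : ZMod 4, qb (p.1 a) = p.2 (qb a) := h

/-- In the extended affine Weyl group of type `Ã₃` (simple
reflections `s₀,s₁,s₂,s₃` indexed by `ZMod 4`, diagram a 4-cycle) with
`Ω = ⟨ω⟩ ≅ C₂` acting by `s₀ ↔ s₂`, `s₁ ↔ s₃`: for `W₂' = ⟨s₀, s₂, ω⟩` and
`W₁ = ⟨s₁, s₃⟩` one has `s₃ = ωs₁ω`, `s₁ ≠ s₃`, `W₂' ∩ W₁ = 1`, and yet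
`s₃ ∈ W₂' s₁ W₂'`; so uniqueness of double coset representatives fails when
`W₂'` contains a nontrivial subgroup of `Ω`. -/
theorem stmt10 {M : CoxeterMatrix (ZMod 4)}
    (hM : ∀ i j : ZMod 4, M.M i j =
      if i = j then 1 else if j = i + 1 ∨ i = j + 1 then 3 else 2)
    {W : Type*} [Group W] (cs : CoxeterSystem M W)
    {Ω : Type*} [Group Ω] (ω : Ω) (hΩ : ∀ x : Ω, x = 1 ∨ x = ω)
    (hω2 : ω * ω = 1)
    (φ : Ω →* MulAut W)
    (hω : ∀ i : ZMod 4, φ ω (cs.simple i) = cs.simple (i + 2))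
    (W₂' W₁ : Subgroup (W ⋊[φ] Ω))
    (hW₂' : W₂' = Subgroup.closure {inl (cs.simple 0), inl (cs.simple 2), inr ω})
    (hW₁ : W₁ = Subgroup.closure {inl (cs.simple 1), inl (cs.simple 3)}) :
    (inl (cs.simple 3) : W ⋊[φ] Ω) = inr ω * inl (cs.simple 1) * inr ω ∧
    (inl (cs.simple 1) : W ⋊[φ] Ω) ≠ inl (cs.simple 3) ∧
    W₂' ⊓ W₁ = ⊥ ∧
    (inl (cs.simple 3) : W ⋊[φ] Ω) ∈
      (W₂' : Set (W ⋊[φ] Ω)) * ({inl (cs.simple 1)} : Set (W ⋊[φ] Ω)) * (W₂' : Set (W ⋊[φ] Ω)) := by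
  classical
  -- the lifted homomorphism to permutations of `ZMod 4`
  have hlift : M.IsLiftable (fun i : ZMod 4 => Equiv.swap i (i + 1)) := by
    intro i j
    have key : ∀ i j : ZMod 4,
        (Equiv.swap i (i + 1) * Equiv.swap j (j + 1)) ^
          (if i = j then 1 else if j = i + 1 ∨ i = j + 1 then 3 else 2) = 1 := by decide
    have h := key i j
    rw [← hM i j] at h
    exact h
  obtain ⟨F1, hF1s⟩ : ∃ F1 : W →* Equiv.Perm (ZMod 4) × Equiv.Perm Bool,
      ∀ i : ZMod 4, F1 (cs.simple i) = (Equiv.swap i (i + 1), 1) := by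
    refine ⟨(cs.lift ⟨fun i => Equiv.swap i (i + 1), hlift⟩).prod 1, fun i => ?_⟩
    rw [MonoidHom.prod_apply, cs.lift_apply_simple hlift i]
    rfl
  -- ω is nontrivial
  have hωne : ω ≠ 1 := by
    intro h
    have h1 := hω 1
    rw [h, map_one, MulAut.one_apply] at h1
    have h2 := congrArg F1 h1
    rw [hF1s 1, show ((1 : ZMod 4) + 2) = 3 from by decide, hF1s 3] at h2
    exact absurd h2 (by decide)
  have hinv : ω⁻¹ = ω := by
    rw [inv_eq_of_mul_eq_one_right hω2]
  -- goal 1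
  have g1 : (inl (cs.simple 3) : W ⋊[φ] Ω) = inr ω * inl (cs.simple 1) * inr ω := by
    have h := inl_aut (φ := φ) ω (cs.simple 1)
    rw [hω 1, hinv, show ((1 : ZMod 4) + 2) = 3 from by decide] at h
    exact h
  -- goal 2
  have g2 : (inl (cs.simple 1) : W ⋊[φ] Ω) ≠ inl (cs.simple 3) := by
    intro h
    have h2 := congrArg F1 (inl_injective h)
    rw [hF1s 1, hF1s 3] at h2
    exact absurd h2 (by decide)
  -- the homomorphism on Ω
  have hTP : tP * tP = 1 := by decide
  obtain ⟨F2, hF2ω⟩ : ∃ F2 : Ω →* Equiv.Perm (ZMod 4) × Equiv.Perm Bool, F2 ω = tP := by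
    refine ⟨{ toFun := fun x => if x = 1 then 1 else tP
              map_one' := if_pos rfl
              map_mul' := ?_ }, if_neg hωne⟩
    intro x y
    rcases hΩ x with hx | hx <;> rcases hΩ y with hy | hy <;> subst hx <;> subst hy
    · simp
    · simp [hωne]
    · simp [hωne]
    · simp [hω2, hωne, hTP]
  -- compatibility and the lifted homomorphism Φ on the semidirect product
  have hconj : ∀ i : ZMod 4, ((Equiv.swap (i + 2) (i + 2 + 1) : Equiv.Perm (ZMod 4)),
      (1 : Equiv.Perm Bool)) = tP * (Equiv.swap i (i + 1), 1) * tP⁻¹ := by decide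
  have hcompat : ∀ g : Ω, F1.comp (φ g).toMonoidHom
      = (MulAut.conj (F2 g)).toMonoidHom.comp F1 := by
    intro g
    rcases hΩ g with hg | hg <;> subst hg
    · apply cs.ext_simple
      intro i
      simp
    · apply cs.ext_simple
      intro i
      simp only [MonoidHom.comp_apply, MulEquiv.coe_toMonoidHom, MulAut.conj_apply]
      rw [hω i, hF1s (i + 2), hF1s i, hF2ω]
      exact hconj i
  obtain ⟨Φ, hΦinl, hΦinr⟩ : ∃ Φ : W ⋊[φ] Ω →* Equiv.Perm (ZMod 4) × Equiv.Perm Bool,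
      (∀ n : W, Φ (inl n) = F1 n) ∧ (∀ g : Ω, Φ (inr g) = F2 g) :=
    ⟨SemidirectProduct.lift F1 F2 hcompat, fun n => by simp, fun g => by simp⟩
  -- W₂' maps into Hsub
  have hW2H : ∀ x ∈ W₂', Φ x ∈ Hsub := by
    intro x hx
    rw [hW₂'] at hx
    have hle : Subgroup.closure {inl (cs.simple 0), inl (cs.simple 2), inr ω}
        ≤ Hsub.comap Φ := by
      rw [Subgroup.closure_le]
      intro y hy
      simp only [Set.mem_insert_iff, Set.mem_singleton_iff] at hy
      simp only [SetLike.mem_coe, Subgroup.mem_comap]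
      rcases hy with rfl | rfl | rfl
      · rw [hΦinl, hF1s 0]; exact mem_Hsub (by decide)
      · rw [hΦinl, hF1s 2]; exact mem_Hsub (by decide)
      · rw [hΦinr, hF2ω]; exact mem_Hsub (by decide)
    exact hle hx
  -- relations in W₁
  have ha2 : (inl (cs.simple 1) : W ⋊[φ] Ω) * inl (cs.simple 1) = 1 := by
    rw [← map_mul, cs.simple_mul_simple_self 1, map_one]
  have hb2 : (inl (cs.simple 3) : W ⋊[φ] Ω) * inl (cs.simple 3) = 1 := by
    rw [← map_mul, cs.simple_mul_simple_self 3, map_one]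
  have hM13 : M.M 1 3 = 2 := by rw [hM 1 3]; decide
  have hpow := cs.simple_mul_simple_pow 1 3
  rw [hM13, pow_two] at hpow
  have hx13 : cs.simple 1 * cs.simple 3 = (cs.simple 1 * cs.simple 3)⁻¹ :=
    eq_inv_of_mul_eq_one_left hpow
  have hcomm : cs.simple 1 * cs.simple 3 = cs.simple 3 * cs.simple 1 := by
    rwa [mul_inv_rev, cs.inv_simple, cs.inv_simple] at hx13
  have hab : (inl (cs.simple 1) : W ⋊[φ] Ω) * inl (cs.simple 3)
      = inl (cs.simple 3) * inl (cs.simple 1) := by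
    rw [← map_mul, ← map_mul, hcomm]
  have habab : ((inl (cs.simple 1) : W ⋊[φ] Ω) * inl (cs.simple 3))
      * (inl (cs.simple 1) * inl (cs.simple 3)) = 1 := by
    rw [mul_assoc, hab, ← mul_assoc (inl (cs.simple 3)) (inl (cs.simple 3)), hb2, one_mul, ha2]
  -- enumeration of W₁
  have hW1mem : ∀ x ∈ W₁, x = 1 ∨ x = inl (cs.simple 1) ∨ x = inl (cs.simple 3) ∨
      x = inl (cs.simple 1) * inl (cs.simple 3) := by
    intro x hx
    rw [hW₁] at hx
    induction hx using Subgroup.closure_induction with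
    | mem y hy =>
      simp only [Set.mem_insert_iff, Set.mem_singleton_iff] at hy
      rcases hy with rfl | rfl
      · exact Or.inr (Or.inl rfl)
      · exact Or.inr (Or.inr (Or.inl rfl))
    | one => exact Or.inl rfl
    | mul u v hu' hv' hu hv =>
      rcases hu with rfl | rfl | rfl | rfl <;> rcases hv with rfl | rfl | rfl | rfl
      · exact Or.inl (one_mul 1)
      · exact Or.inr (Or.inl (one_mul _))
      · exact Or.inr (Or.inr (Or.inl (one_mul _)))
      · exact Or.inr (Or.inr (Or.inr (one_mul _)))
      · exact Or.inr (Or.inl (mul_one _))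
      · exact Or.inl ha2
      · exact Or.inr (Or.inr (Or.inr rfl))
      · refine Or.inr (Or.inr (Or.inl ?_)); rw [← mul_assoc, ha2, one_mul]
      · exact Or.inr (Or.inr (Or.inl (mul_one _)))
      · exact Or.inr (Or.inr (Or.inr hab.symm))
      · exact Or.inl hb2
      · refine Or.inr (Or.inl ?_); rw [hab, ← mul_assoc, hb2, one_mul]
      · exact Or.inr (Or.inr (Or.inr (mul_one _)))
      · refine Or.inr (Or.inr (Or.inl ?_)); rw [hab, mul_assoc, ha2, mul_one]
      · refine Or.inr (Or.inl ?_); rw [mul_assoc, hb2, mul_one]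
      · exact Or.inl habab
    | inv u hu' hu =>
      rcases hu with rfl | rfl | rfl | rfl
      · exact Or.inl inv_one
      · exact Or.inr (Or.inl (inv_eq_of_mul_eq_one_right ha2))
      · exact Or.inr (Or.inr (Or.inl (inv_eq_of_mul_eq_one_right hb2)))
      · exact Or.inr (Or.inr (Or.inr (inv_eq_of_mul_eq_one_right habab)))
  -- values of Φ on W₁
  have hΦ1 : Φ (inl (cs.simple 1)) = ((Equiv.swap (1 : ZMod 4) (1 + 1) : Equiv.Perm (ZMod 4)), 1) := by
    rw [hΦinl, hF1s 1]
  have hΦ3 : Φ (inl (cs.simple 3)) = ((Equiv.swap (3 : ZMod 4) (3 + 1) : Equiv.Perm (ZMod 4)), 1) := by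
    rw [hΦinl, hF1s 3]
  have hΦ13 : Φ (inl (cs.simple 1) * inl (cs.simple 3))
      = ((Equiv.swap (1 : ZMod 4) (1 + 1) * Equiv.swap (3 : ZMod 4) (3 + 1) :
          Equiv.Perm (ZMod 4)), 1) := by
    rw [map_mul, hΦ1, hΦ3, Prod.mk_mul_mk, one_mul]
  -- goal 3
  have g3 : W₂' ⊓ W₁ = ⊥ := by
    rw [eq_bot_iff]
    intro x hx
    rw [Subgroup.mem_inf] at hx
    obtain ⟨hx2, hx1⟩ := hx
    rcases hW1mem x hx1 with rfl | rfl | rfl | rfl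
    · exact Subgroup.mem_bot.2 rfl
    · have h := hW2H _ hx2
      rw [hΦ1] at h
      exact absurd (Hsub_spec h 1) (by decide)
    · have h := hW2H _ hx2
      rw [hΦ3] at h
      exact absurd (Hsub_spec h 3) (by decide)
    · have h := hW2H _ hx2
      rw [hΦ13] at h
      exact absurd (Hsub_spec h 0) (by decide)
  -- goal 4
  have hωW2 : (inr ω : W ⋊[φ] Ω) ∈ W₂' := by
    rw [hW₂']
    exact Subgroup.subset_closure (by simp)
  have g4 : (inl (cs.simple 3) : W ⋊[φ] Ω) ∈
      (W₂' : Set (W ⋊[φ] Ω)) * ({inl (cs.simple 1)} : Set (W ⋊[φ] Ω)) * (W₂' : Set (W ⋊[φ] Ω)) := by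
    rw [g1]
    exact Set.mul_mem_mul (Set.mul_mem_mul hωW2 rfl) hωW2
  exact ⟨g1, g2, g3, g4⟩
end

section
/- Let G be a group, K₁ and K₂ subgroups such that K₁ ∩ K₂ has finite index in both, with coset decompositions K₁ = ⊔_{j∈J} l_j(K₁∩K₂) and K₂ = ⊔_{i∈I} m_i(K₁∩K₂). Then the function ν_{1,2} := Σ_{i∈I, j∈J} 1_{l_j m_i K₁} : G → ℤ (sum of indicator functions of left cosets) is K₁-bi-invariant, i.e. ν_{1,2}(κ x κ') = ν_{1,2}(x) for all κ, κ' ∈ K₁ and x ∈ G. -/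
open scoped Classical

/-- For commensurable subgroups `K₁, K₂` of a group `G` with coset
decompositions `K₁ = ⊔_j l_j(K₁∩K₂)` and `K₂ = ⊔_i m_i(K₁∩K₂)`, the function
`ν_{1,2} = Σ_{i,j} 1_{l_j m_i K₁}` is `K₁`-bi-invariant. -/
theorem stmt11 {G : Type*} [Group G] (K₁ K₂ : Subgroup G)
    {I J : Type*} [Fintype I] [Fintype J]
    (l : J → G) (m : I → G)
    (hl : ∀ j, l j ∈ K₁) (hm : ∀ i, m i ∈ K₂)
    (hldec : ∀ x ∈ K₁, ∃! j, (l j)⁻¹ * x ∈ K₁ ⊓ K₂)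
    (hmdec : ∀ x ∈ K₂, ∃! i, (m i)⁻¹ * x ∈ K₁ ⊓ K₂)
    (ν : G → ℤ)
    (hν : ∀ x, ν x = ∑ i : I, ∑ j : J,
      (if (l j * m i)⁻¹ * x ∈ K₁ then 1 else 0)) :
    ∀ κ ∈ K₁, ∀ κ' ∈ K₁, ∀ x : G, ν (κ * x * κ') = ν x := by
  intro κ hκ κ' hκ' x
  -- Step 1: collapse the inner sum over i into an indicator of membership in K₂K₁.
  have key : ∀ y : G, ν y = ∑ j : J,
      (if ∃ a ∈ K₂, a⁻¹ * ((l j)⁻¹ * y) ∈ K₁ then (1 : ℤ) else 0) := by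
    intro y
    rw [hν, Finset.sum_comm]
    refine Finset.sum_congr rfl fun j _ => ?_
    have hrw : ∀ i : I, ((l j * m i)⁻¹ * y ∈ K₁) ↔ ((m i)⁻¹ * ((l j)⁻¹ * y) ∈ K₁) := by
      intro i; rw [mul_inv_rev, mul_assoc]
    by_cases h : ∃ a ∈ K₂, a⁻¹ * ((l j)⁻¹ * y) ∈ K₁
    · obtain ⟨a, ha, hay⟩ := h
      obtain ⟨i₀, hi₀, huniq⟩ := hmdec a ha
      rw [if_pos ⟨a, ha, hay⟩, Finset.sum_eq_single i₀]
      · rw [if_pos]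
        rw [hrw]
        have he : (m i₀)⁻¹ * ((l j)⁻¹ * y)
            = ((m i₀)⁻¹ * a) * (a⁻¹ * ((l j)⁻¹ * y)) := by group
        rw [he]
        exact K₁.mul_mem hi₀.1 hay
      · intro i _ hne
        rw [if_neg]
        rw [hrw]
        intro hmem
        apply hne
        apply huniq
        refine ⟨?_, K₂.mul_mem (K₂.inv_mem (hm i)) ha⟩
        have he : (m i)⁻¹ * a
            = ((m i)⁻¹ * ((l j)⁻¹ * y)) * (a⁻¹ * ((l j)⁻¹ * y))⁻¹ := by group
        rw [he]
        exact K₁.mul_mem hmem (K₁.inv_mem hay)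
      · intro hni; exact absurd (Finset.mem_univ i₀) hni
    · rw [if_neg h]
      refine Finset.sum_eq_zero fun i _ => ?_
      rw [if_neg]
      rw [hrw]
      exact fun hmem => h ⟨m i, hm i, hmem⟩
  rw [key, key]
  -- Step 2: the permutation of J induced by left multiplication by κ⁻¹.
  have hmemj : ∀ j, κ⁻¹ * l j ∈ K₁ := fun j => K₁.mul_mem (K₁.inv_mem hκ) (hl j)
  choose σ hσ hσu using fun j => hldec (κ⁻¹ * l j) (hmemj j)
  have hinj : Function.Injective σ := by
    intro j j' he
    obtain ⟨j₀, hj₀, hu⟩ := hldec (l j) (hl j)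
    have h1 : j = j₀ := hu j (by show (l j)⁻¹ * l j ∈ K₁ ⊓ K₂; rw [inv_mul_cancel]; exact Subgroup.one_mem _)
    have h2 : j' = j₀ := by
      apply hu
      show (l j')⁻¹ * l j ∈ K₁ ⊓ K₂
      have hm1 := hσ j
      have hm2 := hσ j'
      rw [he] at hm1
      have hprod : (l j')⁻¹ * l j
          = ((l (σ j'))⁻¹ * (κ⁻¹ * l j'))⁻¹ * ((l (σ j'))⁻¹ * (κ⁻¹ * l j)) := by group
      rw [hprod]
      exact Subgroup.mul_mem _ (Subgroup.inv_mem _ hm2) hm1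
    rw [h1, h2]
  refine Fintype.sum_bijective σ (Finite.injective_iff_bijective.mp hinj) _ _ fun j => ?_
  congr 1
  apply propext
  constructor
  · rintro ⟨a, ha, hmem⟩
    refine ⟨((l (σ j))⁻¹ * (κ⁻¹ * l j)) * a, K₂.mul_mem (hσ j).2 ha, ?_⟩
    have he : (((l (σ j))⁻¹ * (κ⁻¹ * l j)) * a)⁻¹ * ((l (σ j))⁻¹ * x)
        = (a⁻¹ * ((l j)⁻¹ * (κ * x * κ'))) * κ'⁻¹ := by group
    rw [he]
    exact K₁.mul_mem hmem (K₁.inv_mem hκ')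
  · rintro ⟨a, ha, hmem⟩
    refine ⟨((l (σ j))⁻¹ * (κ⁻¹ * l j))⁻¹ * a, K₂.mul_mem (K₂.inv_mem (hσ j).2) ha, ?_⟩
    have he : (((l (σ j))⁻¹ * (κ⁻¹ * l j))⁻¹ * a)⁻¹ * ((l j)⁻¹ * (κ * x * κ'))
        = (a⁻¹ * ((l (σ j))⁻¹ * x)) * κ' := by group
    rw [he]
    exact K₁.mul_mem hmem hκ'
end

section
/- Let G be a group, K₁, K₂ ≤ G commensurable subgroups (K₁∩K₂ of finite index in each), and define the Eichler element ν_{1,2} = Σ_{i,j} 1_{l_j m_i K₁} as above, with K₁κK₁ decomposing into finitely many left K₁-cosets. Then for every κ ∈ G the value of ν_{1,2} at κ equals [K₁ : K₁∩K₂] · |{ i ∈ I : m_iK₁ ⊆ K₁κK₁ }| / |K₁κK₁/K₁|. In particular, ν_{1,2} is supported exactly on the double cosets K₁κK₁ having a representative in K₂. -/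
open scoped Classical Pointwise

/-- With `ν_{1,2} = Σ_{i,j} 1_{l_j m_i K₁}` the Eichler element of
commensurable subgroups `K₁, K₂ ≤ G`, and `K₁κK₁` a finite union of left
`K₁`-cosets, one has
`ν_{1,2}(κ) · |K₁κK₁/K₁| = [K₁:K₁∩K₂] · |{i : m_iK₁ ⊆ K₁κK₁}|`
(here `[K₁:K₁∩K₂] = |J|`); in particular `ν_{1,2}` is supported exactly on the
double cosets having a representative in `K₂`. -/
theorem stmt12 {G : Type*} [Group G] (K₁ K₂ : Subgroup G)
    {I J : Type*} [Fintype I] [Fintype J]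
    (l : J → G) (m : I → G)
    (hl : ∀ j, l j ∈ K₁) (hm : ∀ i, m i ∈ K₂)
    (hldec : ∀ x ∈ K₁, ∃! j, (l j)⁻¹ * x ∈ K₁ ⊓ K₂)
    (hmdec : ∀ x ∈ K₂, ∃! i, (m i)⁻¹ * x ∈ K₁ ⊓ K₂)
    (ν : G → ℤ)
    (hν : ∀ x, ν x = ∑ i : I, ∑ j : J,
      (if (l j * m i)⁻¹ * x ∈ K₁ then 1 else 0))
    (κ : G) (C : Set G) (hC : C = (K₁ : Set G) * {κ} * (K₁ : Set G))
    (R : Finset G) (hR : ∀ r ∈ R, r ∈ C)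
    (hRdec : ∀ x ∈ C, ∃! r, r ∈ R ∧ r⁻¹ * x ∈ K₁) :
    ν κ * R.card = (Fintype.card J : ℤ) *
        (Finset.univ.filter fun i : I => ∀ y ∈ K₁, m i * y ∈ C).card ∧
      (ν κ ≠ 0 ↔ ∃ x ∈ K₂, x ∈ C) := by
  -- membership characterization of the double coset
  have memC : ∀ x, x ∈ C ↔ ∃ a ∈ K₁, ∃ b ∈ K₁, a * κ * b = x := by
    intro x
    subst hC
    simp only [Set.mem_mul, Set.mem_singleton_iff, SetLike.mem_coe]
    constructor
    · rintro ⟨u, ⟨a, ha, c, rfl, rfl⟩, b, hb, rfl⟩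
      exact ⟨a, ha, b, hb, rfl⟩
    · rintro ⟨a, ha, b, hb, rfl⟩
      exact ⟨a * κ, ⟨a, ha, κ, rfl, rfl⟩, b, hb, rfl⟩
  have Cr : ∀ x ∈ C, ∀ b ∈ K₁, x * b ∈ C := by
    intro x hx b hb
    obtain ⟨a, ha, c, hc, rfl⟩ := (memC x).1 hx
    exact (memC _).2 ⟨a, ha, c * b, mul_mem hc hb, by group⟩
  have Cl : ∀ x ∈ C, ∀ a ∈ K₁, a * x ∈ C := by
    intro x hx a ha
    obtain ⟨a', ha', c, hc, rfl⟩ := (memC x).1 hx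
    exact (memC _).2 ⟨a * a', mul_mem ha ha', c, hc, by group⟩
  -- ν as a cardinality
  have νcard : ∀ x, ν x =
      ((Finset.univ.filter fun p : I × J => (l p.2 * m p.1)⁻¹ * x ∈ K₁).card : ℤ) := by
    intro x
    rw [hν, Finset.card_filter]
    push_cast
    rw [← Finset.univ_product_univ, Finset.sum_product]
  -- right invariance
  have right_inv : ∀ b ∈ K₁, ∀ x, ν (x * b) = ν x := by
    intro b hb x
    rw [hν, hν]
    refine Finset.sum_congr rfl fun i _ => Finset.sum_congr rfl fun j _ => ?_
    have h : ((l j * m i)⁻¹ * (x * b) ∈ K₁) ↔ ((l j * m i)⁻¹ * x ∈ K₁) := by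
      rw [show (l j * m i)⁻¹ * (x * b) = ((l j * m i)⁻¹ * x) * b by group]
      exact mul_mem_cancel_right hb
    simp only [h]
  -- left invariance
  have left_inv : ∀ a ∈ K₁, ∀ x, ν (a * x) = ν x := by
    intro a ha x
    rw [νcard, νcard]
    norm_cast
    have hdl : ∀ j : J, ∃! j', (l j')⁻¹ * (a⁻¹ * l j) ∈ K₁ ⊓ K₂ :=
      fun j => hldec _ (mul_mem (inv_mem ha) (hl j))
    choose σ hσ hσu using hdl
    have hdm : ∀ p : I × J,
        ∃! i', (m i')⁻¹ * ((l (σ p.2))⁻¹ * (a⁻¹ * l p.2) * m p.1) ∈ K₁ ⊓ K₂ :=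
      fun p => hmdec _ (mul_mem (Subgroup.mem_inf.mp (hσ p.2)).2 (hm p.1))
    choose τ hτ hτu using hdm
    refine Finset.card_bij (fun p _ => (τ p, σ p.2)) ?_ ?_ ?_
    · intro p hp
      simp only [Finset.mem_filter, Finset.mem_univ, true_and] at hp ⊢
      have key : (l (σ p.2) * m (τ p))⁻¹ * x =
          ((m (τ p))⁻¹ * ((l (σ p.2))⁻¹ * (a⁻¹ * l p.2) * m p.1)) *
            ((l p.2 * m p.1)⁻¹ * (a * x)) := by group
      rw [key]
      exact mul_mem (Subgroup.mem_inf.mp (hτ p)).1 hp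
    · rintro ⟨i₁, j₁⟩ h₁ ⟨i₂, j₂⟩ h₂ heq
      simp only [Prod.mk.injEq] at heq
      obtain ⟨hτeq, hσeq⟩ := heq
      have hjj : j₁ = j₂ := by
        obtain ⟨j₀, hj₀, hj₀u⟩ := hldec (a * l (σ j₁)) (mul_mem ha (hl (σ j₁)))
        have h1 : (l j₁)⁻¹ * (a * l (σ j₁)) ∈ K₁ ⊓ K₂ := by
          rw [show (l j₁)⁻¹ * (a * l (σ j₁)) =
            ((l (σ j₁))⁻¹ * (a⁻¹ * l j₁))⁻¹ by group]
          exact inv_mem (hσ j₁)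
        have h2 : (l j₂)⁻¹ * (a * l (σ j₁)) ∈ K₁ ⊓ K₂ := by
          rw [hσeq, show (l j₂)⁻¹ * (a * l (σ j₂)) =
            ((l (σ j₂))⁻¹ * (a⁻¹ * l j₂))⁻¹ by group]
          exact inv_mem (hσ j₂)
        rw [hj₀u _ h1, hj₀u _ h2]
      subst hjj
      have hii : i₁ = i₂ := by
        have hD2 : ((l (σ j₁))⁻¹ * (a⁻¹ * l j₁))⁻¹ * m (τ (i₁, j₁)) ∈ K₂ :=
          mul_mem (inv_mem (Subgroup.mem_inf.mp (hσ j₁)).2) (hm _)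
        obtain ⟨i₀, hi₀, hi₀u⟩ := hmdec _ hD2
        have h1 : (m i₁)⁻¹ * (((l (σ j₁))⁻¹ * (a⁻¹ * l j₁))⁻¹ * m (τ (i₁, j₁))) ∈ K₁ ⊓ K₂ := by
          rw [show (m i₁)⁻¹ * (((l (σ j₁))⁻¹ * (a⁻¹ * l j₁))⁻¹ * m (τ (i₁, j₁))) =
            ((m (τ (i₁, j₁)))⁻¹ * ((l (σ j₁))⁻¹ * (a⁻¹ * l j₁) * m i₁))⁻¹ by group]
          exact inv_mem (hτ (i₁, j₁))
        have h2 : (m i₂)⁻¹ * (((l (σ j₁))⁻¹ * (a⁻¹ * l j₁))⁻¹ * m (τ (i₁, j₁))) ∈ K₁ ⊓ K₂ := by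
          rw [hτeq, show (m i₂)⁻¹ * (((l (σ j₁))⁻¹ * (a⁻¹ * l j₁))⁻¹ * m (τ (i₂, j₁))) =
            ((m (τ (i₂, j₁)))⁻¹ * ((l (σ j₁))⁻¹ * (a⁻¹ * l j₁) * m i₂))⁻¹ by group]
          exact inv_mem (hτ (i₂, j₁))
        rw [hi₀u _ h1, hi₀u _ h2]
      simp [hii]
    · intro q hq
      simp only [Finset.mem_filter, Finset.mem_univ, true_and] at hq
      obtain ⟨i', j'⟩ := q
      obtain ⟨j, hj, -⟩ := hldec (a * l j') (mul_mem ha (hl j'))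
      -- hj : (l j)⁻¹ * (a * l j') ∈ K₁ ⊓ K₂
      obtain ⟨i, hi, -⟩ := hmdec ((l j)⁻¹ * (a * l j') * m i')
        (mul_mem (Subgroup.mem_inf.mp hj).2 (hm i'))
      have hsrc : (l j * m i)⁻¹ * (a * x) ∈ K₁ := by
        rw [show (l j * m i)⁻¹ * (a * x) =
          ((m i)⁻¹ * ((l j)⁻¹ * (a * l j') * m i')) * ((l j' * m i')⁻¹ * x) by group]
        exact mul_mem (Subgroup.mem_inf.mp hi).1 hq
      refine ⟨(i, j), Finset.mem_filter.2 ⟨Finset.mem_univ _, hsrc⟩, ?_⟩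
      have hσj : σ j = j' := by
        refine (hσu j j' ?_).symm
        show (l j')⁻¹ * (a⁻¹ * l j) ∈ K₁ ⊓ K₂
        rw [show (l j')⁻¹ * (a⁻¹ * l j) = ((l j)⁻¹ * (a * l j'))⁻¹ by group]
        exact inv_mem hj
      have hτp : τ (i, j) = i' := by
        refine (hτu (i, j) i' ?_).symm
        show (m i')⁻¹ * ((l (σ j))⁻¹ * (a⁻¹ * l j) * m i) ∈ K₁ ⊓ K₂
        rw [hσj, show (m i')⁻¹ * ((l j')⁻¹ * (a⁻¹ * l j) * m i) =
          ((m i)⁻¹ * ((l j)⁻¹ * (a * l j') * m i'))⁻¹ by group]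
        exact inv_mem hi
      show (τ (i, j), σ j) = (i', j')
      rw [hτp, hσj]
  -- ν is constant on C
  have νconst : ∀ r ∈ C, ν r = ν κ := by
    intro r hr
    obtain ⟨a, ha, b, hb, rfl⟩ := (memC r).1 hr
    rw [right_inv b hb, left_inv a ha]
  -- sum over R
  have hsum : ∑ r ∈ R, ν r =
      (Fintype.card J : ℤ) * (Finset.univ.filter fun i : I => m i ∈ C).card := by
    calc ∑ r ∈ R, ν r
        = ∑ r ∈ R, ∑ i : I, ∑ j : J,
            (if (l j * m i)⁻¹ * r ∈ K₁ then (1:ℤ) else 0) :=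
          Finset.sum_congr rfl fun r _ => hν r
      _ = ∑ i : I, ∑ j : J, ∑ r ∈ R,
            (if (l j * m i)⁻¹ * r ∈ K₁ then (1:ℤ) else 0) := by
          rw [Finset.sum_comm]
          exact Finset.sum_congr rfl fun i _ => Finset.sum_comm
      _ = ∑ i : I, ∑ j : J, (if m i ∈ C then (1:ℤ) else 0) := by
          refine Finset.sum_congr rfl fun i _ => Finset.sum_congr rfl fun j _ => ?_
          by_cases h : m i ∈ C
          · obtain ⟨r₀, ⟨hr₀R, hr₀⟩, hru⟩ := hRdec (l j * m i) (Cl _ h _ (hl j))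
            have hfeq : R.filter (fun r => (l j * m i)⁻¹ * r ∈ K₁) = {r₀} := by
              ext r
              simp only [Finset.mem_filter, Finset.mem_singleton]
              constructor
              · rintro ⟨hrR, hr⟩
                exact hru r ⟨hrR, by
                  rw [show r⁻¹ * (l j * m i) = ((l j * m i)⁻¹ * r)⁻¹ by group]
                  exact inv_mem hr⟩
              · rintro rfl
                exact ⟨hr₀R, by
                  rw [show (l j * m i)⁻¹ * r = (r⁻¹ * (l j * m i))⁻¹ by group]
                  exact inv_mem hr₀⟩
            rw [Finset.sum_boole, hfeq, if_pos h]
            simp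
          · rw [if_neg h]
            refine Finset.sum_eq_zero fun r hrR => ?_
            rw [if_neg]
            intro hk
            apply h
            have : (l j)⁻¹ * (r * ((l j * m i)⁻¹ * r)⁻¹) ∈ C :=
              Cl _ (Cr _ (hR r hrR) _ (inv_mem hk)) _ (inv_mem (hl j))
            rwa [show (l j)⁻¹ * (r * ((l j * m i)⁻¹ * r)⁻¹) = m i by group] at this
      _ = (Fintype.card J : ℤ) * (Finset.univ.filter fun i : I => m i ∈ C).card := by
          rw [← Finset.sum_boole]
          rw [Finset.mul_sum]
          exact Finset.sum_congr rfl fun i _ => by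
            rw [Finset.sum_const, Finset.card_univ, nsmul_eq_mul]
  have hfilt : (Finset.univ.filter fun i : I => ∀ y ∈ K₁, m i * y ∈ C) =
      (Finset.univ.filter fun i : I => m i ∈ C) := by
    apply Finset.filter_congr
    intro i _
    constructor
    · intro h
      simpa using h 1 (one_mem _)
    · intro h y hy
      exact Cr _ h y hy
  constructor
  · rw [hfilt]
    calc ν κ * R.card = ∑ r ∈ R, ν r := by
          rw [Finset.sum_congr rfl fun r hr => νconst r (hR r hr),
            Finset.sum_const, nsmul_eq_mul, mul_comm]
      _ = _ := hsum
  · rw [νcard κ]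
    constructor
    · intro h
      have hcard : (Finset.univ.filter fun p : I × J => (l p.2 * m p.1)⁻¹ * κ ∈ K₁).card ≠ 0 := by
        exact_mod_cast h
      obtain ⟨p, hp⟩ := Finset.card_pos.mp (Nat.pos_of_ne_zero hcard)
      simp only [Finset.mem_filter, Finset.mem_univ, true_and] at hp
      refine ⟨m p.1, hm p.1, (memC _).2
        ⟨(l p.2)⁻¹, inv_mem (hl p.2), ((l p.2 * m p.1)⁻¹ * κ)⁻¹, inv_mem hp, by group⟩⟩
    · rintro ⟨x, hx₂, hxC⟩
      obtain ⟨a, ha, b, hb, rfl⟩ := (memC x).1 hxC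
      obtain ⟨i, hi, -⟩ := hmdec (a * κ * b) hx₂
      obtain ⟨j, hj, -⟩ := hldec a⁻¹ (inv_mem ha)
      obtain ⟨i', hi', -⟩ := hmdec ((l j)⁻¹ * a⁻¹ * m i)
        (mul_mem (Subgroup.mem_inf.mp hj).2 (hm i))
      have hkey : (l j * m i')⁻¹ * κ ∈ K₁ := by
        rw [show (l j * m i')⁻¹ * κ =
          ((m i')⁻¹ * ((l j)⁻¹ * a⁻¹ * m i)) * ((m i)⁻¹ * (a * κ * b)) * b⁻¹ by group]
        exact mul_mem (mul_mem (Subgroup.mem_inf.mp hi').1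
          (Subgroup.mem_inf.mp hi).1) (inv_mem hb)
      have hne : (Finset.univ.filter fun p : I × J => (l p.2 * m p.1)⁻¹ * κ ∈ K₁).Nonempty :=
        ⟨(i', j), Finset.mem_filter.2 ⟨Finset.mem_univ _, hkey⟩⟩
      have := Finset.card_pos.2 hne
      exact_mod_cast this.ne'
end

section
/- Let G, K₁, K₂ be as in the setting of intertwining operators, and define T¹₂ : M(V,K₁) → M(V,K₂) by (T¹₂f)(γ) = Σ_{i∈I} f(γm_i), where K₂ = ⊔_{i∈I} m_i(K₁∩K₂). Then T¹₂ is a well-defined linear map (independent of the choice of the m_i), its image lands in M(V,K₂), and T¹₂ and the analogously defined T²₁ : M(V,K₂) → M(V,K₁) are adjoint to each other with respect to the Petersson inner products: ⟨T¹₂f, f'⟩_{M₂} = ⟨f, T²₁f'⟩_{M₁} for all f ∈ M(V,K₁), f' ∈ M(V,K₂). -/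
section Aux
variable {G : Type*} [Group G]

def dcSetoid (P Kc : Subgroup G) : Setoid G where
  r x y := ∃ g ∈ P, ∃ h ∈ Kc, y = g * x * h
  iseqv := by
    refine ⟨fun x => ⟨1, one_mem _, 1, one_mem _, by simp⟩, ?_, ?_⟩
    · rintro x y ⟨g, hg, h, hh, rfl⟩
      exact ⟨g⁻¹, inv_mem hg, h⁻¹, inv_mem hh, by group⟩
    · rintro x y z ⟨g, hg, h, hh, rfl⟩ ⟨g', hg', h', hh', rfl⟩
      exact ⟨g' * g, mul_mem hg' hg, h * h', mul_mem hh hh', by group⟩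

lemma conjCard (P Kc : Subgroup G) {g₀ h₀ : G} (hg : g₀ ∈ P) (hh : h₀ ∈ Kc) (x : G) :
    Nat.card {g : P // (g₀ * x * h₀)⁻¹ * (g : G) * (g₀ * x * h₀) ∈ Kc}
      = Nat.card {g : P // x⁻¹ * (g : G) * x ∈ Kc} := by
  have key : ∀ a : G, (g₀ * x * h₀)⁻¹ * a * (g₀ * x * h₀) ∈ Kc ↔
      x⁻¹ * (g₀⁻¹ * a * g₀) * x ∈ Kc := by
    intro a
    have h1 : (g₀ * x * h₀)⁻¹ * a * (g₀ * x * h₀)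
        = h₀⁻¹ * ((x⁻¹ * (g₀⁻¹ * a * g₀) * x) * h₀) := by group
    rw [h1, Kc.mul_mem_cancel_left (inv_mem hh), Kc.mul_mem_cancel_right hh]
  refine Nat.card_congr ⟨?_, ?_, ?_, ?_⟩
  · exact fun g => ⟨⟨g₀⁻¹ * g * g₀, mul_mem (mul_mem (inv_mem hg) g.1.2) hg⟩, (key g.1).1 g.2⟩
  · refine fun g => ⟨⟨g₀ * g * g₀⁻¹, mul_mem (mul_mem hg g.1.2) (inv_mem hg)⟩, ?_⟩
    have e : g₀⁻¹ * (g₀ * (g.1 : G) * g₀⁻¹) * g₀ = (g.1 : G) := by group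
    rw [key, e]; exact g.2
  · intro g; ext; show g₀ * (g₀⁻¹ * (g.1 : G) * g₀) * g₀⁻¹ = _; group
  · intro g; ext; show g₀⁻¹ * (g₀ * (g.1 : G) * g₀⁻¹) * g₀ = _; group

lemma countLemma (P K Kc : Subgroup G) (hKc : Kc ≤ K) {I : Type*} [Fintype I]
    (m : I → G) (hm : ∀ s, m s ∈ K) (hmdec : ∀ x ∈ K, ∃! s, (m s)⁻¹ * x ∈ Kc)
    (x : G) (s₀ : I) :
    Nat.card {g : P // x⁻¹ * (g : G) * x ∈ K}
      = Nat.card {s : I // (dcSetoid P Kc).r (x * m s) (x * m s₀)}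
        * Nat.card {g : P // (x * m s₀)⁻¹ * (g : G) * (x * m s₀) ∈ Kc} := by
  classical
  rw [← Nat.card_prod]
  -- witnesses for orbit elements
  have hw : ∀ s : {s : I // (dcSetoid P Kc).r (x * m s) (x * m s₀)},
      ∃ g, g ∈ P ∧ ∃ h, h ∈ Kc ∧ x * m s.1 = g * (x * m s₀) * h := by
    rintro ⟨s, g, hg, h, hh, heq⟩
    refine ⟨g⁻¹, inv_mem hg, h⁻¹, inv_mem hh, ?_⟩
    show x * m s = g⁻¹ * (x * m s₀) * h⁻¹
    rw [heq]; group
  choose gs hgsP hs hhs hspec using hw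
  have hgs_eq : ∀ s, gs s = x * m s.1 * (hs s)⁻¹ * (m s₀)⁻¹ * x⁻¹ := by
    intro s; rw [hspec s]; group
  -- the index map
  have hy : ∀ g : {g : P // x⁻¹ * (g : G) * x ∈ K},
      ∃! s, (m s)⁻¹ * (x⁻¹ * (g : G) * x * m s₀) ∈ Kc :=
    fun g => hmdec _ (mul_mem g.2 (hm s₀))
  choose σ hσ hσu using hy
  have orbmem : ∀ g, (dcSetoid P Kc).r (x * m (σ g)) (x * m s₀) := by
    intro g
    refine ⟨(g : G)⁻¹, inv_mem g.1.2, (m (σ g))⁻¹ * (x⁻¹ * (g : G) * x * m s₀), hσ g, ?_⟩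
    group
  have fwd2 : ∀ g : {g : P // x⁻¹ * (g : G) * x ∈ K},
      (x * m s₀)⁻¹ * ((gs ⟨σ g, orbmem g⟩)⁻¹ * (g : G)) * (x * m s₀) ∈ Kc := by
    intro g
    have h1 : (x * m s₀)⁻¹ * ((gs ⟨σ g, orbmem g⟩)⁻¹ * (g : G)) * (x * m s₀)
        = hs ⟨σ g, orbmem g⟩ * ((m (σ g))⁻¹ * (x⁻¹ * (g : G) * x * m s₀)) := by
      rw [hgs_eq]; group
    rw [h1]
    exact mul_mem (hhs _) (hσ g)
  let fwd : {g : P // x⁻¹ * (g : G) * x ∈ K} →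
      {s : I // (dcSetoid P Kc).r (x * m s) (x * m s₀)} ×
        {g : P // (x * m s₀)⁻¹ * (g : G) * (x * m s₀) ∈ Kc} :=
    fun g => (⟨σ g, orbmem g⟩, ⟨⟨(gs ⟨σ g, orbmem g⟩)⁻¹ * g,
      mul_mem (inv_mem (hgsP _)) g.1.2⟩, fwd2 g⟩)
  have bwdK : ∀ p : {s : I // (dcSetoid P Kc).r (x * m s) (x * m s₀)} ×
      {g : P // (x * m s₀)⁻¹ * (g : G) * (x * m s₀) ∈ Kc},
      x⁻¹ * (gs p.1 * (p.2 : G)) * x ∈ K := by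
    intro p
    have h1 : x⁻¹ * (gs p.1 * (p.2 : G)) * x
        = (m p.1.1 * (hs p.1)⁻¹ * (m s₀)⁻¹) *
          (m s₀ * ((x * m s₀)⁻¹ * (p.2 : G) * (x * m s₀)) * (m s₀)⁻¹) := by
      rw [hgs_eq]; group
    rw [h1]
    exact mul_mem (mul_mem (mul_mem (hm _) (inv_mem (hKc (hhs _)))) (inv_mem (hm s₀)))
      (mul_mem (mul_mem (hm s₀) (hKc p.2.2)) (inv_mem (hm s₀)))
  let bwd : {s : I // (dcSetoid P Kc).r (x * m s) (x * m s₀)} ×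
      {g : P // (x * m s₀)⁻¹ * (g : G) * (x * m s₀) ∈ Kc} →
      {g : P // x⁻¹ * (g : G) * x ∈ K} :=
    fun p => ⟨⟨gs p.1 * p.2, mul_mem (hgsP _) p.2.1.2⟩, bwdK p⟩
  have hσbwd : ∀ p, σ (bwd p) = p.1.1 := by
    intro p
    refine (hσu (bwd p) p.1.1 ?_).symm
    show (m p.1.1)⁻¹ * (x⁻¹ * (gs p.1 * (p.2 : G)) * x * m s₀) ∈ Kc
    have h1 : (m p.1.1)⁻¹ * (x⁻¹ * (gs p.1 * (p.2 : G)) * x * m s₀)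
        = (hs p.1)⁻¹ * ((x * m s₀)⁻¹ * (p.2 : G) * (x * m s₀)) := by
      rw [hgs_eq]; group
    rw [h1]
    exact mul_mem (inv_mem (hhs _)) p.2.2
  refine Nat.card_congr ⟨fwd, bwd, ?_, ?_⟩
  · intro g
    apply Subtype.ext; apply Subtype.ext
    show gs ⟨σ g, orbmem g⟩ * ((gs ⟨σ g, orbmem g⟩)⁻¹ * (g : G)) = (g : G)
    group
  · intro p
    refine Prod.ext ?_ ?_
    · exact Subtype.ext (hσbwd p)
    · apply Subtype.ext; apply Subtype.ext
      show (gs ⟨σ (bwd p), orbmem (bwd p)⟩)⁻¹ * (gs p.1 * (p.2 : G)) = (p.2 : G)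
      have h1 : (⟨σ (bwd p), orbmem (bwd p)⟩ :
          {s : I // (dcSetoid P Kc).r (x * m s) (x * m s₀)}) = p.1 :=
        Subtype.ext (hσbwd p)
      rw [h1]; group

set_option maxHeartbeats 1000000 in
lemma sideLemma (P K Kc : Subgroup G) (hKc : Kc ≤ K)
    {h : ℕ} (α : Fin h → G) {I : Type*} [Fintype I] (m : I → G)
    (hm : ∀ s, m s ∈ K) (hmdec : ∀ x ∈ K, ∃! s, (m s)⁻¹ * x ∈ Kc)
    (hcov : ∀ x : G, ∃ i, ∃ g ∈ P, ∃ k ∈ K, x = g * α i * k)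
    (hdisj : ∀ i j, (∃ g ∈ P, ∃ k ∈ K, α j = g * α i * k) → i = j)
    (hΓfin : ∀ x : G, 0 < Nat.card {g : P // x⁻¹ * (g : G) * x ∈ K})
    (Ψ : G → ℝ)
    (hΨ : ∀ (x g h' : G), g ∈ P → h' ∈ Kc → Ψ (g * x * h') = Ψ x) :
    ∑ i, ∑ s, (Nat.card {g : P // (α i)⁻¹ * (g : G) * α i ∈ K} : ℝ)⁻¹ *
        (Nat.card {g : P // (α i * m s)⁻¹ * (g : G) * (α i * m s) ∈ Kc} : ℝ) *
        Ψ (α i * m s)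
      = ∑ᶠ q : Quotient (dcSetoid P Kc), Ψ (Quotient.out q) := by
  classical
  have hsurj : Function.Surjective
      (fun p : Fin h × I => Quotient.mk (dcSetoid P Kc) (α p.1 * m p.2)) := by
    intro q
    obtain ⟨x, rfl⟩ := Quotient.exists_rep q
    obtain ⟨i, g, hg, k, hk, hx⟩ := hcov x
    obtain ⟨s, hs, -⟩ := hmdec k hk
    refine ⟨(i, s), Quotient.sound ⟨g, hg, (m s)⁻¹ * k, hs, by rw [hx]; group⟩⟩
  have hfinQ : Finite (Quotient (dcSetoid P Kc)) := Finite.of_surjective _ hsurj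
  haveI : Fintype (Quotient (dcSetoid P Kc)) := Fintype.ofFinite _
  rw [finsum_eq_sum_of_fintype, ← Fintype.sum_prod_type']
  rw [← Finset.sum_fiberwise Finset.univ
    (fun p : Fin h × I => Quotient.mk (dcSetoid P Kc) (α p.1 * m p.2))
    (fun p => (Nat.card {g : P // (α p.1)⁻¹ * (g : G) * α p.1 ∈ K} : ℝ)⁻¹ *
        (Nat.card {g : P // (α p.1 * m p.2)⁻¹ * (g : G) * (α p.1 * m p.2) ∈ Kc} : ℝ) *
        Ψ (α p.1 * m p.2))]
  refine Finset.sum_congr rfl fun q _ => ?_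
  -- pick a base point in the fiber
  obtain ⟨i₀, g₀, hg₀, k₀, hk₀, hx⟩ := hcov (Quotient.out q)
  obtain ⟨s₀, hs₀, -⟩ := hmdec k₀ hk₀
  have hrel₀ : (dcSetoid P Kc).r (α i₀ * m s₀) (Quotient.out q) :=
    ⟨g₀, hg₀, (m s₀)⁻¹ * k₀, hs₀, by rw [hx]; group⟩
  have hq : Quotient.mk (dcSetoid P Kc) (α i₀ * m s₀) = q := by
    conv_rhs => rw [← Quotient.out_eq q]
    exact Quotient.sound hrel₀
  have hΨ₀ : Ψ (Quotient.out q) = Ψ (α i₀ * m s₀) := by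
    obtain ⟨g, hg, h', hh', heq⟩ := hrel₀
    rw [heq]; exact hΨ _ _ _ hg hh'
  have hterm : ∀ p : Fin h × I,
      Quotient.mk (dcSetoid P Kc) (α p.1 * m p.2) = q →
      p.1 = i₀ ∧ (dcSetoid P Kc).r (α p.1 * m p.2) (α i₀ * m s₀) := by
    intro p hp
    have hrel : (dcSetoid P Kc).r (α p.1 * m p.2) (α i₀ * m s₀) :=
      Quotient.exact (hp.trans hq.symm)
    obtain ⟨g, hg, h', hh', heq⟩ := hrel
    have hii : α i₀ * m s₀ = g * α p.1 * (m p.2 * h' * (m s₀)⁻¹) * m s₀ := by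
      rw [heq]; group
    refine ⟨hdisj p.1 i₀ ⟨g, hg, m p.2 * h' * (m s₀)⁻¹,
      mul_mem (mul_mem (hm _) (hKc hh')) (inv_mem (hm s₀)), mul_right_cancel hii⟩,
      ⟨g, hg, h', hh', heq⟩⟩
  have hconst : ∀ p ∈ Finset.univ.filter
      (fun p : Fin h × I => Quotient.mk (dcSetoid P Kc) (α p.1 * m p.2) = q),
      (Nat.card {g : P // (α p.1)⁻¹ * (g : G) * α p.1 ∈ K} : ℝ)⁻¹ *
        (Nat.card {g : P // (α p.1 * m p.2)⁻¹ * (g : G) * (α p.1 * m p.2) ∈ Kc} : ℝ) *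
        Ψ (α p.1 * m p.2)
      = (Nat.card {g : P // (α i₀)⁻¹ * (g : G) * α i₀ ∈ K} : ℝ)⁻¹ *
        (Nat.card {g : P // (α i₀ * m s₀)⁻¹ * (g : G) * (α i₀ * m s₀) ∈ Kc} : ℝ) *
        Ψ (α i₀ * m s₀) := by
    intro p hp
    obtain ⟨hp1, hrel⟩ := hterm p (Finset.mem_filter.mp hp).2
    obtain ⟨g, hg, h', hh', heq⟩ := hrel
    have hcard : Nat.card {g : P // (α p.1 * m p.2)⁻¹ * (g : G) * (α p.1 * m p.2) ∈ Kc}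
        = Nat.card {g : P // (α i₀ * m s₀)⁻¹ * (g : G) * (α i₀ * m s₀) ∈ Kc} := by
      have := conjCard P Kc hg hh' (α p.1 * m p.2)
      rw [← heq] at this
      exact this.symm
    have hpsi : Ψ (α p.1 * m p.2) = Ψ (α i₀ * m s₀) := by
      rw [heq]; exact (hΨ _ _ _ hg hh').symm
    rw [hcard, hpsi, hp1]
  rw [Finset.sum_congr rfl hconst, Finset.sum_const, nsmul_eq_mul]
  -- cardinality of the fiber
  have hfibcard : (Finset.univ.filter
      (fun p : Fin h × I => Quotient.mk (dcSetoid P Kc) (α p.1 * m p.2) = q)).card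
      = Nat.card {s : I // (dcSetoid P Kc).r (α i₀ * m s) (α i₀ * m s₀)} := by
    rw [Nat.card_eq_fintype_card, Fintype.card_subtype]
    apply Finset.card_bij (fun (p : Fin h × I) _ => p.2)
    · intro p hp
      obtain ⟨hp1, hrel⟩ := hterm p (Finset.mem_filter.mp hp).2
      rw [hp1] at hrel
      exact Finset.mem_filter.mpr ⟨Finset.mem_univ _, hrel⟩
    · intro p₁ h₁ p₂ h₂ e
      have e1 : p₁.1 = p₂.1 :=
        (hterm p₁ (Finset.mem_filter.mp h₁).2).1.trans
          (hterm p₂ (Finset.mem_filter.mp h₂).2).1.symm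
      exact Prod.ext e1 e
    · intro s hs
      refine ⟨(i₀, s), Finset.mem_filter.mpr ⟨Finset.mem_univ _, ?_⟩, rfl⟩
      exact (Quotient.sound (Finset.mem_filter.mp hs).2).trans hq
  rw [hΨ₀, hfibcard, countLemma P K Kc hKc m hm hmdec (α i₀) s₀]
  have hpos := hΓfin (α i₀)
  rw [countLemma P K Kc hKc m hm hmdec (α i₀) s₀] at hpos
  have hboth := mul_ne_zero_iff.mp hpos.ne'
  have hN : (Nat.card {s : I // (dcSetoid P Kc).r (α i₀ * m s) (α i₀ * m s₀)} : ℝ) ≠ 0 :=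
    Nat.cast_ne_zero.mpr hboth.1
  have hc : (Nat.card {g : P // (α i₀ * m s₀)⁻¹ * (g : G) * (α i₀ * m s₀) ∈ Kc} : ℝ) ≠ 0 :=
    Nat.cast_ne_zero.mpr hboth.2
  have key : ∀ (a b ψ : ℝ), a ≠ 0 → b ≠ 0 → a * ((a * b)⁻¹ * b * ψ) = ψ := by
    intro a b ψ ha hb
    field_simp
  rw [Nat.cast_mul]
  exact key _ _ _ hN hc

end Aux

/-- The intertwining operator
`(T¹₂f)(γ) = Σ_i f(γ m_i)` (where `K₂ = ⊔_i m_i(K₁∩K₂)`) is well defined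
(independent of the chosen representatives `m_i`), maps `M(V,K₁)` into
`M(V,K₂)`, and is adjoint to `T²₁` with respect to the Petersson products:
`⟨T¹₂f, f'⟩_{M₂} = ⟨f, T²₁f'⟩_{M₁}`. -/
theorem stmt16 {G : Type*} [Group G] (P K₁ K₂ : Subgroup G)
    {V : Type*} [AddCommGroup V] [Module ℝ V]
    (ρ : Representation ℝ P V)
    (β : V →ₗ[ℝ] V →ₗ[ℝ] ℝ)
    (hβsymm : ∀ v w : V, β v w = β w v)
    (hβpos : ∀ v : V, v ≠ 0 → 0 < β v v)
    (hβinv : ∀ (g : P) (v w : V), β (ρ g v) (ρ g w) = β v w)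
    (IsMF₁ IsMF₂ : (G → V) → Prop)
    (hIsMF₁ : ∀ f : G → V, IsMF₁ f ↔
      ∀ (g : P) (γ : G) (k : K₁), f ((g : G) * γ * (k : G)) = ρ g (f γ))
    (hIsMF₂ : ∀ f : G → V, IsMF₂ f ↔
      ∀ (g : P) (γ : G) (k : K₂), f ((g : G) * γ * (k : G)) = ρ g (f γ))
    {I J : Type*} [Fintype I] [Fintype J]
    (m : I → G) (l : J → G) (hm : ∀ i, m i ∈ K₂) (hl : ∀ j, l j ∈ K₁)
    (hmdec : ∀ x ∈ K₂, ∃! i, (m i)⁻¹ * x ∈ K₁ ⊓ K₂)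
    (hldec : ∀ x ∈ K₁, ∃! j, (l j)⁻¹ * x ∈ K₁ ⊓ K₂)
    (T12 : (G → V) → (G → V)) (hT12 : ∀ f γ, T12 f γ = ∑ i, f (γ * m i))
    (T21 : (G → V) → (G → V)) (hT21 : ∀ f γ, T21 f γ = ∑ j, f (γ * l j))
    (h₁ h₂ : ℕ) (α₁ : Fin h₁ → G) (α₂ : Fin h₂ → G)
    (hcov₁ : ∀ x : G, ∃ i, ∃ g ∈ P, ∃ k ∈ K₁, x = g * α₁ i * k)
    (hdisj₁ : ∀ i j, (∃ g ∈ P, ∃ k ∈ K₁, α₁ j = g * α₁ i * k) → i = j)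
    (hcov₂ : ∀ x : G, ∃ i, ∃ g ∈ P, ∃ k ∈ K₂, x = g * α₂ i * k)
    (hdisj₂ : ∀ i j, (∃ g ∈ P, ∃ k ∈ K₂, α₂ j = g * α₂ i * k) → i = j)
    (hΓfin₁ : ∀ x : G, 0 < Nat.card {g : P // x⁻¹ * (g : G) * x ∈ K₁})
    (hΓfin₂ : ∀ x : G, 0 < Nat.card {g : P // x⁻¹ * (g : G) * x ∈ K₂}) :
    -- T¹₂ maps M(V,K₁) to M(V,K₂)
    (∀ f : G → V, IsMF₁ f → IsMF₂ (T12 f)) ∧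
    -- independence of the choice of the mᵢ
    (∀ {I' : Type} [Fintype I'] (m' : I' → G), (∀ i', m' i' ∈ K₂) →
      (∀ x ∈ K₂, ∃! i', (m' i')⁻¹ * x ∈ K₁ ⊓ K₂) →
      ∀ f : G → V, IsMF₁ f → ∀ γ : G, T12 f γ = ∑ i', f (γ * m' i')) ∧
    -- adjointness with respect to the Petersson inner products
    (∀ f f' : G → V, IsMF₁ f → IsMF₂ f' →
      ∑ i, (Nat.card {g : P // (α₂ i)⁻¹ * (g : G) * α₂ i ∈ K₂} : ℝ)⁻¹ *
          β (T12 f (α₂ i)) (f' (α₂ i)) =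
        ∑ i, (Nat.card {g : P // (α₁ i)⁻¹ * (g : G) * α₁ i ∈ K₁} : ℝ)⁻¹ *
          β (f (α₁ i)) (T21 f' (α₁ i))) := by
  classical
  have hmod₁ : ∀ f : G → V, IsMF₁ f → ∀ γ : G, ∀ h ∈ K₁, f (γ * h) = f γ := by
    intro f hf γ h hh
    have := (hIsMF₁ f).mp hf 1 γ ⟨h, hh⟩
    simpa using this
  have hmod₂ : ∀ f : G → V, IsMF₂ f → ∀ γ : G, ∀ h ∈ K₂, f (γ * h) = f γ := by
    intro f hf γ h hh
    have := (hIsMF₂ f).mp hf 1 γ ⟨h, hh⟩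
    simpa using this
  have part1 : ∀ f : G → V, IsMF₁ f → IsMF₂ (T12 f) := by
    intro f hf
    rw [hIsMF₂]
    intro g γ k
    rw [hT12, hT12, map_sum]
    have hex : ∀ i : I, ∃! i', (m i')⁻¹ * ((k : G) * m i) ∈ K₁ ⊓ K₂ :=
      fun i => hmdec _ (mul_mem k.2 (hm i))
    choose σ hσ hσu using hex
    have hinj : Function.Injective σ := by
      intro i i' he
      have h1 := hσ i
      rw [he] at h1
      have h2 := hσ i'
      have h3 : (m i)⁻¹ * m i' ∈ K₁ ⊓ K₂ := by
        have hmm := mul_mem (inv_mem h1) h2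
        have he2 : ((m (σ i'))⁻¹ * ((k : G) * m i))⁻¹ *
            ((m (σ i'))⁻¹ * ((k : G) * m i')) = (m i)⁻¹ * m i' := by group
        rwa [he2] at hmm
      exact (hmdec (m i') (hm i')).unique h3
        (by rw [inv_mul_cancel]; exact one_mem _)
    have hbij : Function.Bijective σ := Finite.injective_iff_bijective.mp hinj
    refine Fintype.sum_bijective σ hbij _ _ fun i => ?_
    have harg : (g : G) * γ * (k : G) * m i
        = (g : G) * (γ * m (σ i)) * ((m (σ i))⁻¹ * ((k : G) * m i)) := by group
    rw [harg]
    exact (hIsMF₁ f).mp hf g (γ * m (σ i)) ⟨_, (Subgroup.mem_inf.mp (hσ i)).1⟩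
  refine ⟨part1, ?_, ?_⟩
  · -- independence of the choice of representatives
    intro I' _ m' hm' hm'dec f hf γ
    rw [hT12]
    have hex : ∀ i : I, ∃! i', (m' i')⁻¹ * m i ∈ K₁ ⊓ K₂ :=
      fun i => hm'dec (m i) (hm i)
    choose σ hσ hσu using hex
    have hinj : Function.Injective σ := by
      intro i j he
      have h1 := hσ i
      rw [he] at h1
      have h2 := hσ j
      have h3 : (m i)⁻¹ * m j ∈ K₁ ⊓ K₂ := by
        have hmm := mul_mem (inv_mem h1) h2
        have he2 : ((m' (σ j))⁻¹ * m i)⁻¹ * ((m' (σ j))⁻¹ * m j)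
            = (m i)⁻¹ * m j := by group
        rwa [he2] at hmm
      exact (hmdec (m j) (hm j)).unique h3
        (by rw [inv_mul_cancel]; exact one_mem _)
    have hsurj : Function.Surjective σ := by
      intro i'
      obtain ⟨i, hi, -⟩ := hmdec (m' i') (hm' i')
      refine ⟨i, (hσu i i' ?_).symm⟩
      have he2 : ((m i)⁻¹ * m' i')⁻¹ = (m' i')⁻¹ * m i := by group
      have hmm := inv_mem hi
      rwa [he2] at hmm
    refine Fintype.sum_bijective σ ⟨hinj, hsurj⟩ _ _ fun i => ?_
    have harg : γ * m i = γ * m' (σ i) * ((m' (σ i))⁻¹ * m i) := by group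
    rw [harg]
    exact hmod₁ f hf _ _ (Subgroup.mem_inf.mp (hσ i)).1
  · -- adjointness
    intro f f' hf hf'
    have hc12fin : ∀ x : G, 0 < Nat.card {g : P // x⁻¹ * (g : G) * x ∈ K₁ ⊓ K₂} := by
      intro x
      obtain ⟨hne, hfin⟩ := Nat.card_pos_iff.mp (hΓfin₁ x)
      have hfin2 : Finite {g : P // x⁻¹ * (g : G) * x ∈ K₁ ⊓ K₂} := by
        refine Finite.of_injective (fun g : {g : P // x⁻¹ * (g : G) * x ∈ K₁ ⊓ K₂} =>
          (⟨g.1, (Subgroup.mem_inf.mp g.2).1⟩ : {g : P // x⁻¹ * (g : G) * x ∈ K₁})) ?_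
        intro a b hab
        simp only [Subtype.mk.injEq] at hab
        exact Subtype.ext hab
      have hne2 : Nonempty {g : P // x⁻¹ * (g : G) * x ∈ K₁ ⊓ K₂} := by
        refine ⟨⟨1, ?_⟩⟩
        simp only [OneMemClass.coe_one, mul_one, inv_mul_cancel]
        exact one_mem _
      exact Nat.card_pos_iff.mpr ⟨hne2, hfin2⟩
    set Ψ : G → ℝ := fun x =>
      (Nat.card {g : P // x⁻¹ * (g : G) * x ∈ K₁ ⊓ K₂} : ℝ)⁻¹ * β (f x) (f' x)
      with hΨdef
    have hΨinv : ∀ (x g h' : G), g ∈ P → h' ∈ K₁ ⊓ K₂ → Ψ (g * x * h') = Ψ x := by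
      intro x g h' hg hh'
      have hcard := conjCard P (K₁ ⊓ K₂) hg hh' x
      have hf1 : f (g * x * h') = ρ ⟨g, hg⟩ (f x) :=
        (hIsMF₁ f).mp hf ⟨g, hg⟩ x ⟨h', (Subgroup.mem_inf.mp hh').1⟩
      have hf2 : f' (g * x * h') = ρ ⟨g, hg⟩ (f' x) :=
        (hIsMF₂ f').mp hf' ⟨g, hg⟩ x ⟨h', (Subgroup.mem_inf.mp hh').2⟩
      simp only [hΨdef]
      rw [hcard, hf1, hf2, hβinv]
    have hβc : ∀ x : G, β (f x) (f' x)
        = (Nat.card {g : P // x⁻¹ * (g : G) * x ∈ K₁ ⊓ K₂} : ℝ) * Ψ x := by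
      intro x
      simp only [hΨdef]
      rw [← mul_assoc, mul_inv_cancel₀ (Nat.cast_ne_zero.mpr (hc12fin x).ne'), one_mul]
    have hL : ∑ i, (Nat.card {g : P // (α₂ i)⁻¹ * (g : G) * α₂ i ∈ K₂} : ℝ)⁻¹ *
        β (T12 f (α₂ i)) (f' (α₂ i))
        = ∑ i, ∑ s, (Nat.card {g : P // (α₂ i)⁻¹ * (g : G) * α₂ i ∈ K₂} : ℝ)⁻¹ *
          (Nat.card {g : P // (α₂ i * m s)⁻¹ * (g : G) * (α₂ i * m s) ∈ K₁ ⊓ K₂} : ℝ) *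
          Ψ (α₂ i * m s) := by
      refine Finset.sum_congr rfl fun i _ => ?_
      rw [hT12]
      have hsum : β (∑ s, f (α₂ i * m s)) (f' (α₂ i))
          = ∑ s, β (f (α₂ i * m s)) (f' (α₂ i)) := by
        rw [map_sum, LinearMap.sum_apply]
      rw [hsum, Finset.mul_sum]
      refine Finset.sum_congr rfl fun s _ => ?_
      have hfp : f' (α₂ i) = f' (α₂ i * m s) := (hmod₂ f' hf' _ _ (hm s)).symm
      rw [hfp, hβc (α₂ i * m s), ← mul_assoc]
    have hR : ∑ i, (Nat.card {g : P // (α₁ i)⁻¹ * (g : G) * α₁ i ∈ K₁} : ℝ)⁻¹ *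
        β (f (α₁ i)) (T21 f' (α₁ i))
        = ∑ i, ∑ t, (Nat.card {g : P // (α₁ i)⁻¹ * (g : G) * α₁ i ∈ K₁} : ℝ)⁻¹ *
          (Nat.card {g : P // (α₁ i * l t)⁻¹ * (g : G) * (α₁ i * l t) ∈ K₁ ⊓ K₂} : ℝ) *
          Ψ (α₁ i * l t) := by
      refine Finset.sum_congr rfl fun i _ => ?_
      rw [hT21]
      have hsum : β (f (α₁ i)) (∑ t, f' (α₁ i * l t))
          = ∑ t, β (f (α₁ i)) (f' (α₁ i * l t)) := by
        rw [map_sum]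
      rw [hsum, Finset.mul_sum]
      refine Finset.sum_congr rfl fun t _ => ?_
      have hfp : f (α₁ i) = f (α₁ i * l t) := (hmod₁ f hf _ _ (hl t)).symm
      rw [hfp, hβc (α₁ i * l t), ← mul_assoc]
    rw [hL, hR,
      sideLemma P K₂ (K₁ ⊓ K₂) inf_le_right α₂ m hm hmdec hcov₂ hdisj₂ hΓfin₂ Ψ hΨinv,
      sideLemma P K₁ (K₁ ⊓ K₂) inf_le_left α₁ l hl hldec hcov₁ hdisj₁ hΓfin₁ Ψ hΨinv]
end
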